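/- arXiv:2008.10403 — 6 statements merged into one kernel-verified Lean document; each statement's English description precedes it below -/
import Mathlib

section
/- Let I be a nonempty finite set, let a be a real-valued function on the nonempty subsets of I, and let b be its cumulant family. Then for every nonempty subset S ⊆ I the inversion formula a(S) = ∑_π ∏_{B ∈ π} b(B) holds, where the sum ranges over all set partitions π of S into nonempty blocks. -/
/-!
Statement 0: cumulant inversion formula.
Given a real-valued function `a` on the (nonempty) subsets of a nonempty finite set `I`,
its cumulant family `b` is defined by
`b(S) = ∑_π (−1)^{|π|−1} (|π|−1)! ∏_{B∈π} a(B)`, the sum being over set partitions of `S`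
into nonempty blocks.  Then for every nonempty `S ⊆ I`,
`a(S) = ∑_π ∏_{B ∈ π} b(B)`.
-/

open Finset

variable {α : Type*} [DecidableEq α]

open scoped Classical in
/-- The set partitions of a finite set `S` into nonempty blocks, encoded as finsets of blocks. -/
noncomputable def setPartitions (S : Finset α) : Finset (Finset (Finset α)) :=
  S.powerset.powerset.filter fun P =>
    (∀ B ∈ P, B.Nonempty) ∧ (∀ B ∈ P, ∀ B' ∈ P, B ≠ B' → Disjoint B B') ∧ P.sup id = S

/-- The cumulant family associated to a function on subsets. -/
noncomputable def cumulantFamily (a : Finset α → ℝ) (S : Finset α) : ℝ :=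
  ∑ P ∈ setPartitions S,
    (-1 : ℝ) ^ (P.card - 1) * (Nat.factorial (P.card - 1)) * ∏ B ∈ P, a B

lemma mem_setPartitions {S : Finset α} {P : Finset (Finset α)} :
    P ∈ setPartitions S ↔ (∀ B ∈ P, B.Nonempty) ∧
      (∀ B ∈ P, ∀ B' ∈ P, B ≠ B' → Disjoint B B') ∧ P.sup id = S := by
  classical
  unfold setPartitions
  simp only [mem_filter, mem_powerset, and_iff_right_iff_imp]
  rintro ⟨h1, h2, h3⟩ B hB
  simp only [mem_powerset]
  calc B = id B := rfl
    _ ≤ P.sup id := le_sup hB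
    _ = S := h3

lemma setPartitions_empty : setPartitions (∅ : Finset α) = {∅} := by
  ext P
  simp only [mem_setPartitions, mem_singleton]
  constructor
  · rintro ⟨h1, h2, h3⟩
    by_contra hP
    obtain ⟨B, hB⟩ := Finset.nonempty_iff_ne_empty.2 hP
    obtain ⟨x, hx⟩ := h1 B hB
    have : x ∈ P.sup id := mem_sup.2 ⟨B, hB, hx⟩
    simp [h3] at this
  · rintro rfl; simp

lemma block_subset {S : Finset α} {P : Finset (Finset α)} (hP : P ∈ setPartitions S)
    {B : Finset α} (hB : B ∈ P) : B ⊆ S := by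
  rw [mem_setPartitions] at hP
  calc B = id B := rfl
    _ ≤ P.sup id := le_sup hB
    _ = S := hP.2.2

lemma block_nonempty {S : Finset α} {P : Finset (Finset α)} (hP : P ∈ setPartitions S)
    {B : Finset α} (hB : B ∈ P) : B.Nonempty :=
  (mem_setPartitions.1 hP).1 B hB

lemma eq_of_mem_blocks {S : Finset α} {P : Finset (Finset α)} (hP : P ∈ setPartitions S)
    {B B' : Finset α} (hB : B ∈ P) (hB' : B' ∈ P) {x : α} (hx : x ∈ B) (hx' : x ∈ B') :
    B = B' := by
  by_contra hne
  exact absurd ((mem_setPartitions.1 hP).2.1 B hB B' hB' hne |>.forall_ne_finset hx hx') (by simp [hx'])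

/-- The block of a partition containing `x`. -/
noncomputable def blockOf (σ : Finset (Finset α)) (x : α) : Finset α :=
  (σ.filter fun B => x ∈ B).sup id

lemma blockOf_spec {S : Finset α} {σ : Finset (Finset α)} (hσ : σ ∈ setPartitions S)
    {x : α} (hx : x ∈ S) : blockOf σ x ∈ σ ∧ x ∈ blockOf σ x := by
  have hxS : x ∈ σ.sup id := by rw [(mem_setPartitions.1 hσ).2.2]; exact hx
  obtain ⟨B, hB, hxB⟩ := mem_sup.1 hxS
  have hfilter : σ.filter (fun B => x ∈ B) = {B} := by
    ext C
    simp only [mem_filter, mem_singleton]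
    constructor
    · rintro ⟨hC, hxC⟩; exact eq_of_mem_blocks hσ hC hB hxC hxB
    · rintro rfl; exact ⟨hB, hxB⟩
  have : blockOf σ x = B := by rw [blockOf, hfilter, sup_singleton]; rfl
  rw [this]; exact ⟨hB, hxB⟩

lemma blockOf_insert {S B : Finset α} {x : α} (hxB : x ∈ B) (hBS : B ⊆ S)
    {τ : Finset (Finset α)} (hτ : τ ∈ setPartitions (S \ B)) :
    blockOf (insert B τ) x = B := by
  have hfilter : (insert B τ).filter (fun C => x ∈ C) = {B} := by
    ext C
    simp only [mem_filter, mem_insert, mem_singleton]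
    constructor
    · rintro ⟨hC | hC, hxC⟩
      · exact hC
      · exact absurd (block_subset hτ hC hxC) (by simp [hxB])
    · rintro rfl; exact ⟨Or.inl rfl, hxB⟩
  rw [blockOf, hfilter, sup_singleton]; rfl

lemma not_mem_of_partition_sdiff {S B : Finset α} {x : α} (hxB : x ∈ B)
    {τ : Finset (Finset α)} (hτ : τ ∈ setPartitions (S \ B)) : B ∉ τ := by
  intro hB
  exact absurd (block_subset hτ hB hxB) (by simp [hxB])

lemma insert_mem_setPartitions {S B : Finset α} (hB : B.Nonempty) (hBS : B ⊆ S)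
    {τ : Finset (Finset α)} (hτ : τ ∈ setPartitions (S \ B)) :
    insert B τ ∈ setPartitions S := by
  have h1 := (mem_setPartitions.1 hτ).1
  have h2 := (mem_setPartitions.1 hτ).2.1
  have h3 := (mem_setPartitions.1 hτ).2.2
  rw [mem_setPartitions]
  refine ⟨?_, ?_, ?_⟩
  · intro C hC
    rcases mem_insert.1 hC with rfl | hC
    · exact hB
    · exact h1 C hC
  · intro C hC C' hC' hne
    rcases mem_insert.1 hC with hCB | hCt
    · rcases mem_insert.1 hC' with hCB' | hC't
      · exact absurd (hCB.trans hCB'.symm) hne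
      · subst hCB
        exact Finset.disjoint_left.2 fun y hyC hyC' =>
          (mem_sdiff.1 (block_subset hτ hC't hyC')).2 hyC
    · rcases mem_insert.1 hC' with hCB' | hC't
      · subst hCB'
        exact Finset.disjoint_left.2 fun y hyC hyC' =>
          (mem_sdiff.1 (block_subset hτ hCt hyC)).2 hyC'
      · exact h2 C hCt C' hC't hne
  · rw [sup_insert, h3]
    show B ∪ (S \ B) = S
    exact union_sdiff_of_subset hBS

lemma erase_blockOf_mem {S : Finset α} {σ : Finset (Finset α)} (hσ : σ ∈ setPartitions S)
    {x : α} (hx : x ∈ S) :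
    σ.erase (blockOf σ x) ∈ setPartitions (S \ blockOf σ x) := by
  obtain ⟨hBmem, hxB⟩ := blockOf_spec hσ hx
  set B := blockOf σ x with hB
  rw [mem_setPartitions] at hσ ⊢
  obtain ⟨h1, h2, h3⟩ := hσ
  refine ⟨fun C hC => h1 C (mem_of_mem_erase hC),
    fun C hC C' hC' hne => h2 C (mem_of_mem_erase hC) C' (mem_of_mem_erase hC') hne, ?_⟩
  ext y
  rw [mem_sup]
  simp only [mem_sdiff, id]
  constructor
  · rintro ⟨C, hC, hyC⟩
    have hCmem := mem_of_mem_erase hC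
    have hCneB := ne_of_mem_erase hC
    refine ⟨by rw [← h3]; exact mem_sup.2 ⟨C, hCmem, hyC⟩, fun hyB => ?_⟩
    exact hCneB (by
      by_contra hne
      exact absurd ((h2 C hCmem B hBmem hCneB).forall_ne_finset hyC hyB) (by simp))
  · rintro ⟨hyS, hyB⟩
    obtain ⟨C, hC, hyC⟩ := mem_sup.1 (h3 ▸ hyS : y ∈ σ.sup id)
    refine ⟨C, mem_erase.2 ⟨fun h => hyB (h ▸ hyC), hC⟩, hyC⟩

/-- Recursion: summing over partitions of `S` by splitting off the block containing `x`. -/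
lemma sum_setPartitions_split (S : Finset α) {x : α} (hx : x ∈ S)
    (F : Finset (Finset α) → ℝ) :
    ∑ σ ∈ setPartitions S, F σ =
      ∑ B ∈ S.powerset.filter (fun B => x ∈ B),
        ∑ τ ∈ setPartitions (S \ B), F (insert B τ) := by
  classical
  rw [Finset.sum_sigma']
  refine Finset.sum_nbij' (i := fun σ => ⟨blockOf σ x, σ.erase (blockOf σ x)⟩)
    (j := fun p => insert p.1 p.2) ?_ ?_ ?_ ?_ ?_
  · intro σ hσ
    obtain ⟨hBmem, hxB⟩ := blockOf_spec hσ hx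
    refine Finset.mem_sigma.2 ⟨mem_filter.2 ⟨mem_powerset.2 (block_subset hσ hBmem), hxB⟩,
      erase_blockOf_mem hσ hx⟩
  · rintro ⟨B, τ⟩ hp
    obtain ⟨hB, hτ⟩ := Finset.mem_sigma.1 hp
    rw [mem_filter, mem_powerset] at hB
    exact insert_mem_setPartitions ⟨x, hB.2⟩ hB.1 hτ
  · intro σ hσ
    obtain ⟨hBmem, hxB⟩ := blockOf_spec hσ hx
    simp [insert_erase hBmem]
  · rintro ⟨B, τ⟩ hp
    obtain ⟨hB, hτ⟩ := Finset.mem_sigma.1 hp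
    rw [mem_filter, mem_powerset] at hB
    have h1 : blockOf (insert B τ) x = B := blockOf_insert hB.2 hB.1 hτ
    have h2 : (insert B τ).erase B = τ := erase_insert (not_mem_of_partition_sdiff hB.2 hτ)
    show (⟨blockOf (insert B τ) x, (insert B τ).erase (blockOf (insert B τ) x)⟩ :
      (_ : Finset α) × Finset (Finset α)) = ⟨B, τ⟩
    rw [h1, h2]
  · intro σ hσ
    obtain ⟨hBmem, hxB⟩ := blockOf_spec hσ hx
    simp [insert_erase hBmem]

/-- Möbius weight of a partition block count. -/
noncomputable def pw {β : Type*} (T : Finset β) : ℝ :=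
  (-1) ^ (T.card - 1) * (Nat.factorial (T.card - 1))

lemma filter_card_eq {S : Finset α} {x : α} (hx : x ∈ S) :
    (S.powerset.filter (fun B => x ∈ B)).filter (fun B => B.card + 1 = S.card) =
      (S.erase x).image (fun y => S.erase y) := by
  ext B
  simp only [mem_filter, mem_powerset, mem_image, mem_erase]
  constructor
  · rintro ⟨⟨hBS, hxB⟩, hcard⟩
    have hBne : B ≠ S := fun h => by rw [h] at hcard; omega
    have : (S \ B).Nonempty := by
      rw [sdiff_nonempty]; intro h; exact hBne (subset_antisymm hBS h)
    obtain ⟨y, hy⟩ := this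
    rw [mem_sdiff] at hy
    refine ⟨y, ⟨fun h => hy.2 (h ▸ hxB), hy.1⟩, ?_⟩
    have hsub : B ⊆ S.erase y := fun z hz => mem_erase.2 ⟨fun h => hy.2 (h ▸ hz), hBS hz⟩
    refine (Finset.eq_of_subset_of_card_le hsub ?_).symm
    rw [card_erase_of_mem hy.1]
    omega
  · rintro ⟨y, ⟨hyx, hyS⟩, rfl⟩
    refine ⟨⟨erase_subset _ _, mem_erase.2 ⟨fun h => hyx h.symm, hx⟩⟩, ?_⟩
    rw [card_erase_of_mem hyS]
    have : 1 ≤ S.card := card_pos.2 ⟨y, hyS⟩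
    omega

lemma delta_sum : ∀ (S : Finset α), S.Nonempty →
    ∑ σ ∈ setPartitions S, ∏ T ∈ σ, pw T = if S.card = 1 then 1 else 0 := by
  intro S
  induction S using Finset.strongInduction with
  | _ S ih =>
  intro hS
  obtain ⟨x, hx⟩ := hS
  rw [sum_setPartitions_split S hx]
  have key : ∀ B ∈ S.powerset.filter (fun B => x ∈ B),
      ∑ τ ∈ setPartitions (S \ B), ∏ T ∈ insert B τ, pw T
        = pw B * (if B = S then 1 else if B.card + 1 = S.card then 1 else 0) := by
    intro B hBf
    rw [mem_filter, mem_powerset] at hBf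
    obtain ⟨hBS, hxB⟩ := hBf
    have hsum : ∀ τ ∈ setPartitions (S \ B),
        ∏ T ∈ insert B τ, pw T = pw B * ∏ T ∈ τ, pw T :=
      fun τ hτ => prod_insert (not_mem_of_partition_sdiff hxB hτ)
    rw [Finset.sum_congr rfl hsum, ← mul_sum]
    congr 1
    by_cases hBS' : B = S
    · subst hBS'
      simp [Finset.sdiff_self, setPartitions_empty]
    · have hne : (S \ B).Nonempty := by
        rw [sdiff_nonempty]; intro h; exact hBS' (subset_antisymm hBS h)
      have hssub : S \ B ⊂ S := by
        refine Finset.ssubset_iff_of_subset sdiff_subset |>.2 ⟨x, hx, by simp [hxB]⟩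
      rw [ih (S \ B) hssub hne, if_neg hBS', card_sdiff_of_subset hBS]
      have hlt : B.card < S.card := card_lt_card (Finset.ssubset_iff_subset_ne.2 ⟨hBS, hBS'⟩)
      by_cases h1 : B.card + 1 = S.card
      · rw [if_pos (by omega : S.card - B.card = 1), if_pos h1]
      · rw [if_neg (by omega : ¬ S.card - B.card = 1), if_neg h1]
  rw [Finset.sum_congr rfl key]
  have hSmem : S ∈ S.powerset.filter (fun B => x ∈ B) :=
    mem_filter.2 ⟨mem_powerset.2 (Finset.Subset.refl S), hx⟩
  by_cases h1 : S.card = 1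
  · rw [if_pos h1]
    have hSsingle : S = {x} := by
      obtain ⟨y, hy⟩ := Finset.card_eq_one.1 h1
      subst hy
      have : x = y := by simpa using hx
      rw [this]
    subst hSsingle
    rw [Finset.sum_eq_single_of_mem {x} hSmem]
    · simp [pw]
    · intro B hB hBne
      rw [mem_filter, mem_powerset] at hB
      exact absurd (subset_antisymm hB.1 (singleton_subset_iff.2 hB.2)) hBne
  · rw [if_neg h1]
    have h2 : 2 ≤ S.card := by
      have : 1 ≤ S.card := card_pos.2 ⟨x, hx⟩
      omega
    obtain ⟨m, hm⟩ : ∃ m, S.card = m + 2 := ⟨S.card - 2, by omega⟩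
    have split : ∀ B ∈ S.powerset.filter (fun B => x ∈ B),
        pw B * (if B = S then 1 else if B.card + 1 = S.card then 1 else 0)
          = (if B = S then pw S else 0) + (if B.card + 1 = S.card then pw B else 0) := by
      intro B hB
      by_cases hBS' : B = S
      · subst hBS'
        rw [if_pos rfl, if_pos rfl, if_neg (by omega)]
        ring
      · rw [if_neg hBS', if_neg hBS']
        by_cases hc : B.card + 1 = S.card
        · rw [if_pos hc, if_pos hc]; ring
        · rw [if_neg hc, if_neg hc]; ring
    rw [Finset.sum_congr rfl split, Finset.sum_add_distrib]
    have first : ∑ B ∈ S.powerset.filter (fun B => x ∈ B),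
        (if B = S then pw S else 0) = pw S := by
      rw [Finset.sum_ite_eq' (S.powerset.filter (fun B => x ∈ B)) S (fun _ => pw S),
        if_pos hSmem]
    have second : ∑ B ∈ S.powerset.filter (fun B => x ∈ B),
        (if B.card + 1 = S.card then pw B else 0)
          = (S.card - 1 : ℕ) * ((-1) ^ m * (Nat.factorial m)) := by
      rw [← Finset.sum_filter, filter_card_eq hx]
      have hconst : ∀ B ∈ (S.erase x).image (fun y => S.erase y),
          pw B = (-1) ^ m * (Nat.factorial m) := by
        intro B hB
        obtain ⟨y, hy, rfl⟩ := mem_image.1 hB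
        rw [mem_erase] at hy
        have : (S.erase y).card = m + 1 := by
          rw [card_erase_of_mem hy.2]; omega
        rw [pw, this]
        norm_num
      rw [Finset.sum_congr rfl hconst, Finset.sum_const, nsmul_eq_mul]
      congr 1
      rw [Finset.card_image_of_injOn, card_erase_of_mem hx]
      intro y hy z hz hyz
      rw [mem_coe, mem_erase] at hy hz
      by_contra hne
      have hyz' : S.erase y = S.erase z := hyz
      have : y ∈ S.erase y := by rw [hyz']; exact mem_erase.2 ⟨hne, hy.2⟩
      simp at this
    rw [first, second, pw, hm]
    have e1 : m + 2 - 1 = m + 1 := by omega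
    have e2 : m + 2 - 1 = m + 1 := by omega
    rw [e1]
    push_cast [Nat.factorial_succ]
    rw [pow_succ]
    ring

lemma prod_sum_partitions (g : Finset (Finset α) → ℝ) :
    ∀ (P : Finset (Finset α)), (∀ B ∈ P, B.Nonempty) →
      (∀ B ∈ P, ∀ B' ∈ P, B ≠ B' → Disjoint B B') →
      ∏ B ∈ P, (∑ Q ∈ setPartitions B, g Q) =
        ∑ Q ∈ (setPartitions (P.sup id)).filter (fun Q => ∀ C ∈ Q, ∃ B ∈ P, C ⊆ B),
          ∏ B ∈ P, g (Q.filter (· ⊆ B)) := by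
  classical
  intro P
  induction P using Finset.induction_on with
  | empty =>
    intro _ _
    simp only [Finset.prod_empty, Finset.sup_empty]
    have h0 : (⊥ : Finset α) = ∅ := rfl
    rw [h0, setPartitions_empty, filter_singleton]
    simp
  | @insert B₀ P hB₀ ih =>
    intro h1 h2
    have hB₀ne : B₀.Nonempty := h1 B₀ (mem_insert_self _ _)
    have hdisj : Disjoint B₀ (P.sup id) := by
      rw [Finset.disjoint_sup_right]
      intro B hB
      exact h2 B₀ (mem_insert_self _ _) B (mem_insert_of_mem hB)
        (fun h => hB₀ (h ▸ hB))
    have hU : (insert B₀ P).sup id = B₀ ∪ P.sup id := by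
      rw [sup_insert]; rfl
    -- core emptiness fact
    have core : ∀ {C : Finset α}, C.Nonempty → C ⊆ B₀ → C ⊆ P.sup id → False := by
      intro C hCne hC1 hC2
      obtain ⟨y, hy⟩ := hCne
      exact (Finset.disjoint_left.1 hdisj) (hC1 hy) (hC2 hy)
    rw [prod_insert hB₀, ih (fun B hB => h1 B (mem_insert_of_mem hB))
      (fun B hB B' hB' => h2 B (mem_insert_of_mem hB) B' (mem_insert_of_mem hB')),
      Finset.sum_mul_sum, ← Finset.sum_product']
    refine Finset.sum_nbij' (i := fun p => p.1 ∪ p.2)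
      (j := fun Q' => (Q'.filter (· ⊆ B₀), Q'.filter (fun C => ¬ C ⊆ B₀))) ?_ ?_ ?_ ?_ ?_
    · rintro ⟨Q₀, Q⟩ hp
      rw [Finset.mem_product] at hp
      obtain ⟨hQ₀, hQf⟩ := hp
      rw [mem_filter] at hQf
      obtain ⟨hQ, href⟩ := hQf
      rw [mem_filter]
      constructor
      · rw [mem_setPartitions]
        refine ⟨?_, ?_, ?_⟩
        · intro C hC
          rcases mem_union.1 hC with hC | hC
          · exact block_nonempty hQ₀ hC
          · exact block_nonempty hQ hC
        · intro C hC C' hC' hne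
          rcases mem_union.1 hC with hC | hC <;> rcases mem_union.1 hC' with hC' | hC'
          · exact (mem_setPartitions.1 hQ₀).2.1 C hC C' hC' hne
          · exact hdisj.mono (block_subset hQ₀ hC) (block_subset hQ hC')
          · exact (hdisj.mono (block_subset hQ₀ hC') (block_subset hQ hC)).symm
          · exact (mem_setPartitions.1 hQ).2.1 C hC C' hC' hne
        · rw [sup_union, (mem_setPartitions.1 hQ₀).2.2, (mem_setPartitions.1 hQ).2.2, hU]
          rfl
      · intro C hC
        rcases mem_union.1 hC with hC | hC
        · exact ⟨B₀, mem_insert_self _ _, block_subset hQ₀ hC⟩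
        · obtain ⟨B, hB, hCB⟩ := href C hC
          exact ⟨B, mem_insert_of_mem hB, hCB⟩
    · intro Q' hQ'f
      rw [mem_filter] at hQ'f
      obtain ⟨hQ', href⟩ := hQ'f
      have hsupQ' := (mem_setPartitions.1 hQ').2.2
      rw [hU] at hsupQ'
      have hside : ∀ C ∈ Q', ¬ C ⊆ B₀ → C ⊆ P.sup id := by
        intro C hC hnC
        obtain ⟨B, hB, hCB⟩ := href C hC
        rcases mem_insert.1 hB with rfl | hB
        · exact absurd hCB hnC
        · exact hCB.trans (by calc B = id B := rfl
                                  _ ≤ P.sup id := le_sup hB)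
      rw [Finset.mem_product]
      constructor
      · rw [mem_setPartitions]
        refine ⟨fun C hC => block_nonempty hQ' (mem_filter.1 hC).1,
          fun C hC C' hC' hne => (mem_setPartitions.1 hQ').2.1 C (mem_filter.1 hC).1
            C' (mem_filter.1 hC').1 hne, ?_⟩
        ext y
        rw [mem_sup]
        constructor
        · rintro ⟨C, hC, hyC⟩
          exact (mem_filter.1 hC).2 hyC
        · intro hy
          have : y ∈ Q'.sup id := by rw [hsupQ']; exact mem_union_left _ hy
          obtain ⟨C, hC, hyC⟩ := mem_sup.1 this
          by_cases hCB₀ : C ⊆ B₀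
          · exact ⟨C, mem_filter.2 ⟨hC, hCB₀⟩, hyC⟩
          · exact absurd (Finset.disjoint_left.1 hdisj hy (hside C hC hCB₀ hyC)) not_false
      · rw [mem_filter]
        constructor
        · rw [mem_setPartitions]
          refine ⟨fun C hC => block_nonempty hQ' (mem_filter.1 hC).1,
            fun C hC C' hC' hne => (mem_setPartitions.1 hQ').2.1 C (mem_filter.1 hC).1
              C' (mem_filter.1 hC').1 hne, ?_⟩
          ext y
          rw [mem_sup]
          constructor
          · rintro ⟨C, hC, hyC⟩
            exact hside C (mem_filter.1 hC).1 (mem_filter.1 hC).2 hyC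
          · intro hy
            have : y ∈ Q'.sup id := by rw [hsupQ']; exact mem_union_right _ hy
            obtain ⟨C, hC, hyC⟩ := mem_sup.1 this
            by_cases hCB₀ : C ⊆ B₀
            · exact absurd (Finset.disjoint_left.1 hdisj (hCB₀ hyC) hy) not_false
            · exact ⟨C, mem_filter.2 ⟨hC, hCB₀⟩, hyC⟩
        · intro C hC
          rw [mem_filter] at hC
          obtain ⟨B, hB, hCB⟩ := href C hC.1
          rcases mem_insert.1 hB with rfl | hB
          · exact absurd hCB hC.2
          · exact ⟨B, hB, hCB⟩
    · rintro ⟨Q₀, Q⟩ hp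
      rw [Finset.mem_product] at hp
      obtain ⟨hQ₀, hQf⟩ := hp
      rw [mem_filter] at hQf
      obtain ⟨hQ, -⟩ := hQf
      have e1 : (Q₀ ∪ Q).filter (· ⊆ B₀) = Q₀ := by
        ext C
        rw [mem_filter, mem_union]
        constructor
        · rintro ⟨hC | hC, hCB₀⟩
          · exact hC
          · exact absurd (core (block_nonempty hQ hC) hCB₀ (block_subset hQ hC)) not_false
        · intro hC
          exact ⟨Or.inl hC, block_subset hQ₀ hC⟩
      have e2 : (Q₀ ∪ Q).filter (fun C => ¬ C ⊆ B₀) = Q := by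
        ext C
        rw [mem_filter, mem_union]
        constructor
        · rintro ⟨hC | hC, hCB₀⟩
          · exact absurd (block_subset hQ₀ hC) hCB₀
          · exact hC
        · intro hC
          refine ⟨Or.inr hC, fun hCB₀ => core (block_nonempty hQ hC) hCB₀ (block_subset hQ hC)⟩
      simp only [e1, e2]
    · intro Q' hQ'
      exact filter_union_filter_not_eq _ Q'
    · rintro ⟨Q₀, Q⟩ hp
      rw [Finset.mem_product] at hp
      obtain ⟨hQ₀, hQf⟩ := hp
      rw [mem_filter] at hQf
      obtain ⟨hQ, -⟩ := hQf
      have e1 : (Q₀ ∪ Q).filter (· ⊆ B₀) = Q₀ := by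
        ext C
        rw [mem_filter, mem_union]
        constructor
        · rintro ⟨hC | hC, hCB₀⟩
          · exact hC
          · exact absurd (core (block_nonempty hQ hC) hCB₀ (block_subset hQ hC)) not_false
        · intro hC
          exact ⟨Or.inl hC, block_subset hQ₀ hC⟩
      have e3 : ∀ B ∈ P, (Q₀ ∪ Q).filter (· ⊆ B) = Q.filter (· ⊆ B) := by
        intro B hB
        ext C
        rw [mem_filter, mem_filter, mem_union]
        constructor
        · rintro ⟨hC | hC, hCB⟩
          · exact absurd (core (block_nonempty hQ₀ hC) (block_subset hQ₀ hC)
              (hCB.trans (by calc B = id B := rfl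
                               _ ≤ P.sup id := le_sup hB))) not_false
          · exact ⟨hC, hCB⟩
        · rintro ⟨hC, hCB⟩
          exact ⟨Or.inr hC, hCB⟩
      show g Q₀ * ∏ B ∈ P, g (Q.filter (· ⊆ B)) = ∏ B ∈ insert B₀ P, g ((Q₀ ∪ Q).filter (· ⊆ B))
      rw [prod_insert hB₀, e1]
      congr 1
      exact Finset.prod_congr rfl fun B hB => by rw [e3 B hB]

lemma partition_nonempty {S : Finset α} (hS : S.Nonempty) {Q : Finset (Finset α)}
    (hQ : Q ∈ setPartitions S) : Q.Nonempty := by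
  obtain ⟨x, hx⟩ := hS
  have : x ∈ Q.sup id := by rw [(mem_setPartitions.1 hQ).2.2]; exact hx
  obtain ⟨C, hC, -⟩ := mem_sup.1 this
  exact ⟨C, hC⟩

lemma filter_block_mem {S : Finset α} {Q P : Finset (Finset α)} (hQ : Q ∈ setPartitions S)
    (hP : P ∈ setPartitions S) (href : ∀ C ∈ Q, ∃ B ∈ P, C ⊆ B) {B : Finset α} (hB : B ∈ P) :
    Q.filter (· ⊆ B) ∈ setPartitions B := by
  rw [mem_setPartitions]
  refine ⟨fun C hC => block_nonempty hQ (mem_filter.1 hC).1,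
    fun C hC C' hC' hne => (mem_setPartitions.1 hQ).2.1 C (mem_filter.1 hC).1
      C' (mem_filter.1 hC').1 hne, ?_⟩
  ext y
  rw [mem_sup]
  constructor
  · rintro ⟨C, hC, hyC⟩
    exact (mem_filter.1 hC).2 hyC
  · intro hy
    have hyS : y ∈ Q.sup id := by
      rw [(mem_setPartitions.1 hQ).2.2]; exact block_subset hP hB hy
    obtain ⟨C, hC, hyC⟩ := mem_sup.1 hyS
    obtain ⟨B', hB', hCB'⟩ := href C hC
    have : B = B' := eq_of_mem_blocks hP hB hB' hy (hCB' hyC)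
    exact ⟨C, mem_filter.2 ⟨hC, this ▸ hCB'⟩, hyC⟩

lemma block_eq_filter {S : Finset α} {Q : Finset (Finset α)} (hQ : Q ∈ setPartitions S)
    {σ : Finset (Finset (Finset α))} (hσ : σ ∈ setPartitions Q)
    {T : Finset (Finset α)} (hT : T ∈ σ) : Q.filter (· ⊆ T.sup id) = T := by
  ext C
  rw [mem_filter]
  constructor
  · rintro ⟨hCQ, hCsup⟩
    obtain ⟨y, hy⟩ := block_nonempty hQ hCQ
    obtain ⟨C', hC', hyC'⟩ := mem_sup.1 (hCsup hy)
    have hC'Q : C' ∈ Q := block_subset hσ hT hC'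
    have : C = C' := eq_of_mem_blocks hQ hCQ hC'Q hy hyC'
    exact this ▸ hC'
  · intro hC
    exact ⟨block_subset hσ hT hC, by calc C = id C := rfl
                                        _ ≤ T.sup id := le_sup hC⟩

lemma sum_coarsenings {S : Finset α} {Q : Finset (Finset α)} (hQ : Q ∈ setPartitions S)
    (g : Finset (Finset α) → ℝ) :
    ∑ P ∈ (setPartitions S).filter (fun P => ∀ C ∈ Q, ∃ B ∈ P, C ⊆ B),
        ∏ B ∈ P, g (Q.filter (· ⊆ B)) =
      ∑ σ ∈ setPartitions Q, ∏ T ∈ σ, g T := by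
  classical
  refine Finset.sum_nbij' (i := fun P => P.image (fun B => Q.filter (· ⊆ B)))
    (j := fun σ => σ.image (fun T => T.sup id)) ?_ ?_ ?_ ?_ ?_
  · intro P hPf
    simp only [mem_filter] at hPf
    obtain ⟨hP, href⟩ := hPf
    rw [mem_setPartitions]
    refine ⟨?_, ?_, ?_⟩
    · intro T hT
      obtain ⟨B, hB, rfl⟩ := mem_image.1 hT
      exact partition_nonempty (block_nonempty hP hB) (filter_block_mem hQ hP href hB)
    · intro T hT T' hT' hne
      obtain ⟨B, hB, rfl⟩ := mem_image.1 hT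
      obtain ⟨B', hB', rfl⟩ := mem_image.1 hT'
      rw [Finset.disjoint_left]
      intro C hC hC'
      rw [mem_filter] at hC hC'
      obtain ⟨y, hy⟩ := block_nonempty hQ hC.1
      exact hne (by rw [eq_of_mem_blocks hP hB hB' (hC.2 hy) (hC'.2 hy)])
    · rw [Finset.sup_image]
      ext C
      rw [mem_sup]
      constructor
      · rintro ⟨B, hB, hC⟩
        exact (mem_filter.1 hC).1
      · intro hC
        obtain ⟨B, hB, hCB⟩ := href C hC
        exact ⟨B, hB, mem_filter.2 ⟨hC, hCB⟩⟩
  · intro σ hσ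
    simp only [mem_filter]
    constructor
    · rw [mem_setPartitions]
      refine ⟨?_, ?_, ?_⟩
      · intro B hB
        obtain ⟨T, hT, rfl⟩ := mem_image.1 hB
        obtain ⟨C, hC⟩ := block_nonempty hσ hT
        obtain ⟨y, hy⟩ := block_nonempty hQ (block_subset hσ hT hC)
        exact ⟨y, mem_sup.2 ⟨C, hC, hy⟩⟩
      · intro B hB B' hB' hne
        obtain ⟨T, hT, rfl⟩ := mem_image.1 hB
        obtain ⟨T', hT', rfl⟩ := mem_image.1 hB'
        have hTT' : T ≠ T' := fun h => hne (by rw [h])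
        rw [Finset.disjoint_left]
        intro y hy hy'
        obtain ⟨C, hC, hyC⟩ := mem_sup.1 hy
        obtain ⟨C', hC', hyC'⟩ := mem_sup.1 hy'
        have : C = C' := eq_of_mem_blocks hQ (block_subset hσ hT hC)
          (block_subset hσ hT' hC') hyC hyC'
        subst this
        exact Finset.disjoint_left.1 ((mem_setPartitions.1 hσ).2.1 T hT T' hT' hTT') hC hC'
      · rw [Finset.sup_image]
        ext y
        rw [mem_sup]
        constructor
        · rintro ⟨T, hT, hy⟩
          obtain ⟨C, hC, hyC⟩ := mem_sup.1 hy
          exact block_subset hQ (block_subset hσ hT hC) hyC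
        · intro hy
          have : y ∈ Q.sup id := by rw [(mem_setPartitions.1 hQ).2.2]; exact hy
          obtain ⟨C, hC, hyC⟩ := mem_sup.1 this
          have : C ∈ σ.sup id := by rw [(mem_setPartitions.1 hσ).2.2]; exact hC
          obtain ⟨T, hT, hCT⟩ := mem_sup.1 this
          exact ⟨T, hT, mem_sup.2 ⟨C, hCT, hyC⟩⟩
    · intro C hC
      have : C ∈ σ.sup id := by rw [(mem_setPartitions.1 hσ).2.2]; exact hC
      obtain ⟨T, hT, hCT⟩ := mem_sup.1 this
      exact ⟨T.sup id, mem_image.2 ⟨T, hT, rfl⟩, by calc C = id C := rfl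
                                                     _ ≤ T.sup id := le_sup hCT⟩
  · intro P hPf
    simp only [mem_filter] at hPf
    obtain ⟨hP, href⟩ := hPf
    rw [Finset.image_image]
    have : ∀ B ∈ P, ((Q.filter (· ⊆ B)).sup id) = B := fun B hB =>
      (mem_setPartitions.1 (filter_block_mem hQ hP href hB)).2.2
    calc P.image (fun B => (Q.filter (· ⊆ B)).sup id) = P.image id :=
          Finset.image_congr (fun B hB => this B hB)
      _ = P := Finset.image_id
  · intro σ hσ
    rw [Finset.image_image]
    calc σ.image (fun T => Q.filter (· ⊆ T.sup id)) = σ.image id :=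
          Finset.image_congr (fun T hT => block_eq_filter hQ hσ hT)
      _ = σ := Finset.image_id
  · intro P hPf
    simp only [mem_filter] at hPf
    obtain ⟨hP, href⟩ := hPf
    rw [Finset.prod_image]
    intro B hB B' hB' heq
    have h1 : ((Q.filter (· ⊆ B)).sup id) = B :=
      (mem_setPartitions.1 (filter_block_mem hQ hP href hB)).2.2
    have h2 : ((Q.filter (· ⊆ B')).sup id) = B' :=
      (mem_setPartitions.1 (filter_block_mem hQ hP href hB')).2.2
    rw [← h1, ← h2, show Q.filter (· ⊆ B) = Q.filter (· ⊆ B') from heq]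

lemma singleton_mem_setPartitions {S : Finset α} (hS : S.Nonempty) :
    ({S} : Finset (Finset α)) ∈ setPartitions S := by
  rw [mem_setPartitions]
  refine ⟨fun B hB => by rwa [mem_singleton.1 hB], fun B hB B' hB' hne => ?_, ?_⟩
  · exact absurd ((mem_singleton.1 hB).trans (mem_singleton.1 hB').symm) hne
  · rw [sup_singleton]; rfl

set_option maxHeartbeats 1000000 in
/-- **Inversion formula for cumulants.** -/
theorem cumulant_inversion (I : Finset α) (hI : I.Nonempty) (a : Finset α → ℝ)
    (S : Finset α) (hSI : S ⊆ I) (hS : S.Nonempty) :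
    a S = ∑ P ∈ setPartitions S, ∏ B ∈ P, cumulantFamily a B := by
  set g : Finset (Finset α) → ℝ :=
    fun Q => (-1 : ℝ) ^ (Q.card - 1) * (Nat.factorial (Q.card - 1)) * ∏ C ∈ Q, a C with hg
  have hcum : ∀ B : Finset α, cumulantFamily a B = ∑ Q ∈ setPartitions B, g Q := fun B => rfl
  symm
  calc ∑ P ∈ setPartitions S, ∏ B ∈ P, cumulantFamily a B
      = ∑ P ∈ setPartitions S,
          ∑ Q ∈ (setPartitions S).filter (fun Q => ∀ C ∈ Q, ∃ B ∈ P, C ⊆ B),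
            ∏ B ∈ P, g (Q.filter (· ⊆ B)) := by
        refine Finset.sum_congr rfl fun P hP => ?_
        have h := prod_sum_partitions g P (fun B hB => block_nonempty hP hB)
          ((mem_setPartitions.1 hP).2.1)
        rw [(mem_setPartitions.1 hP).2.2] at h
        rw [← h]
        exact Finset.prod_congr rfl fun B _ => hcum B
    _ = ∑ Q ∈ setPartitions S,
          ∑ P ∈ (setPartitions S).filter (fun P => ∀ C ∈ Q, ∃ B ∈ P, C ⊆ B),
            ∏ B ∈ P, g (Q.filter (· ⊆ B)) := by
        simp only [Finset.sum_filter]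
        exact Finset.sum_comm
    _ = ∑ Q ∈ setPartitions S, ∑ σ ∈ setPartitions Q, ∏ T ∈ σ, g T :=
        Finset.sum_congr rfl fun Q hQ => sum_coarsenings hQ g
    _ = ∑ Q ∈ setPartitions S, (if Q.card = 1 then 1 else 0) * ∏ C ∈ Q, a C := by
        refine Finset.sum_congr rfl fun Q hQ => ?_
        have hQne : Q.Nonempty := partition_nonempty hS hQ
        have hsplit : ∀ σ ∈ setPartitions Q,
            ∏ T ∈ σ, g T = (∏ T ∈ σ, pw T) * ∏ C ∈ Q, a C := by
          intro σ hσ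
          have hprod : ∏ T ∈ σ, ∏ C ∈ T, a C = ∏ C ∈ Q, a C := by
            have hQsup : Q = σ.biUnion id := by
              rw [← Finset.sup_eq_biUnion, (mem_setPartitions.1 hσ).2.2]
            have hdisjσ : Set.PairwiseDisjoint (↑σ : Set (Finset (Finset α))) id := by
              intro T hT T' hT' hne
              exact (mem_setPartitions.1 hσ).2.1 T (by simpa using hT) T' (by simpa using hT') hne
            rw [hQsup, Finset.prod_biUnion hdisjσ]
            rfl
          calc ∏ T ∈ σ, g T = ∏ T ∈ σ, (pw T * ∏ C ∈ T, a C) := by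
                refine Finset.prod_congr rfl fun T _ => ?_
                simp only [hg, pw]
              _ = (∏ T ∈ σ, pw T) * ∏ T ∈ σ, ∏ C ∈ T, a C := Finset.prod_mul_distrib
              _ = _ := by rw [hprod]
        rw [Finset.sum_congr rfl hsplit, ← Finset.sum_mul, delta_sum Q hQne]
    _ = a S := by
        rw [Finset.sum_eq_single_of_mem {S} (singleton_mem_setPartitions hS)]
        · simp
        · intro Q hQ hQne
          have hcard : ¬ Q.card = 1 := by
            intro h1
            obtain ⟨C, hC⟩ := Finset.card_eq_one.1 h1
            subst hC
            have hCS : C = S := by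
              have := (mem_setPartitions.1 hQ).2.2
              rwa [sup_singleton] at this
            exact hQne (by rw [hCS])
          rw [if_neg hcard, zero_mul]
end

section
/- For every n ≥ 1 there exist a map π from the set C_n of connected graphs on {1,…,n} to the set T_n of trees on {1,…,n} and a map R : T_n → C_n such that for every tree T ∈ T_n one has E(T) ⊆ E(R(T)) and the fiber of π over T is exactly π⁻¹({T}) = {G ∈ C_n : E(T) ⊆ E(G) ⊆ E(R(T))}; in particular π(T) = T for every tree T (a tree partition scheme in the sense of Penrose). -/
/-!
Statement 3 (Penrose's tree partition scheme): for every `n ≥ 1` there exist a map `π` from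
the set of connected graphs on `{1,…,n}` to the set of trees on `{1,…,n}` and a map `R` from
trees to connected graphs such that `E(T) ⊆ E(R(T))` and
`π⁻¹({T}) = {G connected : E(T) ⊆ E(G) ⊆ E(R(T))}` for every tree `T`;
in particular `π(T) = T` for every tree `T`.
-/

open SimpleGraph

namespace PenroseAux

variable {n : ℕ}

attribute [-instance] Sym2.instPartialOrder

noncomputable instance : LinearOrder (Sym2 (Fin n)) :=
  LinearOrder.lift' (Fintype.equivFin (Sym2 (Fin n))) (Equiv.injective _)

open Classical in
/-- The set of non-bridge edges of `G`. -/
noncomputable def nbSet (G : SimpleGraph (Fin n)) : Finset (Sym2 (Fin n)) :=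
  Finset.univ.filter fun e => e ∈ G.edgeSet ∧ ¬ G.IsBridge e

lemma mem_nbSet {G : SimpleGraph (Fin n)} {e : Sym2 (Fin n)} :
    e ∈ nbSet G ↔ e ∈ G.edgeSet ∧ ¬ G.IsBridge e := by
  simp [nbSet]

/-- Repeatedly delete the largest non-bridge edge. -/
noncomputable def pr (G : SimpleGraph (Fin n)) : SimpleGraph (Fin n) :=
  if h : (nbSet G).Nonempty then
    pr (G.deleteEdges {(nbSet G).max' h})
  else G
termination_by G.edgeSet.ncard
decreasing_by
  have hm : (nbSet G).max' h ∈ nbSet G := (nbSet G).max'_mem h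
  rw [mem_nbSet] at hm
  rw [edgeSet_deleteEdges]
  exact Set.ncard_diff_singleton_lt_of_mem hm.1 (Set.toFinite _)

/-- `e` is externally active w.r.t. `T`. -/
def extCond (T : SimpleGraph (Fin n)) (e : Sym2 (Fin n)) : Prop :=
  e ∉ T.edgeSet ∧ ¬ e.IsDiag ∧
    ∀ (u v : Fin n) (p : T.Walk u v), e = s(u, v) → p.IsPath → ∀ f ∈ p.edges, f < e

/-- `T` together with all externally active edges. -/
def RT (T : SimpleGraph (Fin n)) : SimpleGraph (Fin n) :=
  T ⊔ fromEdgeSet {e | extCond T e}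

lemma le_RT (T : SimpleGraph (Fin n)) : T ≤ RT T := le_sup_left

lemma mem_RT_edgeSet {T : SimpleGraph (Fin n)} {e : Sym2 (Fin n)} :
    e ∈ (RT T).edgeSet ↔ e ∈ T.edgeSet ∨ extCond T e := by
  rw [RT, edgeSet_sup, Set.mem_union, edgeSet_fromEdgeSet]
  constructor
  · rintro (h | ⟨h, -⟩)
    exacts [Or.inl h, Or.inr h]
  · rintro (h | h)
    exacts [Or.inl h, Or.inr ⟨h, h.2.1⟩]

lemma reachable_of_forall_adj {G G' : SimpleGraph (Fin n)}
    (h : ∀ x y : Fin n, G.Adj x y → G'.Reachable x y) {u v : Fin n} (w : G.Walk u v) :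
    G'.Reachable u v := by
  induction w with
  | nil => exact Reachable.refl _
  | cons ha _ ih => exact (h _ _ ha).trans ih

lemma connected_deleteEdges {G : SimpleGraph (Fin n)} (hG : G.Connected)
    {e : Sym2 (Fin n)} (he : e ∈ G.edgeSet) (hb : ¬ G.IsBridge e) :
    (G.deleteEdges {e}).Connected := by
  induction e using Sym2.ind with
  | _ a b =>
  have hadj : G.Adj a b := he
  rw [isBridge_iff] at hb
  push_neg at hb
  have hr : (G.deleteEdges {s(a, b)}).Reachable a b := hb
  rw [connected_iff]
  refine ⟨fun u v => ?_, hG.nonempty⟩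
  refine reachable_of_forall_adj (fun x y hxy => ?_) ((hG.preconnected u v).some)
  by_cases hxe : s(x, y) = s(a, b)
  · rw [Sym2.eq_iff] at hxe
    rcases hxe with ⟨rfl, rfl⟩ | ⟨rfl, rfl⟩
    · exact hr
    · exact hr.symm
  · exact Adj.reachable (by simp only [deleteEdges_adj, Set.mem_singleton_iff]; exact ⟨hxy, hxe⟩)

lemma not_isBridge_helper {G : SimpleGraph (Fin n)} {u v : Fin n}
    (hadj : G.Adj u v) (p : G.Walk u v) (hp : p.IsPath) (hne : s(u, v) ∉ p.edges) :
    ∀ f, (f = s(u, v) ∨ f ∈ p.edges) → ¬ G.IsBridge f := by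
  intro f hf hbridge
  have hc : (Walk.cons hadj.symm p).IsCycle := by
    rw [Walk.cons_isCycle_iff]
    exact ⟨hp, by rwa [Sym2.eq_swap]⟩
  refine hbridge.notMem_edges_of_isCycle hc ?_
  rw [Walk.edges_cons]
  rcases hf with rfl | hf
  · exact List.mem_cons.mpr (Or.inl (Sym2.eq_swap).symm)
  · exact List.mem_cons_of_mem _ hf

lemma exists_crossing {G : SimpleGraph (Fin n)} (P : Fin n → Prop) :
    ∀ {x y : Fin n} (w : G.Walk x y), P x → ¬ P y →
      ∃ a b, G.Adj a b ∧ s(a, b) ∈ w.edges ∧ P a ∧ ¬ P b := by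
  intro x y w
  induction w with
  | nil => intro h h'; exact absurd h h'
  | @cons u v _ ha p ih =>
    intro hu hy
    by_cases hv : P v
    · obtain ⟨a, b, h1, h2, h3, h4⟩ := ih hv hy
      exact ⟨a, b, h1, by simp [h2], h3, h4⟩
    · exact ⟨u, v, ha, by simp, hu, hv⟩

lemma mem_edges_of_not_reachable {T : SimpleGraph (Fin n)} {f : Sym2 (Fin n)}
    {x y : Fin n} (p : T.Walk x y) (h : ¬ (T.deleteEdges {f}).Reachable x y) :
    f ∈ p.edges := by
  by_contra hf
  refine h ⟨p.toDeleteEdges {f} (fun e he hm => ?_)⟩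
  rw [Set.mem_singleton_iff] at hm
  subst hm
  exact hf he

lemma not_isBridge_of_le {T G : SimpleGraph (Fin n)} (hT : T.Connected) (hTG : T ≤ G)
    {e : Sym2 (Fin n)} (he : e ∈ G.edgeSet) (heT : e ∉ T.edgeSet) : ¬ G.IsBridge e := by
  induction e using Sym2.ind with
  | _ u v =>
  have hadj : G.Adj u v := he
  obtain ⟨w⟩ := hT.preconnected u v
  set p : T.Path u v := w.toPath with hpdef
  have hsub : ∀ f ∈ (p : T.Walk u v).edges, f ∈ G.edgeSet :=
    fun f hf => edgeSet_subset_edgeSet.2 hTG ((p : T.Walk u v).edges_subset_edgeSet hf)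
  set p' := (p : T.Walk u v).transfer G hsub with hp'def
  have hp'path : p'.IsPath := Walk.IsPath.transfer hsub p.2
  have hnomem : s(u, v) ∉ p'.edges := by
    rw [hp'def, Walk.edges_transfer]
    intro hmem
    exact heT ((p : T.Walk u v).edges_subset_edgeSet hmem)
  exact not_isBridge_helper hadj p' hp'path hnomem _ (Or.inl rfl)

lemma exists_gt_of_nb_tree_edge {T G : SimpleGraph (Fin n)} (hT : T.IsTree) (hTG : T ≤ G)
    (hGR : G ≤ RT T) {f : Sym2 (Fin n)} (hfG : f ∈ G.edgeSet) (hnb : ¬ G.IsBridge f)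
    (hfT : f ∈ T.edgeSet) : ∃ e' ∈ G.edgeSet \ T.edgeSet, f < e' := by
  induction f using Sym2.ind with
  | _ a b =>
  have hbT : T.IsBridge s(a, b) := isAcyclic_iff_forall_edge_isBridge.1 hT.IsAcyclic hfT
  have hnr : ¬ (T.deleteEdges {s(a, b)}).Reachable a b := isBridge_iff.1 hbT
  have hGadj : G.Adj a b := hfG
  rw [isBridge_iff] at hnb
  push_neg at hnb
  obtain ⟨W⟩ := hnb
  set P : Fin n → Prop := fun x => (T.deleteEdges {s(a, b)}).Reachable a x with hP
  obtain ⟨x, y, hxy, hxyW, hPx, hPy⟩ :=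
    exists_crossing P W (Reachable.refl a) (fun h => hnr h)
  have hxyG : G.Adj x y := hxy.1
  have hxyne : s(x, y) ∉ ({s(a, b)} : Set (Sym2 (Fin n))) := by
    intro hm
    exact hxy.2 ⟨hm, hxyG.ne⟩
  have hxyT : s(x, y) ∉ T.edgeSet := by
    intro hmem
    exact hPy (hPx.trans (Adj.reachable (by
      rw [deleteEdges_adj]
      exact ⟨hmem, hxyne⟩)))
  have hER : s(x, y) ∈ (RT T).edgeSet := edgeSet_subset_edgeSet.2 hGR hxyG
  have hext : extCond T s(x, y) := (mem_RT_edgeSet.1 hER).resolve_left hxyT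
  obtain ⟨w0⟩ := hT.isConnected.preconnected x y
  have hfp : s(a, b) ∈ (w0.toPath : T.Walk x y).edges := by
    apply mem_edges_of_not_reachable
    intro hr
    exact hPy (hPx.trans hr)
  exact ⟨s(x, y), ⟨hxyG, hxyT⟩, hext.2.2 x y w0.toPath rfl w0.toPath.2 _ hfp⟩

lemma pr_forward (G : SimpleGraph (Fin n)) (hG : G.Connected) :
    (pr G).IsTree ∧ pr G ≤ G ∧ G ≤ RT (pr G) := by
  generalize hk : G.edgeSet.ncard = k
  induction k using Nat.strong_induction_on generalizing G with
  | _ k ih =>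
  rw [pr]
  by_cases h : (nbSet G).Nonempty
  · rw [dif_pos h]
    have hmm := (nbSet G).max'_mem h
    rw [mem_nbSet] at hmm
    set m := (nbSet G).max' h with hmdef
    have hG' : (G.deleteEdges {m}).Connected := connected_deleteEdges hG hmm.1 hmm.2
    have hlt : (G.deleteEdges {m}).edgeSet.ncard < k := by
      rw [edgeSet_deleteEdges, ← hk]
      exact Set.ncard_diff_singleton_lt_of_mem hmm.1 (Set.toFinite _)
    obtain ⟨h1, h2, h3⟩ := ih _ hlt _ hG' rfl
    have hTG : pr (G.deleteEdges {m}) ≤ G := h2.trans (deleteEdges_le _)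
    refine ⟨h1, hTG, ?_⟩
    set T := pr (G.deleteEdges {m}) with hTdef
    rw [← edgeSet_subset_edgeSet]
    intro e he
    by_cases hem : e = m
    · subst hem
      rw [mem_RT_edgeSet]
      refine Or.inr ⟨?_, G.not_isDiag_of_mem_edgeSet hmm.1, ?_⟩
      · intro hmem
        have : m ∈ (G.deleteEdges {m}).edgeSet := edgeSet_subset_edgeSet.2 h2 hmem
        rw [edgeSet_deleteEdges] at this
        exact this.2 rfl
      · intro u v p huv hp f hf
        have hfT : f ∈ T.edgeSet := p.edges_subset_edgeSet hf
        have hfm : f ≠ m := by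
          intro hfe
          rw [hfe] at hfT
          have : m ∈ (G.deleteEdges {m}).edgeSet := edgeSet_subset_edgeSet.2 h2 hfT
          rw [edgeSet_deleteEdges] at this
          exact this.2 rfl
        have hfG : f ∈ G.edgeSet := edgeSet_subset_edgeSet.2 hTG hfT
        have hadj : G.Adj u v := by rw [← mem_edgeSet, ← huv]; exact hmm.1
        have hsub : ∀ f' ∈ p.edges, f' ∈ G.edgeSet :=
          fun f' hf' => edgeSet_subset_edgeSet.2 hTG (p.edges_subset_edgeSet hf')
        have hnomem : s(u, v) ∉ (p.transfer G hsub).edges := by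
          rw [Walk.edges_transfer]
          intro hmem
          have hsT : s(u, v) ∈ T.edgeSet := p.edges_subset_edgeSet hmem
          rw [← huv] at hsT
          have : m ∈ (G.deleteEdges {m}).edgeSet := edgeSet_subset_edgeSet.2 h2 hsT
          rw [edgeSet_deleteEdges] at this
          exact this.2 rfl
        have hnb : ¬ G.IsBridge f :=
          not_isBridge_helper hadj (p.transfer G hsub) (Walk.IsPath.transfer hsub hp) hnomem f
            (Or.inr (by rw [Walk.edges_transfer]; exact hf))
        have hfnb : f ∈ nbSet G := mem_nbSet.2 ⟨hfG, hnb⟩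
        exact lt_of_le_of_ne (Finset.le_max' _ _ hfnb) hfm
    · have heG' : e ∈ (G.deleteEdges {m}).edgeSet := by
        rw [edgeSet_deleteEdges]
        exact ⟨he, by simpa using hem⟩
      exact edgeSet_subset_edgeSet.2 h3 heG'
  · rw [dif_neg h]
    refine ⟨⟨hG, ?_⟩, le_refl _, le_RT _⟩
    rw [isAcyclic_iff_forall_edge_isBridge]
    intro e he
    by_contra hb
    exact h ⟨e, mem_nbSet.2 ⟨he, hb⟩⟩

lemma pr_backward (G T : SimpleGraph (Fin n)) (hG : G.Connected) (hT : T.IsTree)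
    (hTG : T ≤ G) (hGR : G ≤ RT T) : pr G = T := by
  generalize hk : G.edgeSet.ncard = k
  induction k using Nat.strong_induction_on generalizing G with
  | _ k ih =>
  by_cases hGT : G = T
  · subst hGT
    have hemp : ¬ (nbSet G).Nonempty := by
      rintro ⟨e, he⟩
      rw [mem_nbSet] at he
      exact he.2 (isAcyclic_iff_forall_edge_isBridge.1 hT.IsAcyclic he.1)
    rw [pr, dif_neg hemp]
  · have hne : (G.edgeSet \ T.edgeSet).Nonempty := by
      rw [Set.diff_nonempty]
      intro hsub
      exact hGT (le_antisymm (edgeSet_subset_edgeSet.1 hsub) hTG)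
    set S := (Set.toFinite (G.edgeSet \ T.edgeSet)).toFinset with hSdef
    have hSne : S.Nonempty := (Set.Finite.toFinset_nonempty _).mpr hne
    set e := S.max' hSne with hedef
    have heS' : e ∈ G.edgeSet \ T.edgeSet :=
      (Set.Finite.mem_toFinset _).mp (S.max'_mem hSne)
    have henb : ¬ G.IsBridge e := not_isBridge_of_le hT.isConnected hTG heS'.1 heS'.2
    have hnbe : e ∈ nbSet G := mem_nbSet.2 ⟨heS'.1, henb⟩
    have hNE : (nbSet G).Nonempty := ⟨e, hnbe⟩
    have hmax : (nbSet G).max' hNE = e := by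
      apply le_antisymm
      · have hm := (nbSet G).max'_mem hNE
        rw [mem_nbSet] at hm
        by_cases hmT : (nbSet G).max' hNE ∈ T.edgeSet
        · obtain ⟨e', he', hlt⟩ := exists_gt_of_nb_tree_edge hT hTG hGR hm.1 hm.2 hmT
          have he'le : e' ≤ e := S.le_max' _ ((Set.Finite.mem_toFinset _).mpr he')
          exact le_of_lt (lt_of_lt_of_le hlt he'le)
        · exact S.le_max' _ ((Set.Finite.mem_toFinset _).mpr ⟨hm.1, hmT⟩)
      · exact Finset.le_max' _ _ hnbe
    rw [pr, dif_pos hNE, hmax]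
    have hG' : (G.deleteEdges {e}).Connected := connected_deleteEdges hG heS'.1 henb
    have hTG' : T ≤ G.deleteEdges {e} := by
      rw [← edgeSet_subset_edgeSet]
      intro f hf
      rw [edgeSet_deleteEdges]
      refine ⟨edgeSet_subset_edgeSet.2 hTG hf, ?_⟩
      intro hm
      rw [Set.mem_singleton_iff] at hm
      exact heS'.2 (hm ▸ hf)
    have hGR' : G.deleteEdges {e} ≤ RT T := (deleteEdges_le _).trans hGR
    have hlt : (G.deleteEdges {e}).edgeSet.ncard < k := by
      rw [edgeSet_deleteEdges, ← hk]
      exact Set.ncard_diff_singleton_lt_of_mem heS'.1 (Set.toFinite _)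
    exact ih _ hlt _ hG' hTG' hGR' rfl

end PenroseAux

theorem penrose_tree_partition_scheme (n : ℕ) (hn : 1 ≤ n) :
    ∃ (π : {G : SimpleGraph (Fin n) // G.Connected} → {T : SimpleGraph (Fin n) // T.IsTree})
      (R : {T : SimpleGraph (Fin n) // T.IsTree} → {G : SimpleGraph (Fin n) // G.Connected}),
      (∀ T : {T : SimpleGraph (Fin n) // T.IsTree},
        (T : SimpleGraph (Fin n)).edgeSet ⊆ (R T : SimpleGraph (Fin n)).edgeSet) ∧
      (∀ (T : {T : SimpleGraph (Fin n) // T.IsTree})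
          (G : {G : SimpleGraph (Fin n) // G.Connected}),
        π G = T ↔
          (T : SimpleGraph (Fin n)).edgeSet ⊆ (G : SimpleGraph (Fin n)).edgeSet ∧
          (G : SimpleGraph (Fin n)).edgeSet ⊆ (R T : SimpleGraph (Fin n)).edgeSet) ∧
      (∀ T : {T : SimpleGraph (Fin n) // T.IsTree}, π ⟨T.1, T.2.isConnected⟩ = T) := by
  refine ⟨fun G => ⟨PenroseAux.pr G.1, (PenroseAux.pr_forward G.1 G.2).1⟩,
    fun T => ⟨PenroseAux.RT T.1, (T.2.isConnected).mono (PenroseAux.le_RT _)⟩, ?_, ?_, ?_⟩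
  · intro T
    exact SimpleGraph.edgeSet_subset_edgeSet.2 (PenroseAux.le_RT _)
  · intro T G
    constructor
    · intro h
      have h' : PenroseAux.pr G.1 = T.1 := congrArg Subtype.val h
      obtain ⟨-, h2, h3⟩ := PenroseAux.pr_forward G.1 G.2
      rw [h'] at h2 h3
      exact ⟨SimpleGraph.edgeSet_subset_edgeSet.2 h2, SimpleGraph.edgeSet_subset_edgeSet.2 h3⟩
    · rintro ⟨h1, h2⟩
      exact Subtype.ext (PenroseAux.pr_backward G.1 T.1 G.2 T.2
        (SimpleGraph.edgeSet_subset_edgeSet.1 h1) (SimpleGraph.edgeSet_subset_edgeSet.1 h2))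
  · intro T
    exact Subtype.ext (PenroseAux.pr_backward T.1 T.1 T.2.isConnected T.2 le_rfl
      (PenroseAux.le_RT _))
end

section
/- For every n ≥ 2, the number of trees on the vertex set {1,…,n} equals n^{n−2} (Cayley's formula). -/
/-!
Statement 5 (Cayley's formula): for every `n ≥ 2`, the number of trees on the vertex set
`{1,…,n}` equals `n^(n−2)`.
-/
set_option linter.unusedSectionVars false
open SimpleGraph Finset List
namespace CayleyAux
variable {n : ℕ}

/-- In a graph where `ℓ`'s only possible neighbor is `a`, a path between vertices
different from `ℓ` avoids `ℓ`. -/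
lemma notMem_support {H : SimpleGraph (Fin n)} {ℓ a : Fin n}
    (huniq : ∀ w, H.Adj ℓ w → w = a) :
    ∀ {u v : Fin n} (p : H.Walk u v), p.IsPath → u ≠ ℓ → v ≠ ℓ → ℓ ∉ p.support := by
  intro u v p
  induction p with
  | nil => intro _ hu _ ; simp [Ne.symm hu]
  | @cons u w v h q ih =>
    intro hp hu hv
    rw [SimpleGraph.Walk.cons_isPath_iff] at hp
    by_cases hw : w = ℓ
    · subst hw
      have hua : u = a := huniq u h.symm
      cases q with
      | nil => exact absurd rfl hv
      | @cons _ x _ h2 q2 =>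
        have hxa : x = a := huniq x h2
        subst hxa; subst hua
        exfalso
        apply hp.2
        rw [SimpleGraph.Walk.support_cons]
        exact List.mem_cons_of_mem _ q2.start_mem_support
    · rw [SimpleGraph.Walk.support_cons]
      intro hmem
      rcases List.mem_cons.mp hmem with h1 | h1
      · exact hu h1.symm
      · exact ih hp.1 hw hv h1

def IsTreeOn (S : Finset (Fin n)) (G : SimpleGraph (Fin n)) : Prop :=
  (∀ ⦃u v : Fin n⦄, G.Adj u v → u ∈ S ∧ v ∈ S) ∧
  ∀ u ∈ S, ∀ v ∈ S, ∃! p : G.Walk u v, p.IsPath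

lemma loop_isPath_eq_nil {G : SimpleGraph (Fin n)} {u : Fin n} (p : G.Walk u u)
    (hp : p.IsPath) : p = SimpleGraph.Walk.nil := by
  cases p with
  | nil => rfl
  | cons h q =>
    rw [SimpleGraph.Walk.cons_isPath_iff] at hp
    exact absurd q.end_mem_support hp.2

lemma existsUnique_reverse {G : SimpleGraph (Fin n)} {u v : Fin n}
    (h : ∃! p : G.Walk u v, p.IsPath) : ∃! p : G.Walk v u, p.IsPath := by
  obtain ⟨p, hp, hu⟩ := h
  refine ⟨p.reverse, hp.reverse, fun q hq => ?_⟩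
  have := hu q.reverse hq.reverse
  rw [← q.reverse_reverse, this]

lemma isTreeOn_sup_edge {S : Finset (Fin n)} {G : SimpleGraph (Fin n)} (hG : IsTreeOn S G)
    {ℓ a : Fin n} (hl : ℓ ∉ S) (ha : a ∈ S) :
    IsTreeOn (insert ℓ S) (G ⊔ SimpleGraph.fromEdgeSet {s(ℓ, a)}) := by
  set H := G ⊔ SimpleGraph.fromEdgeSet {s(ℓ, a)} with hH
  have hla : ℓ ≠ a := fun h => hl (h ▸ ha)
  have hGle : G ≤ H := le_sup_left
  have huniq : ∀ w, H.Adj ℓ w → w = a := by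
    intro w hw
    rw [hH, SimpleGraph.sup_adj] at hw
    rcases hw with hw | hw
    · exact absurd (hG.1 hw).1 hl
    · rw [SimpleGraph.fromEdgeSet_adj, Set.mem_singleton_iff] at hw
      rcases Sym2.eq_iff.mp hw.1 with ⟨-, h⟩ | ⟨h1, -⟩
      · exact h
      · exact absurd h1 hla
  have hedge : ∀ ⦃u v : Fin n⦄, H.Adj u v → u ∈ insert ℓ S ∧ v ∈ insert ℓ S := by
    intro u v huv
    rw [hH, SimpleGraph.sup_adj] at huv
    rcases huv with h | h
    · exact ⟨Finset.mem_insert_of_mem (hG.1 h).1, Finset.mem_insert_of_mem (hG.1 h).2⟩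
    · rw [SimpleGraph.fromEdgeSet_adj, Set.mem_singleton_iff] at h
      rcases Sym2.eq_iff.mp h.1 with ⟨rfl, rfl⟩ | ⟨rfl, rfl⟩
      · exact ⟨Finset.mem_insert_self _ _, Finset.mem_insert_of_mem ha⟩
      · exact ⟨Finset.mem_insert_of_mem ha, Finset.mem_insert_self _ _⟩
  have hedges : ∀ {x y : Fin n} (q : H.Walk x y), q.IsPath → x ≠ ℓ → y ≠ ℓ →
      ∀ e ∈ q.edges, e ∈ G.edgeSet := by
    intro x y q hq hx hy e he
    have hsub := notMem_support huniq q hq hx hy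
    have heH : e ∈ H.edgeSet := q.edges_subset_edgeSet he
    rw [hH, SimpleGraph.edgeSet_sup] at heH
    rcases heH with h | h
    · exact h
    · exfalso
      rw [SimpleGraph.edgeSet_fromEdgeSet] at h
      obtain ⟨h1, -⟩ := h
      rw [Set.mem_singleton_iff] at h1
      subst h1
      exact hsub (q.fst_mem_support_of_mem_edges he)
  have key : ∀ u ∈ S, ∀ v ∈ S, ∃! p : H.Walk u v, p.IsPath := by
    intro u hu v hv
    have hu' : u ≠ ℓ := fun h => hl (h ▸ hu)
    have hv' : v ≠ ℓ := fun h => hl (h ▸ hv)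
    obtain ⟨p0, hp0, hup0⟩ := hG.2 u hu v hv
    refine ⟨p0.transfer H (fun e he => SimpleGraph.edgeSet_subset_edgeSet.mpr hGle
      (p0.edges_subset_edgeSet he)), hp0.transfer _, fun q hq => ?_⟩
    have h1 := hup0 (q.transfer G (hedges q hq hu' hv')) (hq.transfer _)
    rw [← h1, SimpleGraph.Walk.transfer_transfer]
    exact (q.transfer_self).symm
  have hadj : H.Adj ℓ a := by
    rw [hH, SimpleGraph.sup_adj]
    exact Or.inr ((SimpleGraph.fromEdgeSet_adj _).mpr ⟨rfl, hla⟩)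
  have keyℓ : ∀ v ∈ S, ∃! p : H.Walk ℓ v, p.IsPath := by
    intro v hv
    have hv' : v ≠ ℓ := fun h => hl (h ▸ hv)
    obtain ⟨q0, hq0, huq0⟩ := key a ha v hv
    have hℓq0 : ℓ ∉ q0.support := notMem_support huniq q0 hq0 (Ne.symm hla) hv'
    refine ⟨SimpleGraph.Walk.cons hadj q0,
      (SimpleGraph.Walk.cons_isPath_iff _ _).mpr ⟨hq0, hℓq0⟩, fun p hp => ?_⟩
    cases p with
    | nil => exact absurd hv hl
    | cons h2 q2 =>
      obtain rfl := huniq _ h2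
      rw [SimpleGraph.Walk.cons_isPath_iff] at hp
      rw [huq0 q2 hp.1]
  refine ⟨hedge, ?_⟩
  intro u hu v hv
  rcases Finset.mem_insert.mp hu with h1 | hu2
  · rcases Finset.mem_insert.mp hv with h2 | hv2
    · refine h1 ▸ h2 ▸ ⟨SimpleGraph.Walk.nil, SimpleGraph.Walk.IsPath.nil,
        fun q hq => loop_isPath_eq_nil q hq⟩
    · exact h1 ▸ keyℓ v hv2
  · rcases Finset.mem_insert.mp hv with h2 | hv2
    · exact h2 ▸ existsUnique_reverse (keyℓ u hu2)
    · exact key u hu2 v hv2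

lemma isTreeOn_deleteEdges {S : Finset (Fin n)} {G : SimpleGraph (Fin n)} (hG : IsTreeOn S G)
    {ℓ a : Fin n} (hla : G.Adj ℓ a) (hu : ∀ w, G.Adj ℓ w → w = a) :
    IsTreeOn (S.erase ℓ) (G.deleteEdges {s(ℓ, a)}) := by
  set H := G.deleteEdges {s(ℓ, a)} with hH
  have hadjH : ∀ u v : Fin n, H.Adj u v ↔ G.Adj u v ∧ s(u, v) ≠ s(ℓ, a) := by
    intro u v
    rw [hH, SimpleGraph.deleteEdges_adj, Set.mem_singleton_iff]
  have hedge : ∀ ⦃u v : Fin n⦄, H.Adj u v → u ∈ S.erase ℓ ∧ v ∈ S.erase ℓ := by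
    intro u v huv
    rw [hadjH] at huv
    obtain ⟨hGuv, hne⟩ := huv
    have hmem := hG.1 hGuv
    refine ⟨Finset.mem_erase.mpr ⟨?_, hmem.1⟩, Finset.mem_erase.mpr ⟨?_, hmem.2⟩⟩
    · rintro rfl
      exact hne (by rw [hu v hGuv])
    · rintro rfl
      have := hu u hGuv.symm
      subst this
      exact hne (Sym2.eq_swap)
  refine ⟨hedge, ?_⟩
  intro u hu' v hv'
  obtain ⟨huℓ, huS⟩ := Finset.mem_erase.mp hu'
  obtain ⟨hvℓ, hvS⟩ := Finset.mem_erase.mp hv'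
  obtain ⟨p0, hp0, hup0⟩ := hG.2 u huS v hvS
  have hsupp := notMem_support hu p0 hp0 huℓ hvℓ
  have hedges : ∀ e ∈ p0.edges, e ∈ H.edgeSet := by
    intro e he
    rw [hH, SimpleGraph.edgeSet_deleteEdges]
    refine ⟨p0.edges_subset_edgeSet he, ?_⟩
    rw [Set.mem_singleton_iff]
    rintro rfl
    exact hsupp (p0.fst_mem_support_of_mem_edges he)
  refine ⟨p0.transfer H hedges, hp0.transfer _, fun q hq => ?_⟩
  have hqG : ∀ e ∈ q.edges, e ∈ G.edgeSet := fun e he =>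
    SimpleGraph.edgeSet_subset_edgeSet.mpr (G.deleteEdges_le _) (q.edges_subset_edgeSet he)
  have h1 := hup0 (q.transfer G hqG) (hq.transfer _)
  subst h1
  rw [SimpleGraph.Walk.transfer_transfer]
  exact (q.transfer_self).symm

lemma isTreeOn_single_edge {x y : Fin n} (hxy : x ≠ y) :
    IsTreeOn {x, y} (SimpleGraph.fromEdgeSet {s(x, y)}) := by
  set H := SimpleGraph.fromEdgeSet {s(x, y)} with hH
  have hadjH : ∀ u v : Fin n, H.Adj u v ↔ (u = x ∧ v = y ∨ u = y ∧ v = x) ∧ u ≠ v := by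
    intro u v
    rw [hH, SimpleGraph.fromEdgeSet_adj, Set.mem_singleton_iff, Sym2.eq_iff]
  have hedge : ∀ ⦃u v : Fin n⦄, H.Adj u v → u ∈ ({x, y} : Finset (Fin n)) ∧
      v ∈ ({x, y} : Finset (Fin n)) := by
    intro u v huv
    rw [hadjH] at huv
    rcases huv.1 with ⟨rfl, rfl⟩ | ⟨rfl, rfl⟩ <;> simp
  refine ⟨hedge, ?_⟩
  intro u hu v hv
  by_cases huv : u = v
  · subst huv
    exact ⟨SimpleGraph.Walk.nil, SimpleGraph.Walk.IsPath.nil, fun q hq => loop_isPath_eq_nil q hq⟩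
  · have hset : ∀ w : Fin n, w ∈ ({x, y} : Finset (Fin n)) → w ≠ u → w = v := by
      intro w hw hwu
      simp only [Finset.mem_insert, Finset.mem_singleton] at hw hu hv
      rcases hu with rfl | rfl <;> rcases hv with rfl | rfl <;> rcases hw with rfl | rfl <;> tauto
    have hadj : H.Adj u v := by
      rw [hadjH]
      refine ⟨?_, huv⟩
      simp only [Finset.mem_insert, Finset.mem_singleton] at hu hv
      rcases hu with rfl | rfl <;> rcases hv with rfl | rfl <;> tauto
    refine ⟨SimpleGraph.Walk.cons hadj SimpleGraph.Walk.nil, by simp [huv], fun p hp => ?_⟩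
    cases p with
    | nil => exact absurd rfl huv
    | cons h2 q2 =>
      have hw := hedge h2
      have hwv : _ = v := hset _ hw.2 (fun h => h2.ne (h.symm)) 
      subst hwv
      rw [SimpleGraph.Walk.cons_isPath_iff] at hp
      rw [loop_isPath_eq_nil q2 hp.1]

lemma exists_leaf {S : Finset (Fin n)} {G : SimpleGraph (Fin n)} (hG : IsTreeOn S G)
    (h2 : 2 ≤ S.card) :
    ∃ ℓ ∈ S, ∃ a, G.Adj ℓ a ∧ ∀ w, G.Adj ℓ w → w = a := by
  classical
  let f : Fin n × Fin n → ℕ := fun uv =>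
    if h : uv.1 ∈ S ∧ uv.2 ∈ S then (hG.2 uv.1 h.1 uv.2 h.2).exists.choose.length else 0
  obtain ⟨x, y, hx, hy, hxy⟩ := Finset.one_lt_card_iff.mp (by omega : 1 < S.card)
  obtain ⟨uv0, hmem0, hmax⟩ := Finset.exists_max_image (S ×ˢ S) f
    ⟨(x, y), Finset.mem_product.mpr ⟨hx, hy⟩⟩
  obtain ⟨u₀, v₀⟩ := uv0
  rw [Finset.mem_product] at hmem0
  obtain ⟨hu₀, hv₀⟩ := hmem0
  obtain ⟨p, hp⟩ := (hG.2 u₀ hu₀ v₀ hv₀).exists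
  have hfp : f (u₀, v₀) = p.length := by
    have h1 : f (u₀, v₀) = (hG.2 u₀ hu₀ v₀ hv₀).exists.choose.length := dif_pos ⟨hu₀, hv₀⟩
    rw [h1, ExistsUnique.unique (hG.2 u₀ hu₀ v₀ hv₀) (hG.2 u₀ hu₀ v₀ hv₀).exists.choose_spec hp]
  have hmax' : ∀ (u w : Fin n), u ∈ S → w ∈ S → ∀ q : G.Walk u w, q.IsPath →
      q.length ≤ p.length := by
    intro u w hu hw q hq
    have h1 : f (u, w) = (hG.2 u hu w hw).exists.choose.length := dif_pos ⟨hu, hw⟩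
    have h2 := ExistsUnique.unique (hG.2 u hu w hw) hq (hG.2 u hu w hw).exists.choose_spec
    calc q.length = f (u, w) := by rw [h1, h2]
    _ ≤ f (u₀, v₀) := hmax _ (Finset.mem_product.mpr ⟨hu, hw⟩)
    _ = p.length := hfp
  obtain ⟨pxy, hpxy⟩ := (hG.2 x hx y hy).exists
  have hlen1 : 1 ≤ p.length := by
    have h0 := hmax' x y hx hy pxy hpxy
    have : pxy.length ≠ 0 := fun h => hxy (SimpleGraph.Walk.eq_of_length_eq_zero h)
    omega
  cases hq : p with
  | nil =>
    rw [hq] at hlen1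
    simp at hlen1
  | cons hadjw t =>
    obtain ⟨b, q, hb, hcat0⟩ := SimpleGraph.Walk.exists_cons_eq_concat hadjw t
    have hcat : p = q.concat hb := hq.trans hcat0
    have hgv : ∀ (c : Fin n) (t' : G.Walk u₀ c) (hc : G.Adj c v₀), p = t'.concat hc →
        c = p.getVert (p.length - 1) := by
      intro c t' hc hpe
      subst hpe
      rw [SimpleGraph.Walk.length_concat, Nat.add_sub_cancel, SimpleGraph.Walk.concat_eq_append,
        SimpleGraph.Walk.getVert_append]
      simp
    refine ⟨v₀, hv₀, b, hb.symm, ?_⟩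
    intro w hw
    have hwS : w ∈ S := (hG.1 hw).2
    have hwv : w ≠ v₀ := hw.ne'
    by_cases hwsup : w ∈ p.support
    · have hr := hp.dropUntil hwsup
      have hsingle : (SimpleGraph.Walk.cons hw.symm SimpleGraph.Walk.nil : G.Walk w v₀).IsPath :=
        by simp [SimpleGraph.Walk.cons_isPath_iff, hwv]
      have heq := ExistsUnique.unique (hG.2 w hwS v₀ hv₀) hr hsingle
      have hspec := p.take_spec hwsup
      rw [heq] at hspec
      have hwb : w = p.getVert (p.length - 1) :=
        hgv w (p.takeUntil w hwsup) hw.symm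
          (by rw [SimpleGraph.Walk.concat_eq_append]; exact hspec.symm)
      have hbb : b = p.getVert (p.length - 1) := hgv b q hb hcat
      rw [hwb, hbb]
    · exfalso
      have hp' : (p.concat hw).IsPath := by
        rw [← SimpleGraph.Walk.isPath_reverse_iff, SimpleGraph.Walk.reverse_concat,
          SimpleGraph.Walk.cons_isPath_iff]
        exact ⟨hp.reverse, by rwa [SimpleGraph.Walk.support_reverse, List.mem_reverse]⟩
      have := hmax' u₀ w hu₀ hwS (p.concat hw) hp'
      rw [SimpleGraph.Walk.length_concat] at this
      omega

variable [NeZero n]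

def mmin (S : Finset (Fin n)) : Fin n := if h : S.Nonempty then S.min' h else 0

def mmax (S : Finset (Fin n)) : Fin n := if h : S.Nonempty then S.max' h else 0

lemma mmin_mem {S : Finset (Fin n)} (h : S.Nonempty) : mmin S ∈ S := by
  rw [mmin, dif_pos h]; exact S.min'_mem h

lemma mmax_mem {S : Finset (Fin n)} (h : S.Nonempty) : mmax S ∈ S := by
  rw [mmax, dif_pos h]; exact S.max'_mem h

lemma mmin_ne_mmax {S : Finset (Fin n)} (h : 2 ≤ S.card) : mmin S ≠ mmax S := by
  have hne : S.Nonempty := Finset.card_pos.mp (by omega)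
  rw [mmin, mmax, dif_pos hne, dif_pos hne]
  exact ne_of_lt (S.min'_lt_max'_of_card (by omega))

lemma eq_pair_of_card_two {S : Finset (Fin n)} (h : S.card = 2) :
    S = {mmin S, mmax S} := by
  have hne : S.Nonempty := Finset.card_pos.mp (by omega)
  refine (Finset.eq_of_subset_of_card_le ?_ ?_).symm
  · intro z hz
    rcases Finset.mem_insert.mp hz with rfl | hz
    · exact mmin_mem hne
    · rw [Finset.mem_singleton] at hz; subst hz; exact mmax_mem hne
  · rw [h, Finset.card_insert_of_notMem (by simp [mmin_ne_mmax h.ge]), Finset.card_singleton]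

def decode : List (Fin n) → Finset (Fin n) → SimpleGraph (Fin n)
  | [], S => SimpleGraph.fromEdgeSet {s(mmin S, mmax S)}
  | a :: l, S =>
      decode l (S.erase (mmin (S \ (a :: l).toFinset))) ⊔
        SimpleGraph.fromEdgeSet {s(mmin (S \ (a :: l).toFinset), a)}

lemma decode_nil (S : Finset (Fin n)) :
    decode [] S = SimpleGraph.fromEdgeSet {s(mmin S, mmax S)} := rfl

lemma decode_cons (a : Fin n) (l : List (Fin n)) (S : Finset (Fin n)) :
    decode (a :: l) S =
      decode l (S.erase (mmin (S \ (a :: l).toFinset))) ⊔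
        SimpleGraph.fromEdgeSet {s(mmin (S \ (a :: l).toFinset), a)} := rfl

/-- Validity of a Prüfer sequence for vertex set `S`. -/
def Valid (l : List (Fin n)) (S : Finset (Fin n)) : Prop :=
  l.length + 2 = S.card ∧ ∀ x ∈ l, x ∈ S

lemma Valid.sdiff_nonempty {l : List (Fin n)} {S : Finset (Fin n)} (h : Valid l S) :
    (S \ l.toFinset).Nonempty := by
  have h1 : l.toFinset.card ≤ l.length := l.toFinset_card_le
  have h2 := Finset.le_card_sdiff l.toFinset S
  have := h.1
  exact Finset.card_pos.mp (by omega)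

lemma step_mem {a : Fin n} {l : List (Fin n)} {S : Finset (Fin n)} (h : Valid (a :: l) S) :
    mmin (S \ (a :: l).toFinset) ∈ S ∧ mmin (S \ (a :: l).toFinset) ∉ (a :: l) := by
  have hne := h.sdiff_nonempty
  have hm := mmin_mem hne
  rw [Finset.mem_sdiff] at hm
  exact ⟨hm.1, fun hmem => hm.2 (List.mem_toFinset.mpr hmem)⟩

lemma step_valid {a : Fin n} {l : List (Fin n)} {S : Finset (Fin n)} (h : Valid (a :: l) S) :
    Valid l (S.erase (mmin (S \ (a :: l).toFinset))) := by
  obtain ⟨hmemS, hnotmem⟩ := step_mem h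
  constructor
  · rw [Finset.card_erase_of_mem hmemS]
    have := h.1
    simp only [List.length_cons] at this
    omega
  · intro z hz
    refine Finset.mem_erase.mpr ⟨?_, h.2 z (List.mem_cons_of_mem a hz)⟩
    rintro rfl
    exact hnotmem (List.mem_cons_of_mem a hz)

lemma step_a_mem {a : Fin n} {l : List (Fin n)} {S : Finset (Fin n)} (h : Valid (a :: l) S) :
    a ∈ S.erase (mmin (S \ (a :: l).toFinset)) := by
  obtain ⟨hmemS, hnotmem⟩ := step_mem h
  refine Finset.mem_erase.mpr ⟨?_, h.2 a List.mem_cons_self⟩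
  intro heq
  exact hnotmem (by rw [← heq]; exact List.mem_cons_self)

lemma decode_mem {l : List (Fin n)} {S : Finset (Fin n)} (h : Valid l S) :
    ∀ ⦃u v : Fin n⦄, (decode l S).Adj u v → u ∈ S ∧ v ∈ S := by
  induction l generalizing S with
  | nil =>
    intro u v huv
    rw [decode_nil, SimpleGraph.fromEdgeSet_adj, Set.mem_singleton_iff] at huv
    have hne : S.Nonempty := Finset.card_pos.mp (by have := h.1; omega)
    rcases Sym2.eq_iff.mp huv.1 with ⟨rfl, rfl⟩ | ⟨rfl, rfl⟩
    · exact ⟨mmin_mem hne, mmax_mem hne⟩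
    · exact ⟨mmax_mem hne, mmin_mem hne⟩
  | cons a l ih =>
    intro u v huv
    rw [decode_cons, SimpleGraph.sup_adj] at huv
    rcases huv with huv | huv
    · obtain ⟨h1, h2⟩ := ih (step_valid h) huv
      exact ⟨Finset.mem_of_mem_erase h1, Finset.mem_of_mem_erase h2⟩
    · rw [SimpleGraph.fromEdgeSet_adj, Set.mem_singleton_iff] at huv
      have hm := (step_mem h).1
      have ha : a ∈ S := h.2 a List.mem_cons_self
      rcases Sym2.eq_iff.mp huv.1 with ⟨rfl, rfl⟩ | ⟨rfl, rfl⟩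
      · exact ⟨hm, ha⟩
      · exact ⟨ha, hm⟩

lemma decode_isTreeOn {l : List (Fin n)} {S : Finset (Fin n)} (h : Valid l S) :
    IsTreeOn S (decode l S) := by
  induction l generalizing S with
  | nil =>
    rw [decode_nil]
    have h2 : S.card = 2 := by
      have := h.1; simp only [List.length_nil] at this; omega
    have htr := isTreeOn_single_edge (mmin_ne_mmax h2.ge)
    rwa [← eq_pair_of_card_two h2] at htr
  | cons a l ih =>
    rw [decode_cons]
    have hm := (step_mem h).1
    have htree := isTreeOn_sup_edge (ih (step_valid h)) (Finset.notMem_erase _ _) (step_a_mem h)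
    rwa [Finset.insert_erase hm] at htree

noncomputable def deg (G : SimpleGraph (Fin n)) (v : Fin n) : ℕ := (G.neighborSet v).ncard

lemma neighborSet_sup' (G H : SimpleGraph (Fin n)) (v : Fin n) :
    (G ⊔ H).neighborSet v = G.neighborSet v ∪ H.neighborSet v := by
  ext w; simp [SimpleGraph.mem_neighborSet, SimpleGraph.sup_adj]

lemma neighborSet_edge_left {ℓ a : Fin n} (h : ℓ ≠ a) :
    (SimpleGraph.fromEdgeSet {s(ℓ, a)}).neighborSet ℓ = {a} := by
  ext w
  simp only [SimpleGraph.mem_neighborSet, SimpleGraph.fromEdgeSet_adj, Set.mem_singleton_iff]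
  constructor
  · rintro ⟨h1, -⟩
    rcases Sym2.eq_iff.mp h1 with ⟨-, rfl⟩ | ⟨h3, -⟩
    · rfl
    · exact absurd h3 h
  · rintro rfl
    exact ⟨rfl, h⟩

lemma neighborSet_edge_right {ℓ a : Fin n} (h : ℓ ≠ a) :
    (SimpleGraph.fromEdgeSet {s(ℓ, a)}).neighborSet a = {ℓ} := by
  ext w
  simp only [SimpleGraph.mem_neighborSet, SimpleGraph.fromEdgeSet_adj, Set.mem_singleton_iff]
  constructor
  · rintro ⟨h1, -⟩
    rcases Sym2.eq_iff.mp h1 with ⟨h2, -⟩ | ⟨-, rfl⟩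
    · exact absurd h2.symm h
    · rfl
  · rintro rfl
    exact ⟨Sym2.eq_swap, fun hc => h hc.symm⟩

lemma neighborSet_edge_other {ℓ a v : Fin n} (h1 : v ≠ ℓ) (h2 : v ≠ a) :
    (SimpleGraph.fromEdgeSet {s(ℓ, a)}).neighborSet v = ∅ := by
  ext w
  simp only [SimpleGraph.mem_neighborSet, SimpleGraph.fromEdgeSet_adj, Set.mem_singleton_iff,
    Set.mem_empty_iff_false, iff_false]
  rintro ⟨h3, -⟩
  rcases Sym2.eq_iff.mp h3 with ⟨rfl, -⟩ | ⟨rfl, -⟩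
  · exact h1 rfl
  · exact h2 rfl

lemma decode_deg {l : List (Fin n)} {S : Finset (Fin n)} (h : Valid l S) :
    ∀ v ∈ S, deg (decode l S) v = 1 + l.count v := by
  induction l generalizing S with
  | nil =>
    intro v hv
    have h2 : S.card = 2 := by
      have := h.1; simp only [List.length_nil] at this; omega
    have hne := mmin_ne_mmax h2.ge
    rw [eq_pair_of_card_two h2] at hv
    rw [decode_nil]
    simp only [List.count_nil]
    rcases Finset.mem_insert.mp hv with rfl | hv
    · rw [deg, neighborSet_edge_left hne, Set.ncard_singleton]
    · rw [Finset.mem_singleton] at hv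
      subst hv
      rw [deg, neighborSet_edge_right hne, Set.ncard_singleton]
  | cons a l ih =>
    intro v hv
    rw [decode_cons]
    obtain ⟨hmS, hmnot⟩ := step_mem h
    have hma : mmin (S \ (a :: l).toFinset) ≠ a :=
      fun hc => hmnot (by rw [hc]; exact List.mem_cons_self)
    set m := mmin (S \ (a :: l).toFinset) with hm
    set G' := decode l (S.erase m) with hG'
    have hnoadj : ∀ w, ¬ G'.Adj m w := fun w hw =>
      (Finset.mem_erase.mp (decode_mem (step_valid h) hw).1).1 rfl
    rw [deg, neighborSet_sup']
    by_cases hvm : v = m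
    · subst hvm
      have : G'.neighborSet m = ∅ := by
        ext w; simp only [SimpleGraph.mem_neighborSet, Set.mem_empty_iff_false, iff_false]
        exact hnoadj w
      rw [this, Set.empty_union, neighborSet_edge_left hma, Set.ncard_singleton,
        List.count_eq_zero.mpr hmnot]
    · by_cases hva : v = a
      · subst hva
        rw [neighborSet_edge_right hma, Set.union_singleton]
        have hmnotmem : m ∉ G'.neighborSet v := fun hc =>
          (Finset.mem_erase.mp
            (decode_mem (step_valid h) ((G'.mem_neighborSet v m).mp hc)).2).1 rfl
        rw [Set.ncard_insert_of_notMem hmnotmem]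
        have hdd := ih (step_valid h) v (step_a_mem h)
        rw [deg] at hdd
        rw [hdd, List.count_cons_self]
        omega
      · rw [neighborSet_edge_other hvm hva, Set.union_empty]
        have hvS' : v ∈ S.erase m := Finset.mem_erase.mpr ⟨hvm, hv⟩
        have := ih (step_valid h) v hvS'
        rw [deg] at this
        rw [this, List.count_cons_of_ne (Ne.symm hva)]

lemma sup_edge_delete {A : SimpleGraph (Fin n)} {ℓ a : Fin n} (h1 : ¬A.Adj ℓ a) :
    (A ⊔ SimpleGraph.fromEdgeSet {s(ℓ, a)}).deleteEdges {s(ℓ, a)} = A := by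
  ext u v
  simp only [SimpleGraph.deleteEdges_adj, SimpleGraph.sup_adj, SimpleGraph.fromEdgeSet_adj,
    Set.mem_singleton_iff]
  constructor
  · rintro ⟨hA | ⟨he, -⟩, hne2⟩
    · exact hA
    · exact absurd he hne2
  · intro hA
    refine ⟨Or.inl hA, fun he => ?_⟩
    rcases Sym2.eq_iff.mp he with ⟨rfl, rfl⟩ | ⟨rfl, rfl⟩
    · exact h1 hA
    · exact h1 hA.symm

lemma delete_sup_edge {G : SimpleGraph (Fin n)} {ℓ a : Fin n} (hadj : G.Adj ℓ a) :
    (G.deleteEdges {s(ℓ, a)}) ⊔ SimpleGraph.fromEdgeSet {s(ℓ, a)} = G := by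
  ext u v
  simp only [SimpleGraph.sup_adj, SimpleGraph.deleteEdges_adj, SimpleGraph.fromEdgeSet_adj,
    Set.mem_singleton_iff]
  constructor
  · rintro (⟨hG, -⟩ | ⟨he, -⟩)
    · exact hG
    · rcases Sym2.eq_iff.mp he with ⟨rfl, rfl⟩ | ⟨rfl, rfl⟩
      · exact hadj
      · exact hadj.symm
  · intro hG
    by_cases he : s(u, v) = s(ℓ, a)
    · exact Or.inr ⟨he, hG.ne⟩
    · exact Or.inl ⟨hG, he⟩

lemma deg_one {G : SimpleGraph (Fin n)} {v : Fin n} (h : deg G v = 1) :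
    ∃ a, G.Adj v a ∧ ∀ w, G.Adj v w → w = a := by
  rw [deg, Set.ncard_eq_one] at h
  obtain ⟨a, ha⟩ := h
  refine ⟨a, ?_, fun w hw => ?_⟩
  · have : a ∈ G.neighborSet v := by rw [ha]; rfl
    exact this
  · have : w ∈ G.neighborSet v := hw
    rwa [ha, Set.mem_singleton_iff] at this

lemma deg_eq_one {G : SimpleGraph (Fin n)} {v a : Fin n} (hadj : G.Adj v a)
    (huniq : ∀ w, G.Adj v w → w = a) : deg G v = 1 := by
  rw [deg]
  have : G.neighborSet v = {a} := by
    ext w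
    simp only [SimpleGraph.mem_neighborSet, Set.mem_singleton_iff]
    exact ⟨fun hw => huniq w hw, fun hw => hw ▸ hadj⟩
  rw [this, Set.ncard_singleton]

lemma decode_injective {l1 : List (Fin n)} : ∀ {l2 : List (Fin n)} {S : Finset (Fin n)},
    Valid l1 S → Valid l2 S → decode l1 S = decode l2 S → l1 = l2 := by
  induction l1 with
  | nil =>
    intro l2 S h1 h2 _
    have e1 := h1.1
    have e2 := h2.1
    simp only [List.length_nil] at e1
    have : l2.length = 0 := by omega
    exact (List.length_eq_zero_iff.mp this).symm
  | cons a1 r1 ih =>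
    intro l2 S h1 h2 heq
    cases l2 with
    | nil =>
      exfalso
      have e1 := h1.1
      have e2 := h2.1
      simp only [List.length_nil, List.length_cons] at e1 e2
      omega
    | cons a2 r2 =>
      have hcount : ∀ v, (a1 :: r1).count v = (a2 :: r2).count v := by
        intro v
        by_cases hv : v ∈ S
        · have d1 := decode_deg h1 v hv
          have d2 := decode_deg h2 v hv
          rw [heq] at d1
          omega
        · rw [List.count_eq_zero.mpr (fun hm => hv (h1.2 v hm)),
            List.count_eq_zero.mpr (fun hm => hv (h2.2 v hm))]
      have htf : (a1 :: r1).toFinset = (a2 :: r2).toFinset := by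
        ext v
        simp only [List.mem_toFinset]
        rw [← List.count_pos_iff, ← List.count_pos_iff, hcount]
      obtain ⟨hmS, hmnot1⟩ := step_mem h1
      obtain ⟨hmS2, hmnot2⟩ := step_mem h2
      have hv1 := step_valid h1
      have hv2 := step_valid h2
      have hm2 : mmin (S \ (a2 :: r2).toFinset) = mmin (S \ (a1 :: r1).toFinset) := by
        rw [htf]
      set m := mmin (S \ (a1 :: r1).toFinset) with hmdef
      rw [hm2] at hmnot2 hv2
      have hma1 : m ≠ a1 := fun hc => hmnot1 (by rw [hc]; exact List.mem_cons_self)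
      have hma2 : m ≠ a2 := fun hc => hmnot2 (by rw [hc]; exact List.mem_cons_self)
      have hadj1 : (decode (a1 :: r1) S).Adj m a1 := by
        rw [decode_cons]
        exact (SimpleGraph.sup_adj _ _ _ _).mpr
          (Or.inr ((SimpleGraph.fromEdgeSet_adj _).mpr ⟨rfl, hma1⟩))
      have hadj2 : (decode (a1 :: r1) S).Adj m a2 := by
        rw [heq, decode_cons, hm2]
        exact (SimpleGraph.sup_adj _ _ _ _).mpr
          (Or.inr ((SimpleGraph.fromEdgeSet_adj _).mpr ⟨rfl, hma2⟩))
      have hdegm : deg (decode (a1 :: r1) S) m = 1 := by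
        rw [decode_deg h1 m hmS, List.count_eq_zero.mpr hmnot1]
      obtain ⟨b, -, hbu⟩ := deg_one hdegm
      have ha12 : a1 = a2 := by rw [hbu a1 hadj1, hbu a2 hadj2]
      subst ha12
      have hnoadj1 : ¬ (decode r1 (S.erase m)).Adj m a1 := fun hc =>
        (Finset.mem_erase.mp (decode_mem hv1 hc).1).1 rfl
      have hnoadj2 : ¬ (decode r2 (S.erase m)).Adj m a1 := fun hc =>
        (Finset.mem_erase.mp (decode_mem hv2 hc).1).1 rfl
      have d1 : (decode (a1 :: r1) S).deleteEdges {s(m, a1)} = decode r1 (S.erase m) := by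
        rw [decode_cons]
        exact sup_edge_delete hnoadj1
      have d2 : (decode (a1 :: r2) S).deleteEdges {s(m, a1)} = decode r2 (S.erase m) := by
        rw [decode_cons, hm2]
        exact sup_edge_delete hnoadj2
      have hsub : decode r1 (S.erase m) = decode r2 (S.erase m) := by
        rw [← d1, ← d2, heq]
      have := ih hv1 hv2 hsub
      rw [this]

lemma sym2_eq_of_pair {x y u v : Fin n} (hu : u ∈ ({x, y} : Finset (Fin n)))
    (hv : v ∈ ({x, y} : Finset (Fin n))) (huv : u ≠ v) : s(u, v) = s(x, y) := by
  simp only [Finset.mem_insert, Finset.mem_singleton] at hu hv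
  rcases hu with rfl | rfl <;> rcases hv with rfl | rfl
  · exact absurd rfl huv
  · rfl
  · exact Sym2.eq_swap
  · exact absurd rfl huv

lemma decode_surjective : ∀ (N : ℕ) (S : Finset (Fin n)) (G : SimpleGraph (Fin n)),
    S.card = N → IsTreeOn S G → 2 ≤ S.card → ∃ l, Valid l S ∧ decode l S = G := by
  intro N
  induction N using Nat.strong_induction_on with
  | _ N ihN =>
  intro S G hN hG h2
  by_cases hc2 : S.card = 2
  · -- base case
    obtain ⟨x, y, hxy, hS⟩ := Finset.card_eq_two.mp hc2
    have hxS : x ∈ S := by rw [hS]; exact Finset.mem_insert_self _ _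
    have hyS : y ∈ S := by rw [hS]; simp
    obtain ⟨p, hp, -⟩ := hG.2 x hxS y hyS
    have hadjxy : G.Adj x y := by
      clear hN hc2
      subst hS
      cases p with
      | nil => exact absurd rfl hxy
      | cons h q =>
        have hw := (hG.1 h).2
        simp only [Finset.mem_insert, Finset.mem_singleton] at hw
        rcases hw with rfl | rfl
        · exact absurd rfl h.ne
        · exact h
    refine ⟨[], ⟨by simpa using hc2.symm, by simp⟩, ?_⟩
    have hpair : S = {mmin S, mmax S} := eq_pair_of_card_two hc2
    have hsym : s(mmin S, mmax S) = s(x, y) := by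
      apply sym2_eq_of_pair (hS ▸ mmin_mem ⟨x, hxS⟩) (hS ▸ mmax_mem ⟨x, hxS⟩)
      exact mmin_ne_mmax hc2.ge
    rw [decode_nil, hsym]
    ext u v
    simp only [SimpleGraph.fromEdgeSet_adj, Set.mem_singleton_iff]
    constructor
    · rintro ⟨he, -⟩
      rcases Sym2.eq_iff.mp he with ⟨rfl, rfl⟩ | ⟨rfl, rfl⟩
      · exact hadjxy
      · exact hadjxy.symm
    · intro hG'
      have hu := hG.1 hG'
      rw [hS] at hu
      exact ⟨sym2_eq_of_pair hu.1 hu.2 hG'.ne, hG'.ne⟩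
  · -- inductive step
    have h3 : 3 ≤ S.card := by omega
    classical
    set leaves := S.filter (fun v => deg G v = 1) with hleaves
    have hlne : leaves.Nonempty := by
      obtain ⟨ℓ', hℓ'S, a', hadj', huniq'⟩ := exists_leaf hG h2
      exact ⟨ℓ', Finset.mem_filter.mpr ⟨hℓ'S, deg_eq_one hadj' huniq'⟩⟩
    set ℓ := mmin leaves with hℓdef
    have hℓmem := mmin_mem hlne
    rw [Finset.mem_filter] at hℓmem
    obtain ⟨hℓS, hdegℓ⟩ := hℓmem
    obtain ⟨a, hadj, huniq⟩ := deg_one hdegℓ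
    have haS : a ∈ S := (hG.1 hadj).2
    have haℓ : a ≠ ℓ := hadj.ne'
    have haSe : a ∈ S.erase ℓ := Finset.mem_erase.mpr ⟨haℓ, haS⟩
    set G' := G.deleteEdges {s(ℓ, a)} with hG'def
    have htree' : IsTreeOn (S.erase ℓ) G' := isTreeOn_deleteEdges hG hadj huniq
    have hcard' : (S.erase ℓ).card = N - 1 := by
      rw [Finset.card_erase_of_mem hℓS, hN]
    obtain ⟨r, hvr, hdr⟩ := ihN (N - 1) (by omega) (S.erase ℓ) G' hcard' htree'
      (by rw [hcard']; omega)
    have hval : Valid (a :: r) S := by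
      constructor
      · have := hvr.1
        rw [hcard'] at this
        simp only [List.length_cons]
        omega
      · intro z hz
        rcases List.mem_cons.mp hz with rfl | hz
        · exact haS
        · exact Finset.mem_of_mem_erase (hvr.2 z hz)
    have hrnotℓ : ℓ ∉ r := fun hm => (Finset.mem_erase.mp (hvr.2 ℓ hm)).1 rfl
    have hdegG' : ∀ v ∈ S.erase ℓ, deg G' v = 1 + r.count v := by
      intro v hv
      rw [← hdr]
      exact decode_deg hvr v hv
    have hother : ∀ v : Fin n, v ≠ ℓ → v ≠ a → deg G' v = deg G v := by
      intro v h1 h2'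
      rw [deg, deg]
      congr 1
      ext w
      simp only [SimpleGraph.mem_neighborSet, hG'def, SimpleGraph.deleteEdges_adj,
        Set.mem_singleton_iff]
      constructor
      · exact fun h => h.1
      · intro h
        refine ⟨h, fun he => ?_⟩
        rcases Sym2.eq_iff.mp he with ⟨rfl, -⟩ | ⟨rfl, -⟩
        · exact h1 rfl
        · exact h2' rfl
    have hdega : deg G a = deg G' a + 1 := by
      have hset : G.neighborSet a = insert ℓ (G'.neighborSet a) := by
        ext w
        simp only [SimpleGraph.mem_neighborSet, Set.mem_insert_iff, hG'def,
          SimpleGraph.deleteEdges_adj, Set.mem_singleton_iff]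
        constructor
        · intro h
          by_cases hw : w = ℓ
          · exact Or.inl hw
          · refine Or.inr ⟨h, fun he => ?_⟩
            rcases Sym2.eq_iff.mp he with ⟨h5, -⟩ | ⟨-, h6⟩
            · exact haℓ h5
            · exact hw h6
        · rintro (rfl | ⟨h, -⟩)
          · exact hadj.symm
          · exact h
      have hnotmem : ℓ ∉ G'.neighborSet a := by
        simp only [SimpleGraph.mem_neighborSet, hG'def, SimpleGraph.deleteEdges_adj,
          Set.mem_singleton_iff]
        rintro ⟨-, hne⟩
        exact hne Sym2.eq_swap
      rw [deg, deg, hset, Set.ncard_insert_of_notMem hnotmem]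
    have hsetf : S \ (a :: r).toFinset = leaves := by
      ext v
      rw [Finset.mem_sdiff, hleaves, Finset.mem_filter]
      simp only [List.mem_toFinset, List.mem_cons]
      constructor
      · rintro ⟨hvS, hvnot⟩
        push_neg at hvnot
        obtain ⟨hva, hvr'⟩ := hvnot
        refine ⟨hvS, ?_⟩
        by_cases hvℓ : v = ℓ
        · rw [hvℓ]; exact hdegℓ
        · have hvSe : v ∈ S.erase ℓ := Finset.mem_erase.mpr ⟨hvℓ, hvS⟩
          rw [← hother v hvℓ hva, hdegG' v hvSe, List.count_eq_zero.mpr hvr']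
      · rintro ⟨hvS, hdv⟩
        refine ⟨hvS, ?_⟩
        rintro (rfl | hvr')
        · have := hdegG' v haSe
          omega
        · by_cases hvℓ : v = ℓ
          · exact hrnotℓ (hvℓ ▸ hvr')
          · by_cases hva : v = a
            · subst hva
              have := hdegG' v haSe
              omega
            · have hvSe : v ∈ S.erase ℓ := Finset.mem_erase.mpr ⟨hvℓ, hvS⟩
              have hc1 := hdegG' v hvSe
              have hc2' := hother v hvℓ hva
              have hc3 : 0 < r.count v := List.count_pos_iff.mpr hvr'
              omega
    refine ⟨a :: r, hval, ?_⟩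
    rw [decode_cons, hsetf, ← hℓdef, hdr, hG'def]
    exact delete_sup_edge hadj

lemma card_valid (S : Finset (Fin n)) (h2 : 2 ≤ S.card) :
    Nat.card {l : List (Fin n) // Valid l S} = S.card ^ (S.card - 2) := by
  classical
  have e : {l : List (Fin n) // Valid l S} ≃ (Fin (S.card - 2) → {x : Fin n // x ∈ S}) := by
    refine
      { toFun := fun l i => ⟨l.1[i.1]'(by have := l.2.1; omega),
          l.2.2 _ (List.getElem_mem _)⟩
        invFun := fun f => ⟨List.ofFn (fun i => (f i).1), ⟨by simp; omega, ?_⟩⟩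
        left_inv := ?_
        right_inv := ?_ }
    · intro x hx
      rw [List.mem_ofFn] at hx
      obtain ⟨i, hi⟩ := hx
      exact hi ▸ (f i).2
    · intro l
      apply Subtype.ext
      apply List.ext_getElem
      · simp only [List.length_ofFn]
        have := l.2.1
        omega
      · intro i h1 h2'
        simp [List.getElem_ofFn]
    · intro f
      funext i
      apply Subtype.ext
      simp [List.getElem_ofFn]
  rw [Nat.card_congr e, Nat.card_eq_fintype_card, Fintype.card_fun, Fintype.card_coe,
    Fintype.card_fin]

lemma card_trees (S : Finset (Fin n)) (h2 : 2 ≤ S.card) :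
    Nat.card {G : SimpleGraph (Fin n) // IsTreeOn S G} = S.card ^ (S.card - 2) := by
  have hbij : Function.Bijective (fun l : {l : List (Fin n) // Valid l S} =>
      (⟨decode l.1 S, decode_isTreeOn l.2⟩ : {G : SimpleGraph (Fin n) // IsTreeOn S G})) := by
    constructor
    · intro l1 l2 hE
      exact Subtype.ext (decode_injective l1.2 l2.2 (congrArg Subtype.val hE))
    · intro G
      obtain ⟨l, hv, hd⟩ := decode_surjective S.card S G.1 rfl G.2 h2
      exact ⟨⟨l, hv⟩, Subtype.ext hd⟩
  rw [← Nat.card_eq_of_bijective _ hbij]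
  exact card_valid S h2

end CayleyAux

theorem cayley_formula (n : ℕ) (hn : 2 ≤ n) :
    Nat.card {T : SimpleGraph (Fin n) // T.IsTree} = n ^ (n - 2) := by
  haveI : NeZero n := ⟨by omega⟩
  have hiff : ∀ G : SimpleGraph (Fin n), G.IsTree ↔ CayleyAux.IsTreeOn Finset.univ G := by
    intro G
    rw [SimpleGraph.isTree_iff_existsUnique_path]
    constructor
    · rintro ⟨-, h⟩
      exact ⟨fun u v _ => ⟨Finset.mem_univ _, Finset.mem_univ _⟩,
        fun u _ v _ => h u v⟩
    · rintro ⟨-, h⟩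
      exact ⟨⟨0⟩, fun u v => h u (Finset.mem_univ _) v (Finset.mem_univ _)⟩
  have e : {T : SimpleGraph (Fin n) // T.IsTree} ≃
      {G : SimpleGraph (Fin n) // CayleyAux.IsTreeOn Finset.univ G} :=
    Equiv.subtypeEquivRight hiff
  have hcard : (Finset.univ : Finset (Fin n)).card = n := by
    rw [Finset.card_univ, Fintype.card_fin]
  rw [Nat.card_congr e, CayleyAux.card_trees Finset.univ (by omega), hcard]
end

section
/- Let γ ∈ (2,3), α > 0, and let φ : [0,1] → ℝ be Lebesgue-measurable with B_α < ∞ (case T* = 1). Then there exist w, w' ∈ [0, 2α] such that |φ(1 − w') − φ(w)| ≤ (8√2 · γ/(γ−2)) · B_α^{1/4}. -/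
/-!
Statement 11 (first step of the modified GRR inequality, case `T* = 1`): with
`B_α = ∫₀¹∫₀¹ (|φ t − φ s|⁴ / |t−s|^γ) 1_{|t−s|>α} ds dt` and `γ ∈ (2,3)`, there exist
`w, w' ∈ [0, 2α]` such that `|φ(1 − w') − φ(w)| ≤ (8√2 γ/(γ−2)) B_α^{1/4}`.
-/

open MeasureTheory

/-- The Garsia–Rodemich–Rumsey functional with `Ψ(u) = u⁴`, `p(u) = u^{γ/4}`, modified by the
cutoff `|t−s| > α`. -/
noncomputable def grrB (T γ α : ℝ) (φ : ℝ → ℝ) : ℝ :=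
  ∫ p in Set.Icc (0 : ℝ) T ×ˢ Set.Icc (0 : ℝ) T,
    (if α < |p.1 - p.2| then |φ p.1 - φ p.2| ^ 4 / |p.1 - p.2| ^ γ else 0)

open Set Filter


lemma markov_third {J : Set ℝ} (hJm : MeasurableSet J) (hJfin : volume J ≠ ⊤)
    {g : ℝ → ℝ} (hgm : Measurable g) (hgi : IntegrableOn g J)
    (hg0 : ∀ t, 0 ≤ g t) {C : ℝ}
    (hC : (∫ t in J, g t) ≤ C) :
    volume {t | t ∈ J ∧ 3 * C < g t * (volume J).toReal} ≤ volume J / 3 := by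
  set m := (volume J).toReal with hm
  set A := {t | t ∈ J ∧ 3 * C < g t * m} with hA
  have hAsub : A ⊆ J := fun t ht => ht.1
  have hAm : MeasurableSet A := by
    have : A = J ∩ {t | 3 * C < g t * m} := by ext t; simp [hA, and_comm]
    rw [this]
    exact hJm.inter (measurableSet_lt measurable_const (hgm.mul_const m))
  rcases eq_or_ne (volume J) 0 with hJ0 | hJ0
  · have : volume A ≤ 0 := hJ0 ▸ measure_mono hAsub
    simpa using this.trans zero_le
  have hmpos : 0 < m := ENNReal.toReal_pos hJ0 hJfin
  have hCnn : 0 ≤ C := le_trans (setIntegral_nonneg hJm fun t _ => hg0 t) hC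
  rcases eq_or_lt_of_le hCnn with hC0 | hCpos
  · -- C = 0 : integral is 0, g = 0 a.e. on J
    have hint0 : (∫ t in J, g t) = 0 :=
      le_antisymm (hC.trans hC0.symm.le) (setIntegral_nonneg hJm fun t _ => hg0 t)
    have hae : g =ᵐ[volume.restrict J] 0 :=
      (integral_eq_zero_iff_of_nonneg (fun t => hg0 t) hgi).mp hint0
    have : (volume.restrict J) {t | g t ≠ 0} = 0 := by
      simpa [Filter.EventuallyEq, ae_iff] using hae
    have hAsub2 : A ⊆ {t | g t ≠ 0} ∩ J := by
      intro t ht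
      refine ⟨?_, ht.1⟩
      have := ht.2
      rw [← hC0] at this
      simp only [mul_zero] at this
      intro h0
      rw [h0] at this
      simp at this
    have : volume A ≤ 0 := by
      calc volume A ≤ volume ({t | g t ≠ 0} ∩ J) := measure_mono hAsub2
        _ = (volume.restrict J) {t | g t ≠ 0} := by
            rw [Measure.restrict_apply' hJm]
        _ = 0 := this
    simpa using this.trans zero_le
  · -- C > 0 : Markov
    have hAfin : volume A ≠ ⊤ := (measure_mono hAsub).trans_lt hJfin.lt_top |>.ne
    have hlow : ∀ t ∈ A, 3 * C / m ≤ g t := by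
      intro t ht
      exact (div_le_iff₀ hmpos).mpr ht.2.le
    have h1 : 3 * C / m * (volume A).toReal ≤ ∫ t in A, g t :=
      setIntegral_ge_of_const_le_real hAm hAfin hlow (hgi.mono_set hAsub)
    have h2 : (∫ t in A, g t) ≤ ∫ t in J, g t :=
      setIntegral_mono_set hgi (Filter.Eventually.of_forall fun t => hg0 t) hAsub.eventuallyLE
    have key : 3 * C / m * (volume A).toReal ≤ C := h1.trans (h2.trans hC)
    have hAr : (volume A).toReal ≤ m / 3 := by
      rw [div_mul_eq_mul_div, div_le_iff₀ hmpos] at key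
      nlinarith [ENNReal.toReal_nonneg (a := volume A)]
    have : (volume A).toReal ≤ (volume J / 3).toReal := by
      rw [ENNReal.toReal_div]
      simpa using hAr
    exact (ENNReal.toReal_le_toReal hAfin (by simp [ENNReal.div_eq_top, hJfin])).mp this


lemma exists_point_of_small_bad {J A1 A2 A3 : Set ℝ} (hpos : 0 < volume J)
    (hfin : volume J ≠ ⊤) (h1 : volume A1 ≤ volume J / 3)
    (h2 : volume A2 ≤ volume J / 3) (h3 : volume A3 = 0) :
    ∃ t ∈ J, t ∉ A1 ∧ t ∉ A2 ∧ t ∉ A3 := by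
  by_contra h
  push_neg at h
  have hsub : J ⊆ A1 ∪ A2 ∪ A3 := by
    intro t ht
    rcases Classical.em (t ∈ A1) with h' | h'
    · exact Or.inl (Or.inl h')
    rcases Classical.em (t ∈ A2) with h'' | h''
    · exact Or.inl (Or.inr h'')
    · exact Or.inr ((h t ht h') h'')
  have : volume J ≤ volume A1 + volume A2 + volume A3 :=
    (measure_mono hsub).trans ((measure_union_le _ _).trans
      (add_le_add (measure_union_le _ _) le_rfl))
  rw [h3, add_zero] at this
  have h23 : volume A1 + volume A2 ≤ 2 * (volume J / 3) := by
    calc volume A1 + volume A2 ≤ volume J / 3 + volume J / 3 := add_le_add h1 h2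
      _ = 2 * (volume J / 3) := by rw [two_mul]
  have hlt : 2 * (volume J / 3) < volume J := by
    have hfin2 : 2 * (volume J / 3) ≠ ⊤ := by
      simp [ENNReal.mul_eq_top, ENNReal.div_eq_top, hfin]
    rw [← ENNReal.toReal_lt_toReal hfin2 hfin]
    have hm : 0 < (volume J).toReal := ENNReal.toReal_pos hpos.ne' hfin
    rw [ENNReal.toReal_mul, ENNReal.toReal_div]
    simp only [ENNReal.toReal_ofNat]
    linarith
  exact absurd (this.trans h23) hlt.not_ge


section Chain

variable (F : ℝ → ℝ → ℝ) {B : ℝ} (J : ℕ → Set ℝ)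

lemma chain_exists
    (hFm : Measurable fun p : ℝ × ℝ => F p.1 p.2)
    (hF0 : ∀ x y, 0 ≤ F x y)
    (hJm : ∀ k, MeasurableSet (J k)) (hJs : ∀ k, J k ⊆ Icc (0:ℝ) 1)
    (hJp : ∀ k, 0 < volume (J k))
    (hFi : ∀ k l : ℕ, IntegrableOn (fun p : ℝ × ℝ => F p.1 p.2) (J k ×ˢ J l))
    (hB : ∀ k l : ℕ, (∫ p in J k ×ˢ J l, F p.1 p.2) ≤ B) :
    ∀ L : ℕ, ∃ p : ℕ → ℝ, (∀ k, k ≤ L → p k ∈ J k) ∧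
      (∀ k, k < L → F (p k) (p (k+1)) *
        ((volume (J k)).toReal * (volume (J (k+1))).toReal) ≤ 9 * B) ∧
      IntegrableOn (F (p L)) (J (L+1)) ∧
      (∫ s in J (L+1), F (p L) s) * (volume (J L)).toReal ≤ 3 * B := by
  -- shared facts
  have hJfin : ∀ k, volume (J k) ≠ ⊤ := by
    intro k
    refine ((measure_mono (hJs k)).trans_lt ?_).ne
    rw [Real.volume_Icc]
    exact ENNReal.ofReal_lt_top
  have hmpos : ∀ k, 0 < (volume (J k)).toReal :=
    fun k => ENNReal.toReal_pos (hJp k).ne' (hJfin k)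
  have hrestr : ∀ k l : ℕ, Integrable (fun p : ℝ × ℝ => F p.1 p.2)
      ((volume.restrict (J k)).prod (volume.restrict (J l))) := by
    intro k l
    have := hFi k l
    rwa [IntegrableOn, Measure.volume_eq_prod, ← Measure.prod_restrict] at this
  have hg2m : ∀ l : ℕ, Measurable fun x => ∫ s in J l, F x s := by
    intro l
    exact (hFm.stronglyMeasurable.integral_prod_right'
      (ν := volume.restrict (J l))).measurable
  have hg2i : ∀ k l : ℕ, IntegrableOn (fun x => ∫ s in J l, F x s) (J k) :=
    fun k l => (hrestr k l).integral_prod_left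
  have hmar : ∀ k l : ℕ, (∫ x in J k, ∫ s in J l, F x s) ≤ B := by
    intro k l
    have := setIntegral_prod (μ := (volume : Measure ℝ)) (ν := (volume : Measure ℝ))
      (fun p : ℝ × ℝ => F p.1 p.2) (by rw [← Measure.volume_eq_prod]; exact hFi k l)
    rw [← Measure.volume_eq_prod] at this
    rw [← this]
    exact hB k l
  have hslice : ∀ k l : ℕ, volume {x | x ∈ J k ∧ ¬ IntegrableOn (F x) (J l)} = 0 := by
    intro k l
    have hae := (hrestr k l).prod_right_ae
    rw [Filter.eventually_iff, mem_ae_iff] at hae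
    have : {x | x ∈ J k ∧ ¬ IntegrableOn (F x) (J l)} =
        {x | IntegrableOn (F x) (J l)}ᶜ ∩ J k := by
      ext x; simp [and_comm]
    rw [this, ← Measure.restrict_apply' (hJm k)]
    exact hae
  -- the one-step selection
  have step : ∀ (k : ℕ) (x : ℝ), IntegrableOn (F x) (J (k+1)) →
      ∃ t ∈ J (k+1),
        F x t * (volume (J (k+1))).toReal ≤ 3 * (∫ s in J (k+1), F x s) ∧
        IntegrableOn (F t) (J (k+2)) ∧
        (∫ s in J (k+2), F t s) * (volume (J (k+1))).toReal ≤ 3 * B := by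
    intro k x hxint
    have h1 : volume {t | t ∈ J (k+1) ∧
        3 * (∫ s in J (k+1), F x s) < F x t * (volume (J (k+1))).toReal}
        ≤ volume (J (k+1)) / 3 :=
      markov_third (hJm _) (hJfin _)
        (hFm.comp (measurable_prodMk_left)) hxint (fun t => hF0 x t) le_rfl
    have h2 : volume {t | t ∈ J (k+1) ∧
        3 * B < (∫ s in J (k+2), F t s) * (volume (J (k+1))).toReal}
        ≤ volume (J (k+1)) / 3 :=
      markov_third (hJm _) (hJfin _) (hg2m (k+2)) (hg2i (k+1) (k+2))
        (fun t => setIntegral_nonneg (hJm _) fun s _ => hF0 t s) (hmar (k+1) (k+2))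
    obtain ⟨t, htJ, ht1, ht2, ht3⟩ :=
      exists_point_of_small_bad (hJp (k+1)) (hJfin (k+1)) h1 h2 (hslice (k+1) (k+2))
    refine ⟨t, htJ, ?_, ?_, ?_⟩
    · by_contra hcon; exact ht1 ⟨htJ, lt_of_not_ge hcon⟩
    · by_contra hcon; exact ht3 ⟨htJ, hcon⟩
    · by_contra hcon; exact ht2 ⟨htJ, lt_of_not_ge hcon⟩
  -- induction
  intro L
  induction L with
  | zero =>
    have h1 : volume {t | t ∈ J 0 ∧
        3 * B < (∫ s in J 1, F t s) * (volume (J 0)).toReal}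
        ≤ volume (J 0) / 3 :=
      markov_third (hJm _) (hJfin _) (hg2m 1) (hg2i 0 1)
        (fun t => setIntegral_nonneg (hJm _) fun s _ => hF0 t s) (hmar 0 1)
    obtain ⟨t, htJ, ht1, _, ht3⟩ :=
      exists_point_of_small_bad (A2 := ∅) (hJp 0) (hJfin 0) h1
        (by simp) (hslice 0 1)
    refine ⟨fun _ => t, fun k hk => ?_, fun k hk => absurd hk (Nat.not_lt_zero k), ?_, ?_⟩
    · interval_cases k; exact htJ
    · by_contra hcon; exact ht3 ⟨htJ, hcon⟩
    · by_contra hcon; exact ht1 ⟨htJ, lt_of_not_ge hcon⟩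
  | succ L ih =>
    obtain ⟨p, hmem, hlink, hint, hinv⟩ := ih
    obtain ⟨t, htJ, ht1, ht2, ht3⟩ := step L (p L) hint
    refine ⟨Function.update p (L+1) t, ?_, ?_, ?_, ?_⟩
    · intro k hk
      rcases Nat.lt_or_ge k (L+1) with h | h
      · rw [Function.update_of_ne (by omega)]
        exact hmem k (by omega)
      · have : k = L + 1 := by omega
        subst this
        rw [Function.update_self]
        exact htJ
    · intro k hk
      rcases Nat.lt_or_ge k L with h | h
      · rw [Function.update_of_ne (by omega), Function.update_of_ne (by omega)]
        exact hlink k h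
      · have hkL : k = L := by omega
        subst hkL
        rw [Function.update_of_ne (by omega), Function.update_self]
        have hm1 : (0:ℝ) ≤ (volume (J k)).toReal := ENNReal.toReal_nonneg
        calc F (p k) t * ((volume (J k)).toReal * (volume (J (k+1))).toReal)
            = (F (p k) t * (volume (J (k+1))).toReal) * (volume (J k)).toReal := by ring
          _ ≤ (3 * (∫ s in J (k+1), F (p k) s)) * (volume (J k)).toReal :=
              mul_le_mul_of_nonneg_right ht1 hm1
          _ = 3 * ((∫ s in J (k+1), F (p k) s) * (volume (J k)).toReal) := by ring
          _ ≤ 3 * (3 * B) := by linarith [hinv]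
          _ = 9 * B := by ring
    · rw [Function.update_self]
      exact ht2
    · rw [Function.update_self]
      exact ht3
end Chain


lemma link_bound {φ : ℝ → ℝ} {u v α γ B m₁ m₂ D e : ℝ}
    (hαuv : α < |u - v|) (hα : 0 < α) (hD : |u - v| ≤ D)
    (hm₁ : 0 < m₁) (hm₂ : 0 < m₂) (hγ : 0 ≤ γ) (hB : 0 ≤ B) (he0 : 0 ≤ e)
    (hF : (if α < |u - v| then |φ u - φ v| ^ 4 / |u - v| ^ γ else 0) * (m₁ * m₂) ≤ 9 * B)
    (he : 9 * D ^ γ ≤ e ^ 4 * (m₁ * m₂)) :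
    |φ u - φ v| ≤ e * B ^ ((1:ℝ)/4) := by
  rw [if_pos hαuv] at hF
  have hr : 0 < |u - v| := hα.trans hαuv
  have hrγ : 0 < |u - v| ^ γ := Real.rpow_pos_of_pos hr γ
  rw [div_mul_eq_mul_div, div_le_iff₀ hrγ] at hF
  have hrD : |u - v| ^ γ ≤ D ^ γ := Real.rpow_le_rpow (abs_nonneg _) hD hγ
  have h4 : |φ u - φ v| ^ 4 * (m₁ * m₂) ≤ e ^ 4 * B * (m₁ * m₂) := by
    calc |φ u - φ v| ^ 4 * (m₁ * m₂) ≤ 9 * B * |u - v| ^ γ := hF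
      _ ≤ 9 * B * (D ^ γ) := mul_le_mul_of_nonneg_left hrD (by positivity)
      _ = B * (9 * D ^ γ) := by ring
      _ ≤ B * (e ^ 4 * (m₁ * m₂)) := mul_le_mul_of_nonneg_left he hB
      _ = e ^ 4 * B * (m₁ * m₂) := by ring
  have h5 : |φ u - φ v| ^ 4 ≤ e ^ 4 * B :=
    le_of_mul_le_mul_right h4 (by positivity)
  have hBq : (B ^ ((1:ℝ)/4)) ^ (4:ℕ) = B := by
    rw [← Real.rpow_natCast (B ^ ((1:ℝ)/4)) 4, ← Real.rpow_mul hB]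
    norm_num
  have h6 : |φ u - φ v| ^ 4 ≤ (e * B ^ ((1:ℝ)/4)) ^ 4 := by
    rw [mul_pow, hBq]
    exact h5
  exact (pow_le_pow_iff_left₀ (abs_nonneg _)
    (mul_nonneg he0 (Real.rpow_nonneg hB _)) (by norm_num)).mp h6

lemma scale_he (γ : ℝ) (hγ : 2 < γ) (n : ℕ) :
    9 * (((1/16:ℝ))^n) ^ γ ≤
      ((11/2) * ((1/16:ℝ)^((γ-2)/4))^n)^4 * ((7/16*(1/16:ℝ)^(n+1)) * (7/16*(1/16:ℝ)^n)) := by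
  have h16 : (0:ℝ) < 1/16 := by norm_num
  have hX : (0:ℝ) < (1/16:ℝ) ^ ((n:ℝ)*γ) := Real.rpow_pos_of_pos h16 _
  have e1 : (((1/16:ℝ))^n : ℝ) ^ γ = (1/16:ℝ) ^ ((n:ℝ)*γ) := by
    rw [← Real.rpow_natCast (1/16:ℝ) n]
    exact (Real.rpow_mul h16.le _ _).symm
  have e2 : (((1/16:ℝ)^((γ-2)/4))^n)^4 = (1/16:ℝ) ^ ((n:ℝ)*(γ-2)) := by
    rw [← pow_mul, ← Real.rpow_natCast ((1/16:ℝ)^((γ-2)/4)) (n*4), ← Real.rpow_mul h16.le]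
    congr 1
    push_cast
    ring
  have e3 : (1/16:ℝ)^(n+1) * (1/16:ℝ)^n = (1/16:ℝ) ^ (2*(n:ℝ)+1) := by
    rw [← pow_add, ← Real.rpow_natCast (1/16:ℝ) (n+1+n)]
    congr 1
    push_cast
    ring
  have e4 : (1/16:ℝ) ^ ((n:ℝ)*(γ-2)) * (1/16:ℝ) ^ (2*(n:ℝ)+1) =
      (1/16:ℝ) ^ ((n:ℝ)*γ) * (1/16:ℝ) := by
    have hr : (1/16:ℝ)^((n:ℝ)*γ) * (1/16) = (1/16:ℝ)^((n:ℝ)*γ + 1) := by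
      rw [Real.rpow_add h16, Real.rpow_one]
    rw [hr, ← Real.rpow_add h16]
    congr 1
    ring
  rw [mul_pow, e2, e1]
  have hgrp : (7/16*(1/16:ℝ)^(n+1)) * (7/16*(1/16:ℝ)^n) =
      49/256 * ((1/16:ℝ)^(2*(n:ℝ)+1)) := by
    rw [← e3]; ring
  rw [hgrp]
  calc 9 * (1/16:ℝ)^((n:ℝ)*γ)
      ≤ (11/2:ℝ)^4 * (49/256) * ((1/16:ℝ)^((n:ℝ)*γ) * (1/16)) := by nlinarith [hX]
    _ = (11/2:ℝ)^4 * (1/16:ℝ)^((n:ℝ)*(γ-2)) * (49/256 * (1/16:ℝ)^(2*(n:ℝ)+1)) := by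
        linear_combination ((11/2:ℝ)^4 * (49/256)) * e4.symm

lemma dist_pair {u v a b c d : ℝ} (hu : u ∈ Icc a b) (hv : v ∈ Icc c d) (hbc : b ≤ c) :
    c - b ≤ |u - v| ∧ |u - v| ≤ d - a := by
  obtain ⟨h1, h2⟩ := hu
  obtain ⟨h3, h4⟩ := hv
  rw [abs_sub_comm, abs_of_nonneg (by linarith)]
  constructor <;> linarith

lemma my_sum_range_add (f : ℕ → ℝ) (m : ℕ) : ∀ n : ℕ,
    ∑ k ∈ Finset.range (m+n), f k =
      ∑ k ∈ Finset.range m, f k + ∑ k ∈ Finset.range n, f (m + k)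
  | 0 => by simp
  | n+1 => by
    rw [show m + (n+1) = (m+n)+1 by omega, Finset.sum_range_succ, my_sum_range_add f m n,
      Finset.sum_range_succ]
    rw [add_assoc]

set_option maxHeartbeats 2000000 in
theorem modified_GRR_endpoints (γ α : ℝ) (hγ : 2 < γ) (hγ' : γ < 3) (hα : 0 < α)
    (φ : ℝ → ℝ) (hφ : Measurable φ)
    (hB : IntegrableOn
      (fun p : ℝ × ℝ => if α < |p.1 - p.2| then |φ p.1 - φ p.2| ^ 4 / |p.1 - p.2| ^ γ else 0)
      (Set.Icc (0 : ℝ) 1 ×ˢ Set.Icc (0 : ℝ) 1)) :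
    ∃ w ∈ Set.Icc (0 : ℝ) (2 * α), ∃ w' ∈ Set.Icc (0 : ℝ) (2 * α),
      |φ (1 - w') - φ w| ≤
        8 * Real.sqrt 2 * (γ / (γ - 2)) * grrB 1 γ α φ ^ ((1 : ℝ) / 4) := by
  classical
  have hγ0 : (0:ℝ) ≤ γ := by linarith
  set f : ℝ × ℝ → ℝ :=
    fun p => if α < |p.1 - p.2| then |φ p.1 - φ p.2| ^ 4 / |p.1 - p.2| ^ γ else 0 with hf
  have hf0 : ∀ p : ℝ × ℝ, 0 ≤ f p := by
    intro p
    rw [hf]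
    dsimp only
    split
    · positivity
    · exact le_rfl
  have hfm : Measurable f := by
    rw [hf]
    refine Measurable.ite ?_ ?_ measurable_const
    · exact measurableSet_lt measurable_const (measurable_fst.sub measurable_snd).abs
    · exact (((hφ.comp measurable_fst).sub (hφ.comp measurable_snd)).abs.pow_const 4).div
        ((Real.continuous_rpow_const hγ0).measurable.comp
          (measurable_fst.sub measurable_snd).abs)
  have hgrr : grrB 1 γ α φ = ∫ p in Icc (0:ℝ) 1 ×ˢ Icc (0:ℝ) 1, f p := by
    rw [hf]; rfl
  have hBnn : 0 ≤ grrB 1 γ α φ := by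
    rw [hgrr]
    exact setIntegral_nonneg (measurableSet_Icc.prod measurableSet_Icc) fun p _ => hf0 p
  have hBqnn : 0 ≤ grrB 1 γ α φ ^ ((1:ℝ)/4) := Real.rpow_nonneg hBnn _
  rcases le_or_gt 1 (2*α) with htriv | h2a
  · refine ⟨1/2, ⟨by norm_num, by linarith⟩, 1/2, ⟨by norm_num, by linarith⟩, ?_⟩
    rw [show (1:ℝ) - 1/2 = 1/2 by norm_num, sub_self, abs_zero]
    exact mul_nonneg (mul_nonneg (mul_nonneg (by norm_num) (Real.sqrt_nonneg 2))
      (div_nonneg (by linarith) (by linarith))) hBqnn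
  -- hard case
  have hα2 : α < 1/2 := by linarith
  have hex : ∃ n : ℕ, (1/16:ℝ)^n ≤ 2*α := by
    obtain ⟨n, hn⟩ := exists_pow_lt_of_lt_one (by linarith : (0:ℝ) < 2*α)
      (by norm_num : (1/16:ℝ) < 1)
    exact ⟨n, hn.le⟩
  set N := Nat.find hex with hN
  have hNle : (1/16:ℝ)^N ≤ 2*α := Nat.find_spec hex
  have hNpos : 0 < N := by
    rcases Nat.eq_zero_or_pos N with h0 | h; swap
    · exact h
    exfalso
    have := hNle
    rw [h0, pow_zero] at this
    linarith
  have hNmin : 2*α < (1/16:ℝ)^(N-1) :=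
    lt_of_not_ge (Nat.find_min hex (by omega : N - 1 < N))
  -- intervals
  set lo : ℕ → ℝ := fun n => if n = 0 then 3/4 else (9/16)*(1/16:ℝ)^n with hlo
  set hi : ℕ → ℝ := fun n => (1/16:ℝ)^n with hhi
  have hhipos : ∀ n, 0 < hi n := fun n => by rw [hhi]; positivity
  have hhile : ∀ n, hi n ≤ 1 := fun n => by
    rw [hhi]; exact pow_le_one₀ (by norm_num) (by norm_num)
  have hlopos : ∀ n, 0 < lo n := by
    intro n; rw [hlo]; dsimp only; split
    · norm_num
    · positivity
  have hlohi : ∀ n, lo n < hi n := by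
    intro n; rw [hlo, hhi]; dsimp only; split
    · rename_i h; rw [h, pow_zero]; norm_num
    · nlinarith [pow_pos (by norm_num : (0:ℝ) < 1/16) n]
  have hgap : ∀ n, hi (n+1) ≤ lo n := by
    intro n; rw [hlo, hhi]; dsimp only; split
    · rename_i h
      rw [h]
      norm_num
    · rw [pow_succ]
      nlinarith [pow_pos (by norm_num : (0:ℝ) < 1/16) n]
  set J : ℕ → Set ℝ := fun k =>
    if k ≤ N then Icc (lo (N - k)) (hi (N - k))
    else Icc (1 - hi (k - N - 1)) (1 - lo (k - N - 1)) with hJ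
  have hJlow : ∀ k, k ≤ N → J k = Icc (lo (N - k)) (hi (N - k)) := by
    intro k hk; rw [hJ]; exact if_pos hk
  have hJhigh : ∀ k, N < k → J k = Icc (1 - hi (k - N - 1)) (1 - lo (k - N - 1)) := by
    intro k hk; rw [hJ]; exact if_neg (by omega)
  have hJm : ∀ k, MeasurableSet (J k) := by
    intro k; rw [hJ]; dsimp only; split <;> exact measurableSet_Icc
  have hJs : ∀ k, J k ⊆ Icc (0:ℝ) 1 := by
    intro k; rw [hJ]; dsimp only; split
    · exact Icc_subset_Icc (hlopos _).le (hhile _)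
    · exact Icc_subset_Icc (by linarith [hhile (k - N - 1)]) (by linarith [hlopos (k - N - 1)])
  have hvol : ∀ a b : ℝ, a ≤ b → (volume (Icc a b)).toReal = b - a := by
    intro a b hab
    rw [Real.volume_Icc, ENNReal.toReal_ofReal (by linarith)]
  have hJp : ∀ k, 0 < volume (J k) := by
    intro k; rw [hJ]; dsimp only; split
    · rw [Real.volume_Icc]
      exact ENNReal.ofReal_pos.mpr (by linarith [hlohi (N - k)])
    · rw [Real.volume_Icc]
      exact ENNReal.ofReal_pos.mpr (by linarith [hlohi (k - N - 1)])
  have hfeta : (fun p : ℝ × ℝ => f (p.1, p.2)) = f := by funext p; rfl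
  have hFi : ∀ k l : ℕ, IntegrableOn (fun p : ℝ × ℝ => f (p.1, p.2)) (J k ×ˢ J l) := by
    intro k l
    rw [hfeta]
    exact hB.mono_set (prod_mono (hJs k) (hJs l))
  have hBk : ∀ k l : ℕ, (∫ p in J k ×ˢ J l, f (p.1, p.2)) ≤ grrB 1 γ α φ := by
    intro k l
    rw [hgrr]
    have : (fun p : ℝ × ℝ => f (p.1, p.2)) = f := hfeta
    rw [this]
    exact setIntegral_mono_set hB (Filter.Eventually.of_forall hf0)
      ((prod_mono (hJs k) (hJs l)).eventuallyLE)
  obtain ⟨p, hpmem, hplink, -, -⟩ :=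
    chain_exists (fun x y => f (x, y)) J (hfm.comp (measurable_fst.prodMk measurable_snd))
      (fun x y => hf0 (x, y)) hJm hJs hJp hFi hBk (2*N+1)
  -- endpoints
  have hp0 : p 0 ∈ Icc (lo N) (hi N) := by
    have := hpmem 0 (by omega)
    rwa [hJlow 0 (by omega), Nat.sub_zero] at this
  have hpL : p (2*N+1) ∈ Icc (1 - hi N) (1 - lo N) := by
    have := hpmem (2*N+1) (by omega)
    rwa [hJhigh (2*N+1) (by omega), show 2*N+1 - N - 1 = N by omega] at this
  refine ⟨p 0, ⟨by linarith [hp0.1, hlopos N], by linarith [hp0.2, hNle]⟩,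
    1 - p (2*N+1), ⟨by linarith [hpL.2, hlopos N], ?_⟩, ?_⟩
  · have : 1 - p (2*N+1) ≤ hi N := by linarith [hpL.1]
    linarith [hNle]
  have hφeq : φ (1 - (1 - p (2*N+1))) = φ (p (2*N+1)) := by norm_num
  rw [hφeq]
  -- constants
  set Qx := (1/16:ℝ) ^ ((γ-2)/4) with hQx
  have hQx0 : 0 ≤ Qx := Real.rpow_nonneg (by norm_num) _
  have hQx1 : Qx < 1 :=
    Real.rpow_lt_one (by norm_num) (by norm_num) (by linarith [hγ] : 0 < (γ-2)/4)
  set v : ℕ → ℝ := fun n => if n = 0 then 61/10 else (11/2) * Qx ^ n with hv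
  set E : ℕ → ℝ := fun k =>
    if k = N then 7/2 else v (if k < N then N - 1 - k else k - N - 1) with hE
  have hv0 : ∀ n, 0 ≤ v n := by
    intro n; rw [hv]; dsimp only; split
    · norm_num
    · positivity
  -- the per-link bound
  set B := grrB 1 γ α φ with hBdef
  have linkcase : ∀ (a b : ℝ) (n : ℕ), n < N →
      lo n - hi (n+1) ≤ |a - b| → |a - b| ≤ hi n →
      (if α < |a - b| then |φ a - φ b| ^ 4 / |a - b| ^ γ else 0) *
        ((hi (n+1) - lo (n+1)) * (hi n - lo n)) ≤ 9 * B →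
      |φ a - φ b| ≤ v n * B ^ ((1:ℝ)/4) := by
    intro a b n hnN hgap2 hD hFle
    have hαab : α < |a - b| := by
      rcases Nat.eq_zero_or_pos n with h0 | hn1
      · subst h0
        rw [hlo, hhi] at hgap2
        norm_num at hgap2
        linarith [hgap2, hα2]
      · have hlon : lo n = (9/16)*(1/16:ℝ)^n := by rw [hlo]; exact if_neg (by omega)
        have hgapval : lo n - hi (n+1) = (1/2)*(1/16:ℝ)^n := by
          rw [hlon, hhi]
          dsimp only
          rw [pow_succ]
          ring
        have hmono : (1/16:ℝ)^(N-1) ≤ (1/16:ℝ)^n :=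
          pow_le_pow_of_le_one (by norm_num) (by norm_num) (by omega)
        have : α < (1/2)*(1/16:ℝ)^n := by
          have : 2*α < (1/16:ℝ)^n := lt_of_lt_of_le hNmin hmono
          linarith
        linarith [hgapval ▸ hgap2]
    rcases Nat.eq_zero_or_pos n with h0 | hn1
    · subst h0
      have hm1v : hi (0+1) - lo (0+1) = 7/256 := by rw [hhi, hlo]; norm_num
      have hm2v : hi 0 - lo 0 = 1/4 := by rw [hhi, hlo]; norm_num
      rw [hm1v, hm2v] at hFle
      have hv00 : v 0 = 61/10 := by simp [hv]
      rw [hv00]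
      have hD1 : |a - b| ≤ 1 := hD.trans (by rw [hhi]; norm_num)
      refine link_bound hαab hα hD1 (by norm_num) (by norm_num) hγ0 hBnn (by norm_num)
        hFle ?_
      rw [Real.one_rpow]
      norm_num
    · have hvn : v n = (11/2) * Qx ^ n := by rw [hv]; exact if_neg (by omega)
      have hlon : ∀ m : ℕ, 0 < m → lo m = (9/16)*(1/16:ℝ)^m := by
        intro m hm; rw [hlo]; exact if_neg (by omega)
      have hm1 : hi (n+1) - lo (n+1) = 7/16*(1/16:ℝ)^(n+1) := by
        rw [hhi, hlon (n+1) (by omega)]; ring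
      have hm2 : hi n - lo n = 7/16*(1/16:ℝ)^n := by
        rw [hhi, hlon n hn1]; ring
      rw [hm1, hm2] at hFle
      refine link_bound hαab hα hD (by positivity) (by positivity) hγ0 hBnn
        (by rw [hvn]; positivity) hFle ?_
      rw [hvn, hhi]
      exact scale_he γ hγ n
  have hstep : ∀ k ∈ Finset.range (2*N+1),
      |φ (p (k+1)) - φ (p k)| ≤ E k * B ^ ((1:ℝ)/4) := by
    intro k hk
    rw [Finset.mem_range] at hk
    have hlink' := hplink k hk
    rcases lt_trichotomy k N with hkN | hkN | hkN
    · -- left chain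
      set n₀ := N - 1 - k with hn₀
      have hJk : J k = Icc (lo (n₀+1)) (hi (n₀+1)) := by
        rw [hJlow k hkN.le, show N - k = n₀ + 1 by omega]
      have hJk1 : J (k+1) = Icc (lo n₀) (hi n₀) := by
        rw [hJlow (k+1) (by omega), show N - (k+1) = n₀ by omega]
      have hu : p k ∈ Icc (lo (n₀+1)) (hi (n₀+1)) := hJk ▸ hpmem k (by omega)
      have hv' : p (k+1) ∈ Icc (lo n₀) (hi n₀) := hJk1 ▸ hpmem (k+1) (by omega)
      obtain ⟨hg1, hg2⟩ := dist_pair hu hv' (hgap n₀)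
      have hmk : (volume (J k)).toReal = hi (n₀+1) - lo (n₀+1) := by
        rw [hJk, hvol _ _ (hlohi _).le]
      have hmk1 : (volume (J (k+1))).toReal = hi n₀ - lo n₀ := by
        rw [hJk1, hvol _ _ (hlohi _).le]
      rw [hmk, hmk1] at hlink'
      have hEk : E k = v n₀ := by
        rw [hE]
        dsimp only
        rw [if_neg (by omega), if_pos hkN]
      rw [hEk, abs_sub_comm]
      refine linkcase (p k) (p (k+1)) n₀ (by omega) hg1 ?_ hlink'
      linarith [hg2, hlopos (n₀+1)]
    · -- bridge
      subst hkN
      have hJk : J N = Icc (3/4) 1 := by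
        rw [hJlow N le_rfl, Nat.sub_self]
        rw [hlo, hhi]
        norm_num
      have hJk1 : J (N+1) = Icc 0 (1/4) := by
        rw [hJhigh (N+1) (by omega), show N+1 - N - 1 = 0 by omega]
        rw [hlo, hhi]
        norm_num
      have hu : p N ∈ Icc (3/4 : ℝ) 1 := hJk ▸ hpmem N (by omega)
      have hv' : p (N+1) ∈ Icc (0:ℝ) (1/4) := hJk1 ▸ hpmem (N+1) (by omega)
      obtain ⟨hg1, hg2⟩ := dist_pair hv' hu (by norm_num)
      rw [abs_sub_comm] at hg1 hg2
      have hmk : (volume (J N)).toReal = 1/4 := by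
        rw [hJk, hvol _ _ (by norm_num)]; norm_num
      have hmk1 : (volume (J (N+1))).toReal = 1/4 := by
        rw [hJk1, hvol _ _ (by norm_num)]; norm_num
      rw [hmk, hmk1] at hlink'
      have hEk : E N = 7/2 := by rw [hE]; dsimp only; rw [if_pos rfl]
      rw [hEk, abs_sub_comm]
      have hαab : α < |p N - p (N+1)| := by
        have : (1:ℝ)/2 ≤ |p N - p (N+1)| := by linarith
        linarith
      refine link_bound (D := 1) hαab hα (by linarith [hg2]) (by norm_num) (by norm_num)
        hγ0 hBnn (by norm_num) hlink' ?_
      rw [Real.one_rpow]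
      norm_num
    · -- right chain
      set j := k - N - 1 with hj
      have hjN : j < N := by omega
      have hJk : J k = Icc (1 - hi j) (1 - lo j) := by
        rw [hJhigh k hkN]
      have hJk1 : J (k+1) = Icc (1 - hi (j+1)) (1 - lo (j+1)) := by
        rw [hJhigh (k+1) (by omega), show k+1 - N - 1 = j + 1 by omega]
      have hu : p k ∈ Icc (1 - hi j) (1 - lo j) := hJk ▸ hpmem k (by omega)
      have hv' : p (k+1) ∈ Icc (1 - hi (j+1)) (1 - lo (j+1)) := hJk1 ▸ hpmem (k+1) (by omega)
      obtain ⟨hg1, hg2⟩ := dist_pair hu hv' (by linarith [hgap j])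
      have hmk : (volume (J k)).toReal = hi j - lo j := by
        rw [hJk, hvol _ _ (by linarith [hlohi j])]; ring
      have hmk1 : (volume (J (k+1))).toReal = hi (j+1) - lo (j+1) := by
        rw [hJk1, hvol _ _ (by linarith [hlohi (j+1)])]; ring
      rw [hmk, hmk1] at hlink'
      rw [mul_comm (hi j - lo j) (hi (j+1) - lo (j+1))] at hlink'
      have hEk : E k = v j := by
        rw [hE]; dsimp only
        rw [if_neg (by omega), if_neg (by omega)]
      rw [hEk, abs_sub_comm]
      refine linkcase (p k) (p (k+1)) j hjN ?_ ?_ hlink'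
      · linarith [hg1]
      · linarith [hg2, hlopos (j+1)]
  -- telescoping
  have htel : |φ (p (2*N+1)) - φ (p 0)| ≤
      ∑ k ∈ Finset.range (2*N+1), |φ (p (k+1)) - φ (p k)| := by
    have h1 := Finset.abs_sum_le_sum_abs
      (fun k => φ (p (k+1)) - φ (p k)) (Finset.range (2*N+1))
    rwa [Finset.sum_range_sub (fun k => φ (p k))] at h1
  have hlog := Real.log_two_gt_d9
  have hx0 : (0:ℝ) < γ - 2 := by linarith
  have hx1 : γ - 2 ≤ 1 := by linarith
  have hQxval : Qx ≤ 1 / (1 + Real.log 2 * (γ-2)) := by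
    have hQexp : Qx = Real.exp (-(Real.log 2 * (γ-2))) := by
      rw [hQx, Real.rpow_def_of_pos (by norm_num : (0:ℝ) < 1/16)]
      congr 1
      have h16 : Real.log (1/16 : ℝ) = -(4 * Real.log 2) := by
        rw [one_div, Real.log_inv, show (16:ℝ) = 2^4 by norm_num, Real.log_pow]
        push_cast
        ring
      rw [h16]
      ring
    rw [hQexp, Real.exp_neg, one_div]
    exact inv_anti₀ (by nlinarith)
      (by linarith [Real.add_one_le_exp (Real.log 2 * (γ-2))])
  have hQgeom : (∑ k ∈ Finset.range (N-1), Qx ^ k) ≤ 1 / (1 - Qx) := by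
    have h1q : 0 < 1 - Qx := by linarith
    rw [le_div_iff₀ h1q]
    have hgs := geom_sum_mul Qx (N-1)
    have hp : 0 ≤ Qx ^ (N-1) := pow_nonneg hQx0 _
    nlinarith [hgs]
  have hQb : Qx / (1 - Qx) ≤ 3 / (2 * (γ - 2)) := by
    have h1q : 0 < 1 - Qx := by linarith
    have h2x : 0 < 2 * (γ - 2) := by linarith
    rw [div_le_div_iff₀ h1q h2x]
    have h1t : 0 < 1 + Real.log 2 * (γ - 2) := by nlinarith
    have hkey : Qx * (1 + Real.log 2 * (γ-2)) ≤ 1 := by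
      calc Qx * (1 + Real.log 2 * (γ-2))
          ≤ (1 / (1 + Real.log 2 * (γ-2))) * (1 + Real.log 2 * (γ-2)) :=
            mul_le_mul_of_nonneg_right hQxval h1t.le
        _ = 1 := by field_simp
    nlinarith [hkey, mul_nonneg (by linarith : (0:ℝ) ≤ 3*Real.log 2 - 2)
      (mul_nonneg hQx0 hx0.le)]
  -- sum of E
  have hEright : ∀ k : ℕ, E (N+(k+1)) = v k := by
    intro k
    rw [hE]
    dsimp only
    rw [if_neg (by omega), if_neg (by omega)]
    congr 1
    omega
  have hEleft : ∀ k, k < N → E k = v (N-1-k) := by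
    intro k hk
    rw [hE]
    dsimp only
    rw [if_neg (by omega), if_pos hk]
  have hEN : E N = 7/2 := by rw [hE]; dsimp only; rw [if_pos rfl]
  have hsum : ∑ k ∈ Finset.range (2*N+1), E k
      = 7/2 + 2 * ∑ n ∈ Finset.range N, v n := by
    rw [show 2*N+1 = N + (N+1) by omega, my_sum_range_add]
    rw [Finset.sum_range_succ' (fun k => E (N + k)) N]
    have h1 : ∑ k ∈ Finset.range N, E k = ∑ k ∈ Finset.range N, v (N-1-k) :=
      Finset.sum_congr rfl fun k hk => hEleft k (Finset.mem_range.mp hk)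
    have h2 : ∑ k ∈ Finset.range N, v (N-1-k) = ∑ k ∈ Finset.range N, v k :=
      Finset.sum_range_reflect v N
    have h3 : ∑ k ∈ Finset.range N, E (N + (k+1)) = ∑ k ∈ Finset.range N, v k :=
      Finset.sum_congr rfl fun k _ => hEright k
    rw [h1, h2, h3, Nat.add_zero, hEN]
    ring
  have hSv : ∑ n ∈ Finset.range N, v n ≤ 61/10 + 33/(4*(γ-2)) := by
    obtain ⟨M, hM⟩ : ∃ M, N = M + 1 := ⟨N-1, by omega⟩
    have hMN : M = N - 1 := by omega
    rw [hM, Finset.sum_range_succ' v M]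
    have hv0' : v 0 = 61/10 := by simp [hv]
    have hvs : ∀ k : ℕ, v (k+1) = 11/2 * Qx ^ (k+1) := by
      intro k
      rw [hv]
      dsimp only
      rw [if_neg (by omega)]
    have hsplit : ∑ k ∈ Finset.range M, v (k+1)
        = 11/2 * (Qx * ∑ k ∈ Finset.range M, Qx ^ k) := by
      rw [Finset.mul_sum, Finset.mul_sum]
      refine Finset.sum_congr rfl fun k _ => ?_
      rw [hvs k, pow_succ]
      ring
    rw [hsplit, hv0']
    have hQS : Qx * (∑ k ∈ Finset.range M, Qx ^ k) ≤ 3/(2*(γ-2)) := by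
      calc Qx * (∑ k ∈ Finset.range M, Qx ^ k) ≤ Qx * (1/(1-Qx)) := by
            rw [hMN]
            exact mul_le_mul_of_nonneg_left hQgeom hQx0
        _ = Qx / (1 - Qx) := by rw [mul_one_div]
        _ ≤ 3/(2*(γ-2)) := hQb
    have h2' : 11/2 * (Qx * (∑ k ∈ Finset.range M, Qx ^ k)) ≤ 11/2 * (3/(2*(γ-2))) :=
      mul_le_mul_of_nonneg_left hQS (by norm_num)
    have heq : (11:ℝ)/2 * (3/(2*(γ-2))) = 33/(4*(γ-2)) := by
      have : (γ:ℝ) - 2 ≠ 0 := by linarith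
      field_simp
      ring
    rw [heq] at h2'
    linarith [h2']
  have hEsum : ∑ k ∈ Finset.range (2*N+1), E k ≤ 8 * Real.sqrt 2 * (γ/(γ-2)) := by
    rw [hsum]
    have hs : (141:ℝ)/100 ≤ Real.sqrt 2 := by
      nlinarith [Real.sq_sqrt (show (0:ℝ) ≤ 2 by norm_num), Real.sqrt_nonneg 2]
    have hkey : (157:ℝ)/10 * (γ-2) + 33/2 ≤ 8 * Real.sqrt 2 * γ := by
      have hmul : (141:ℝ)/100 * γ ≤ Real.sqrt 2 * γ :=
        mul_le_mul_of_nonneg_right hs (by linarith)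
      linarith [hmul, hγ']
    calc 7/2 + 2 * (∑ n ∈ Finset.range N, v n)
        ≤ 7/2 + 2*(61/10 + 33/(4*(γ-2))) := by linarith [hSv]
      _ = ((157:ℝ)/10 * (γ-2) + 33/2)/(γ-2) := by
          field_simp
          ring
      _ ≤ (8 * Real.sqrt 2 * γ)/(γ-2) := by gcongr
      _ = 8 * Real.sqrt 2 * (γ/(γ-2)) := by ring
  calc |φ (p (2*N+1)) - φ (p 0)|
      ≤ ∑ k ∈ Finset.range (2*N+1), |φ (p (k+1)) - φ (p k)| := htel
    _ ≤ ∑ k ∈ Finset.range (2*N+1), E k * B ^ ((1:ℝ)/4) := Finset.sum_le_sum hstep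
    _ = (∑ k ∈ Finset.range (2*N+1), E k) * B ^ ((1:ℝ)/4) := (Finset.sum_mul _ _ _).symm
    _ ≤ 8 * Real.sqrt 2 * (γ/(γ-2)) * B ^ ((1:ℝ)/4) :=
        mul_le_mul_of_nonneg_right hEsum hBqnn
end

section
/- There exists a constant C > 0 such that for every n ≥ 2, ∑_T ∏_{i=1}^n deg_T(i)^{deg_T(i)} ≤ C^n · (n−2)!, where the sum ranges over all trees T on the vertex set {1,…,n}. -/
/-!
Statement 13: there is a constant `C > 0` such that for every `n ≥ 2`,
`∑_T ∏_{i=1}^n deg_T(i)^{deg_T(i)} ≤ C^n (n−2)!`, the sum ranging over all trees `T` on the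
vertex set `{1,…,n}`.
-/

open scoped Classical

open Finset SimpleGraph


open Finset

def fibCard {N k : ℕ} (f : Fin N → Fin k) (i : Fin k) : ℕ :=
  (Finset.univ.filter fun x => f x = i).card

lemma sum_fibCard {N k : ℕ} (f : Fin N → Fin k) : ∑ i, fibCard f i = N := by
  classical
  have := Finset.card_eq_sum_card_fiberwise (f := f) (s := univ) (t := univ)
    (fun x _ => mem_univ _)
  simpa [fibCard] using this.symm

lemma fibCard_cons {N k : ℕ} (a : Fin k) (g : Fin N → Fin k) (i : Fin k) :
    fibCard (Fin.cons a g) i = fibCard g i + (if a = i then 1 else 0) := by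
  classical
  simp only [fibCard, Finset.card_filter]
  rw [Fin.sum_univ_succ]
  simp [Fin.cons_zero, Fin.cons_succ, add_comm]

lemma sum_prod_fib (N k : ℕ) :
    ∑ f : Fin N → Fin k, ∏ i, (fibCard f i).factorial = Nat.ascFactorial k N := by
  classical
  induction N with
  | zero => simp [fibCard, Nat.ascFactorial]
  | succ N ih =>
      have hequiv : ∀ p : Fin k × (Fin N → Fin k),
          (∏ i, (fibCard (Fin.cons p.1 p.2 : Fin (N+1) → Fin k) i).factorial)
            = (fibCard p.2 p.1 + 1) * ∏ i, (fibCard p.2 i).factorial := by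
        rintro ⟨a, g⟩
        have h1 : ∀ i, (fibCard (Fin.cons a g : Fin (N+1) → Fin k) i).factorial
            = (if a = i then (fibCard g i + 1) else 1) * (fibCard g i).factorial := by
          intro i
          rw [fibCard_cons]
          by_cases h : a = i <;> simp [h, Nat.factorial_succ]
        rw [Finset.prod_congr rfl fun i _ => h1 i, Finset.prod_mul_distrib,
          Finset.prod_ite_eq univ a (fun i => fibCard g i + 1)]
        simp
      have hsum : ∑ f : Fin (N+1) → Fin k, ∏ i, (fibCard f i).factorial
          = ∑ p : Fin k × (Fin N → Fin k), (fibCard p.2 p.1 + 1) * ∏ i, (fibCard p.2 i).factorial := by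
        rw [← Fintype.sum_equiv (Fin.consEquiv (fun _ : Fin (N+1) => Fin k))
          (fun p => (fibCard p.2 p.1 + 1) * ∏ i, (fibCard p.2 i).factorial)
          (fun f => ∏ i, (fibCard f i).factorial) (fun p => (hequiv p).symm)]
      rw [hsum, Fintype.sum_prod_type_right]
      have : ∀ g : Fin N → Fin k, ∑ a : Fin k, (fibCard g a + 1) * ∏ i, (fibCard g i).factorial
          = (k + N) * ∏ i, (fibCard g i).factorial := by
        intro g
        rw [← Finset.sum_mul]
        congr 1
        rw [Finset.sum_add_distrib, sum_fibCard]
        simp [add_comm]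
      rw [Finset.sum_congr rfl fun g _ => this g, ← Finset.mul_sum, ih, Nat.ascFactorial_succ]


open Finset Real

lemma ascFactorial_le (k : ℕ) : ∀ j, j ≤ k → Nat.ascFactorial k j ≤ (2 * k) ^ j := by
  intro j
  induction j with
  | zero => simp
  | succ j ih =>
      intro hj
      rw [Nat.ascFactorial_succ, pow_succ]
      have h1 : k + j ≤ 2 * k := by omega
      calc (k + j) * Nat.ascFactorial k j ≤ (2 * k) * ((2 * k) ^ j) :=
            Nat.mul_le_mul h1 (ih (by omega))
        _ = (2 * k) ^ j * (2 * k) := by ring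

lemma pow_self_le_exp_mul_factorial (m : ℕ) :
    (m : ℝ) ^ m ≤ Real.exp m * m.factorial := by
  have h := Real.sum_le_exp_of_nonneg (x := (m : ℝ)) (by positivity) (m + 1)
  have h2 : (m : ℝ) ^ m / m.factorial ≤ Real.exp m := by
    refine le_trans ?_ h
    refine Finset.single_le_sum (f := fun i => (m : ℝ) ^ i / i.factorial) ?_ ?_
    · intro i _; positivity
    · simp [Finset.mem_range]
  have hf : (0 : ℝ) < m.factorial := by positivity
  calc (m : ℝ) ^ m = ((m : ℝ) ^ m / m.factorial) * m.factorial := by field_simp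
    _ ≤ Real.exp m * m.factorial := by
        exact mul_le_mul_of_nonneg_right h2 hf.le

lemma succ_pow_succ_le (m : ℕ) :
    ((m + 1 : ℕ) : ℝ) ^ (m + 1) ≤ (2 * Real.exp 1) ^ (m + 1) * m.factorial := by
  have h1 : ((m + 1 : ℕ) : ℝ) ^ (m + 1) ≤ Real.exp (m + 1) * (m + 1).factorial :=
    by exact_mod_cast pow_self_le_exp_mul_factorial (m + 1)
  have h2 : ((m + 1).factorial : ℝ) = (m + 1) * m.factorial := by
    rw [Nat.factorial_succ]; push_cast; ring
  have h3 : ((m : ℝ) + 1) ≤ 2 ^ (m + 1) := by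
    exact_mod_cast (Nat.lt_two_pow_self (n := m + 1)).le
  have h4 : Real.exp ((m : ℝ) + 1) = Real.exp 1 ^ (m + 1) := by
    rw [← Real.exp_nat_mul]; norm_num
  calc ((m + 1 : ℕ) : ℝ) ^ (m + 1) ≤ Real.exp (m + 1) * ((m + 1) * m.factorial) := by
        rw [← h2]; exact_mod_cast h1
    _ ≤ Real.exp 1 ^ (m + 1) * (2 ^ (m + 1) * m.factorial) := by
        push_cast
        rw [h4]
        refine mul_le_mul_of_nonneg_left ?_ (by positivity)
        exact mul_le_mul_of_nonneg_right h3 (by positivity)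
    _ = (2 * Real.exp 1) ^ (m + 1) * m.factorial := by rw [mul_pow]; ring

lemma pow_self_mono {d D : ℕ} (h : d ≤ D) : (d : ℝ) ^ d ≤ (D : ℝ) ^ D := by
  rcases Nat.eq_zero_or_pos d with rfl | hd
  · simp
    rcases Nat.eq_zero_or_pos D with rfl | hD
    · simp
    · exact one_le_pow₀ (by exact_mod_cast hD)
  · have h1 : (d : ℝ) ^ d ≤ (D : ℝ) ^ d :=
      pow_le_pow_left₀ (by positivity) (by exact_mod_cast h) d
    have h2 : (D : ℝ) ^ d ≤ (D : ℝ) ^ D :=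
      pow_le_pow_right₀ (by exact_mod_cast hd.trans_le h) h
    exact h1.trans h2



variable {m : ℕ}

noncomputable def pmap (T : SimpleGraph (Fin (m + 2))) (v : Fin (m + 2)) : Fin (m + 2) :=
  if h : ∃ p : T.Walk v 0, p.IsPath then h.choose.getVert 1 else v

lemma pmap_eq {T : SimpleGraph (Fin (m + 2))} (hT : T.IsTree) {v : Fin (m + 2)}
    (q : T.Walk v 0) (hq : q.IsPath) : pmap T v = q.getVert 1 := by
  have hex : ∃ p : T.Walk v 0, p.IsPath := ⟨q, hq⟩
  rw [pmap, dif_pos hex]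
  have := (hT.existsUnique_path v 0).unique hex.choose_spec hq
  rw [this]

lemma pmap_zero {T : SimpleGraph (Fin (m + 2))} (hT : T.IsTree) : pmap T 0 = 0 := by
  have := pmap_eq hT (Walk.nil : T.Walk 0 0) Walk.IsPath.nil
  simpa using this

lemma pmap_adj {T : SimpleGraph (Fin (m + 2))} (hT : T.IsTree) {v : Fin (m + 2)}
    (hv : v ≠ 0) : T.Adj v (pmap T v) := by
  obtain ⟨p, hp, -⟩ := hT.existsUnique_path v 0
  rw [pmap_eq hT p hp]
  have hlen : 0 < p.length := by
    rcases Nat.eq_zero_or_pos p.length with h | h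
    · exact absurd (Walk.eq_of_length_eq_zero h) hv
    · exact h
  have := p.adj_getVert_succ hlen
  simpa using this

lemma pmap_edge {T : SimpleGraph (Fin (m + 2))} (hT : T.IsTree) {a b : Fin (m + 2)}
    (hab : T.Adj a b) : pmap T a = b ∨ pmap T b = a := by
  classical
  obtain ⟨pb, hpb, -⟩ := hT.existsUnique_path b 0
  by_cases ha : a ∈ pb.support
  · right
    have hr : pb.takeUntil a ha = Walk.cons hab.symm Walk.nil := by
      refine (hT.existsUnique_path b a).unique (hpb.takeUntil ha) ?_
      exact Walk.IsPath.nil.cons (by simp [hab.ne'])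
    have hpb' : pb = Walk.cons hab.symm (pb.dropUntil a ha) := by
      conv_lhs => rw [← pb.take_spec ha]
      rw [hr]
      simp
    rw [pmap_eq hT pb hpb, hpb']
    simp [Walk.getVert_cons_succ]
  · left
    have hq : (Walk.cons hab pb).IsPath := hpb.cons ha
    rw [pmap_eq hT (Walk.cons hab pb) hq]
    simp [Walk.getVert_cons_succ]

lemma adj_iff_pmap {T : SimpleGraph (Fin (m + 2))} (hT : T.IsTree) (a b : Fin (m + 2)) :
    T.Adj a b ↔ (a ≠ 0 ∧ pmap T a = b) ∨ (b ≠ 0 ∧ pmap T b = a) := by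
  constructor
  · intro hab
    rcases pmap_edge hT hab with h | h
    · left
      refine ⟨?_, h⟩
      rintro rfl
      rw [pmap_zero hT] at h
      exact hab.ne h
    · right
      refine ⟨?_, h⟩
      rintro rfl
      rw [pmap_zero hT] at h
      exact hab.ne' h
  · rintro (⟨ha, h⟩ | ⟨hb, h⟩)
    · exact h ▸ pmap_adj hT ha
    · exact (h ▸ pmap_adj hT hb).symm

lemma pmap_injOn : Set.InjOn (pmap (m := m))
    {T : SimpleGraph (Fin (m + 2)) | T.IsTree} := by
  intro T hT T' hT' h
  ext a b
  rw [adj_iff_pmap hT, adj_iff_pmap hT', h]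

lemma neighbor_le {T : SimpleGraph (Fin (m + 2))} (hT : T.IsTree) (i : Fin (m + 2)) :
    (T.neighborSet i).ncard ≤ (Finset.univ.filter fun b => pmap T b = i).card + 1 := by
  classical
  have hsub : T.neighborSet i ⊆ insert (pmap T i) {b | pmap T b = i} := by
    intro b hb
    rcases (adj_iff_pmap hT i b).mp hb with ⟨-, h⟩ | ⟨-, h⟩
    · exact Set.mem_insert_iff.mpr (Or.inl h.symm)
    · exact Set.mem_insert_iff.mpr (Or.inr h)
  have hfin : ({b | pmap T b = i} : Set (Fin (m + 2))).Finite := Set.toFinite _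
  calc (T.neighborSet i).ncard ≤ (insert (pmap T i) {b | pmap T b = i}).ncard :=
        Set.ncard_le_ncard hsub (hfin.insert _)
    _ ≤ {b : Fin (m + 2) | pmap T b = i}.ncard + 1 := Set.ncard_insert_le _ _
    _ = (Finset.univ.filter fun b => pmap T b = i).card + 1 := by
        congr 1
        rw [← Set.ncard_coe_finset]
        congr 1
        ext b
        simp

lemma exp_nat_eq (j : ℕ) : Real.exp j = Real.exp 1 ^ j := by
  rw [← Real.exp_nat_mul]; norm_num

theorem sum_over_trees_degree_bound :
    ∃ C : ℝ, 0 < C ∧ ∀ n : ℕ, 2 ≤ n →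
      ∑ T ∈ Finset.univ.filter (fun T : SimpleGraph (Fin n) => T.IsTree),
          ∏ i : Fin n, ((T.neighborSet i).ncard : ℝ) ^ (T.neighborSet i).ncard ≤
        C ^ n * Nat.factorial (n - 2) := by
  refine ⟨1000, by norm_num, ?_⟩
  intro n hn
  obtain ⟨m, rfl⟩ : ∃ m, n = m + 2 := ⟨n - 2, by omega⟩
  have hsub : m + 2 - 2 = m := by omega
  rw [hsub]
  set E := Real.exp 1 with hE
  have hEpos : (0 : ℝ) < E := Real.exp_pos 1
  set g : (Fin (m + 2) → Fin (m + 2)) → ℝ :=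
    fun f => ∏ i, ((fibCard f i + 1 : ℕ) : ℝ) ^ (fibCard f i + 1) with hg
  have hgnonneg : ∀ f, 0 ≤ g f := fun f => Finset.prod_nonneg fun i _ => by positivity
  set trees := Finset.univ.filter (fun T : SimpleGraph (Fin (m + 2)) => T.IsTree) with htrees
  -- step 1
  have step1 : ∀ T ∈ trees, (∏ i : Fin (m + 2),
      ((T.neighborSet i).ncard : ℝ) ^ (T.neighborSet i).ncard) ≤ g (pmap T) := by
    intro T hT
    have hT' : T.IsTree := (Finset.mem_filter.mp hT).2
    refine Finset.prod_le_prod (fun i _ => by positivity) (fun i _ => ?_)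
    exact pow_self_mono (neighbor_le hT' i)
  have step2 : ∑ T ∈ trees, g (pmap T) = ∑ f ∈ trees.image pmap, g f := by
    rw [Finset.sum_image]
    intro x hx y hy hxy
    exact pmap_injOn (Finset.mem_filter.mp hx).2 (Finset.mem_filter.mp hy).2 hxy
  have step3 : ∑ f ∈ trees.image pmap, g f ≤ ∑ f : Fin (m + 2) → Fin (m + 2), g f :=
    Finset.sum_le_sum_of_subset_of_nonneg (Finset.subset_univ _)
      (fun f _ _ => hgnonneg f)
  -- step 4
  have step4 : ∀ f : Fin (m + 2) → Fin (m + 2),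
      g f ≤ (2 * E) ^ (2 * (m + 2)) * ∏ i, ((fibCard f i).factorial : ℝ) := by
    intro f
    have h1 : g f ≤ ∏ i, ((2 * E) ^ (fibCard f i + 1) * ((fibCard f i).factorial : ℝ)) :=
      Finset.prod_le_prod (fun i _ => by positivity) (fun i _ => succ_pow_succ_le _)
    have h2 : ∏ i : Fin (m + 2), (2 * E) ^ (fibCard f i + 1)
        = (2 * E) ^ (2 * (m + 2)) := by
      rw [Finset.prod_pow_eq_pow_sum]
      congr 1
      rw [Finset.sum_add_distrib, sum_fibCard]
      simp [Finset.card_univ]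
      ring
    calc g f ≤ _ := h1
      _ = (∏ i : Fin (m + 2), (2 * E) ^ (fibCard f i + 1)) *
            ∏ i, ((fibCard f i).factorial : ℝ) := Finset.prod_mul_distrib
      _ = (2 * E) ^ (2 * (m + 2)) * ∏ i, ((fibCard f i).factorial : ℝ) := by rw [h2]
  have step5 : ∑ f : Fin (m + 2) → Fin (m + 2), ∏ i, ((fibCard f i).factorial : ℝ)
      = ((Nat.ascFactorial (m + 2) (m + 2) : ℕ) : ℝ) := by
    rw [← sum_prod_fib (m + 2) (m + 2)]
    push_cast
    rfl
  have step45 : ∑ f : Fin (m + 2) → Fin (m + 2), g f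
      ≤ (2 * E) ^ (2 * (m + 2)) * ((2 * (m + 2) : ℕ) : ℝ) ^ (m + 2) := by
    calc ∑ f : Fin (m + 2) → Fin (m + 2), g f
        ≤ ∑ f : Fin (m + 2) → Fin (m + 2),
            (2 * E) ^ (2 * (m + 2)) * ∏ i, ((fibCard f i).factorial : ℝ) :=
          Finset.sum_le_sum fun f _ => step4 f
      _ = (2 * E) ^ (2 * (m + 2)) *
            ∑ f : Fin (m + 2) → Fin (m + 2), ∏ i, ((fibCard f i).factorial : ℝ) := by
          rw [Finset.mul_sum]
      _ ≤ (2 * E) ^ (2 * (m + 2)) * ((2 * (m + 2) : ℕ) : ℝ) ^ (m + 2) := by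
          rw [step5]
          refine mul_le_mul_of_nonneg_left ?_ (by positivity)
          have := ascFactorial_le (m + 2) (m + 2) le_rfl
          exact_mod_cast this
  -- final numeric bound
  have final : (2 * E) ^ (2 * (m + 2)) * ((2 * (m + 2) : ℕ) : ℝ) ^ (m + 2)
      ≤ 1000 ^ (m + 2) * (Nat.factorial m : ℝ) := by
    set n' := m + 2
    have hfac : ((n').factorial : ℝ) = ((n' : ℝ)) * ((m + 1 : ℕ) : ℝ) * (Nat.factorial m : ℝ) := by
      show ((Nat.factorial (m + 2) : ℕ) : ℝ) = _
      rw [Nat.factorial_succ, Nat.factorial_succ]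
      push_cast
      simp only [n']
      push_cast
      ring
    have hnn : ((n' : ℕ) : ℝ) ^ n' ≤ E ^ n' * (Nat.factorial n' : ℝ) := by
      have := pow_self_le_exp_mul_factorial n'
      rwa [exp_nat_eq] at this
    have hsq : ((n' : ℝ)) * ((m + 1 : ℕ) : ℝ) ≤ 4 ^ n' := by
      have h1 : (n') * (m + 1) ≤ (n') * (n') := Nat.mul_le_mul_left _ (by omega)
      have h2 : n' < 2 ^ n' := Nat.lt_two_pow_self (n := n')
      have h3 : (n') * (n') ≤ 2 ^ n' * 2 ^ n' := Nat.mul_le_mul h2.le h2.le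
      have h4 : 2 ^ n' * 2 ^ n' = 4 ^ n' := by
        rw [← pow_add, show n' + n' = 2 * n' by ring, pow_mul]
        norm_num
      calc ((n' : ℝ)) * ((m + 1 : ℕ) : ℝ) ≤ ((4 : ℕ) ^ n' : ℕ) := by
            exact_mod_cast (h1.trans (h3.trans_eq h4))
        _ = 4 ^ n' := by push_cast; ring
    have hEcube : 32 * E ^ 3 ≤ 1000 := by
      have h : E ≤ 2.7182818286 := Real.exp_one_lt_d9.le
      have h3 : E ^ 3 ≤ (2.7182818286 : ℝ) ^ 3 := pow_le_pow_left₀ hEpos.le h 3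
      nlinarith
    calc (2 * E) ^ (2 * n') * ((2 * n' : ℕ) : ℝ) ^ n'
        = (4 * E ^ 2) ^ n' * (2 ^ n' * ((n' : ℕ) : ℝ) ^ n') := by
          have c1 : ((2 * n' : ℕ) : ℝ) = 2 * ((n' : ℕ) : ℝ) := by push_cast; ring
          have e1 : (2 * E) ^ (2 * n') = (4 * E ^ 2) ^ n' := by
            rw [pow_mul]
            congr 1
            ring
          have e2 : ((2 * n' : ℕ) : ℝ) ^ n' = 2 ^ n' * ((n' : ℕ) : ℝ) ^ n' := by
            rw [c1, mul_pow]
          rw [e1, e2]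
      _ ≤ (4 * E ^ 2) ^ n' * (2 ^ n' * (E ^ n' * (Nat.factorial n' : ℝ))) := by
          refine mul_le_mul_of_nonneg_left ?_ (by positivity)
          exact mul_le_mul_of_nonneg_left hnn (by positivity)
      _ = (4 * E ^ 2) ^ n' * (2 ^ n' * (E ^ n' *
            (((n' : ℝ)) * ((m + 1 : ℕ) : ℝ) * (Nat.factorial m : ℝ)))) := by rw [hfac]
      _ ≤ (4 * E ^ 2) ^ n' * (2 ^ n' * (E ^ n' * (4 ^ n' * (Nat.factorial m : ℝ)))) := by
          refine mul_le_mul_of_nonneg_left ?_ (by positivity)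
          refine mul_le_mul_of_nonneg_left ?_ (by positivity)
          refine mul_le_mul_of_nonneg_left ?_ (by positivity)
          exact mul_le_mul_of_nonneg_right hsq (by positivity)
      _ = (32 * E ^ 3) ^ n' * (Nat.factorial m : ℝ) := by
          have collapse : ∀ (a b c d F : ℝ) (k : ℕ),
              a ^ k * (b ^ k * (c ^ k * (d ^ k * F))) = (a * (b * (c * d))) ^ k * F := by
            intros a b c d F k
            rw [mul_pow, mul_pow, mul_pow]
            ring
          rw [collapse, show (4 * E ^ 2 * (2 * (E * 4)) : ℝ) = 32 * E ^ 3 by ring]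
      _ ≤ 1000 ^ n' * (Nat.factorial m : ℝ) := by
          refine mul_le_mul_of_nonneg_right ?_ (by positivity)
          exact pow_le_pow_left₀ (by positivity) hEcube n'
  calc ∑ T ∈ trees, ∏ i : Fin (m + 2),
        ((T.neighborSet i).ncard : ℝ) ^ (T.neighborSet i).ncard
      ≤ ∑ T ∈ trees, g (pmap T) := Finset.sum_le_sum step1
    _ = ∑ f ∈ trees.image pmap, g f := step2
    _ ≤ ∑ f : Fin (m + 2) → Fin (m + 2), g f := step3
    _ ≤ (2 * E) ^ (2 * (m + 2)) * ((2 * (m + 2) : ℕ) : ℝ) ^ (m + 2) := step45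
    _ ≤ 1000 ^ (m + 2) * (Nat.factorial m : ℝ) := final
end

section
/- Let d ≥ 2, C₀ > 0, β₀ > 0. Let f : ℝ×𝕋^d×ℝ^d → ℝ be continuously differentiable with |f(t,x,v)|, |∂_t f(t,x,v)|, |∇_x f(t,x,v)| ≤ C₀ e^{−(β₀/2)|v|²}, and suppose f solves the Boltzmann equation pointwise: ∂_t f(t,x,v₁) + v₁·∇_x f(t,x,v₁) = ∫_{ℝ^d}∫_{𝕊^{d−1}} ((v₁−v₂)·ω)₊ [f(t,x,v₁′) f(t,x,v₂′) − f(t,x,v₁) f(t,x,v₂)] dω dv₂. Let φ : 𝕋^d×ℝ^d → ℝ be continuously differentiable, bounded, with bounded gradient. Then for every (t,x,v₁) one has the identity Σ_t φ(x,v₁) = − f(t,x,v₁)·(𝓛*_t φ)(x,v₁) − 𝓛_t( f(t,·) φ )(x,v₁) + ∂_t f(t,x,v₁)·φ(x,v₁) + ∫_{ℝ^d}∫_{𝕊^{d−1}} ((v₁−v₂)·ω)₊ [f(t,x,v₁′) f(t,x,v₂′) − f(t,x,v₁) f(t,x,v₂)] φ(x,v₂) dω dv₂, with the operators Σ_t,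 𝓛*_t, 𝓛_t defined in the context. -/
/-!
Statement 17: pointwise identity relating the noise covariance operator `Σ_t`, the linearized
Boltzmann operators `𝓛_t`, `𝓛*_t`, and the collision operator, for a solution `f` of the
Boltzmann equation on `𝕋^d × ℝ^d`.  Functions on the torus `𝕋^d = ℝ^d/ℤ^d` are modeled as
`ℤ^d`-periodic functions on `ℝ^d`.
-/

open MeasureTheory Metric
open scoped RealInnerProductSpace ENNReal

/-- Velocity/position space `ℝ^d`. -/
abbrev Vel (d : ℕ) := EuclideanSpace ℝ (Fin d)

/-- The surface measure on the unit sphere `𝕊^{d−1} ⊂ ℝ^d`. -/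
noncomputable def sphereMeasure (d : ℕ) : Measure (sphere (0 : Vel d) 1) :=
  (volume : Measure (Vel d)).toSphere

/-- The measure `dω dv₂` over which collision integrals are taken. -/
noncomputable def collMeasure (d : ℕ) : Measure (Vel d × sphere (0 : Vel d) 1) :=
  (volume : Measure (Vel d)).prod (sphereMeasure d)

/-- Scattered velocity `v₁′ = v₁ − ((v₁−v₂)·ω) ω`. -/
noncomputable def vScat₁ {d : ℕ} (v₁ v₂ ω : Vel d) : Vel d := v₁ - ⟪v₁ - v₂, ω⟫ • ω

/-- Scattered velocity `v₂′ = v₂ + ((v₁−v₂)·ω) ω`. -/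
noncomputable def vScat₂ {d : ℕ} (v₁ v₂ ω : Vel d) : Vel d := v₂ + ⟪v₁ - v₂, ω⟫ • ω

/-- The vector of `ℝ^d` with integer coordinates `k`. -/
noncomputable def intVec (d : ℕ) (k : Fin d → ℤ) : Vel d :=
  (WithLp.equiv 2 (∀ _ : Fin d, ℝ)).symm fun i => (k i : ℝ)

/-- A function of `(x,v) ∈ ℝ^d × ℝ^d` is `ℤ^d`-periodic in `x` (i.e. lives on `𝕋^d × ℝ^d`). -/
def IsZdPeriodic {d : ℕ} (g : Vel d → Vel d → ℝ) : Prop :=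
  ∀ (k : Fin d → ℤ) (x v : Vel d), g (x + intVec d k) v = g x v

/-- `Δφ(x,v₁,v₂,ω) = φ(x,v₁′) + φ(x,v₂′) − φ(x,v₁) − φ(x,v₂)`. -/
noncomputable def deltaFn {d : ℕ} (φ : Vel d → Vel d → ℝ) (x v₁ v₂ ω : Vel d) : ℝ :=
  φ x (vScat₁ v₁ v₂ ω) + φ x (vScat₂ v₁ v₂ ω) - φ x v₁ - φ x v₂

/-- The covariance operator
`Σ φ(x,v₁) = −∫∫ ((v₁−v₂)·ω)₊ [g(x,v₁)g(x,v₂) + g(x,v₁′)g(x,v₂′)] Δφ dω dv₂`. -/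
noncomputable def sigmaOp {d : ℕ} (g φ : Vel d → Vel d → ℝ) (x v₁ : Vel d) : ℝ :=
  -∫ p, max ⟪v₁ - p.1, (p.2 : Vel d)⟫ 0 *
      (g x v₁ * g x p.1 +
        g x (vScat₁ v₁ p.1 (p.2 : Vel d)) * g x (vScat₂ v₁ p.1 (p.2 : Vel d))) *
      deltaFn φ x v₁ p.1 (p.2 : Vel d) ∂(collMeasure d)

/-- The adjoint linearized Boltzmann operator
`𝓛* φ(x,v₁) = v₁·∇_x φ(x,v₁) + ∫∫ ((v₁−v₂)·ω)₊ g(x,v₂) Δφ dω dv₂`. -/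
noncomputable def lStarOp {d : ℕ} (g φ : Vel d → Vel d → ℝ) (x v₁ : Vel d) : ℝ :=
  fderiv ℝ (fun y => φ y v₁) x v₁ +
    ∫ p, max ⟪v₁ - p.1, (p.2 : Vel d)⟫ 0 * g x p.1 *
      deltaFn φ x v₁ p.1 (p.2 : Vel d) ∂(collMeasure d)

/-- The linearized Boltzmann operator
`𝓛 h(x,v₁) = −v₁·∇_x h + ∫∫ ((v₁−v₂)·ω)₊ [g₂′h₁′ + g₁′h₂′ − g₁h₂ − g₂h₁] dω dv₂`. -/
noncomputable def lOp {d : ℕ} (g h : Vel d → Vel d → ℝ) (x v₁ : Vel d) : ℝ :=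
  -(fderiv ℝ (fun y => h y v₁) x v₁) +
    ∫ p, max ⟪v₁ - p.1, (p.2 : Vel d)⟫ 0 *
      (g x (vScat₂ v₁ p.1 (p.2 : Vel d)) * h x (vScat₁ v₁ p.1 (p.2 : Vel d)) +
        g x (vScat₁ v₁ p.1 (p.2 : Vel d)) * h x (vScat₂ v₁ p.1 (p.2 : Vel d)) -
        g x v₁ * h x p.1 - g x p.1 * h x v₁) ∂(collMeasure d)

/-- The Boltzmann collision operator
`Q(g)(x,v₁) = ∫∫ ((v₁−v₂)·ω)₊ [g(x,v₁′)g(x,v₂′) − g(x,v₁)g(x,v₂)] dω dv₂`. -/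
noncomputable def boltzColl {d : ℕ} (g : Vel d → Vel d → ℝ) (x v₁ : Vel d) : ℝ :=
  ∫ p, max ⟪v₁ - p.1, (p.2 : Vel d)⟫ 0 *
    (g x (vScat₁ v₁ p.1 (p.2 : Vel d)) * g x (vScat₂ v₁ p.1 (p.2 : Vel d)) -
      g x v₁ * g x p.1) ∂(collMeasure d)

/-- The recollision term `∫∫ ((v₁−v₂)·ω)₊ [g₁′g₂′ − g₁g₂] φ(x,v₂) dω dv₂`. -/
noncomputable def recollTerm {d : ℕ} (g φ : Vel d → Vel d → ℝ) (x v₁ : Vel d) : ℝ :=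
  ∫ p, max ⟪v₁ - p.1, (p.2 : Vel d)⟫ 0 *
    (g x (vScat₁ v₁ p.1 (p.2 : Vel d)) * g x (vScat₂ v₁ p.1 (p.2 : Vel d)) -
      g x v₁ * g x p.1) * φ x p.1 ∂(collMeasure d)


section Aux

/-- auxiliary -/
instance (d : ℕ) : IsFiniteMeasure (sphereMeasure d) := by
  unfold sphereMeasure; infer_instance

lemma energy_conservation {d : ℕ} (v₁ v₂ ω : Vel d) (hω : ‖ω‖ = 1) :
    ‖vScat₁ v₁ v₂ ω‖ ^ 2 + ‖vScat₂ v₁ v₂ ω‖ ^ 2 = ‖v₁‖ ^ 2 + ‖v₂‖ ^ 2 := by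
  have h1 : ‖vScat₁ v₁ v₂ ω‖ ^ 2 =
      ‖v₁‖ ^ 2 - 2 * ⟪v₁, (⟪v₁ - v₂, ω⟫ : ℝ) • ω⟫ + ‖(⟪v₁ - v₂, ω⟫ : ℝ) • ω‖ ^ 2 := by
    rw [vScat₁, norm_sub_sq_real]
  have h2 : ‖vScat₂ v₁ v₂ ω‖ ^ 2 =
      ‖v₂‖ ^ 2 + 2 * ⟪v₂, (⟪v₁ - v₂, ω⟫ : ℝ) • ω⟫ + ‖(⟪v₁ - v₂, ω⟫ : ℝ) • ω‖ ^ 2 := by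
    rw [vScat₂, norm_add_sq_real]
  have hsm : ‖(⟪v₁ - v₂, ω⟫ : ℝ) • ω‖ ^ 2 = ⟪v₁ - v₂, ω⟫ ^ 2 := by
    rw [norm_smul, mul_pow, hω, Real.norm_eq_abs, sq_abs, one_pow, mul_one]
  have hc : (⟪v₁ - v₂, ω⟫ : ℝ) = ⟪v₁, ω⟫ - ⟪v₂, ω⟫ := inner_sub_left _ _ _
  have ha : ⟪v₁, (⟪v₁ - v₂, ω⟫ : ℝ) • ω⟫ = ⟪v₁ - v₂, ω⟫ * ⟪v₁, ω⟫ := real_inner_smul_right _ _ _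
  have hb : ⟪v₂, (⟪v₁ - v₂, ω⟫ : ℝ) • ω⟫ = ⟪v₁ - v₂, ω⟫ * ⟪v₂, ω⟫ := real_inner_smul_right _ _ _
  rw [h1, h2, hsm, ha, hb, hc]; ring

lemma gauss_integrable (d : ℕ) {c : ℝ} (hc : 0 < c) :
    Integrable (fun v : Vel d => Real.exp (-c * ‖v‖ ^ 2)) (volume : Measure (Vel d)) := by
  have h := (GaussianFourier.integrable_cexp_neg_mul_sq_norm_add_of_euclideanSpace
      (ι := Fin d) (b := (c : ℂ)) (by simpa using hc) 0 (0 : Vel d)).norm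
  refine h.congr ?_
  refine Filter.Eventually.of_forall fun v => ?_
  simp only [Complex.norm_exp]
  norm_num
  left
  norm_cast

lemma aux_integrable {d : ℕ} (v₁ : Vel d) {β Cc : ℝ} (hβ : 0 < β) (hCc : 0 ≤ Cc)
    (G : Vel d × sphere (0 : Vel d) 1 → ℝ) (hGc : Continuous G)
    (hGb : ∀ p : Vel d × sphere (0 : Vel d) 1,
      |G p| ≤ Cc * ((‖v₁‖ + ‖p.1‖) * Real.exp (-β * ‖p.1‖ ^ 2))) :
    Integrable G (collMeasure d) := by
  have hβ2 : 0 < β / 2 := by linarith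
  have hgauss : Integrable (fun v : Vel d => Real.exp (-(β / 2) * ‖v‖ ^ 2)) volume :=
    gauss_integrable d hβ2
  have hdom : Integrable (fun p : Vel d × sphere (0 : Vel d) 1 =>
      (Cc * (‖v₁‖ + 1 + 2 / β)) * Real.exp (-(β / 2) * ‖p.1‖ ^ 2)) (collMeasure d) := by
    unfold collMeasure
    have h := ((hgauss.const_mul (Cc * (‖v₁‖ + 1 + 2 / β))).mul_prod
      (integrable_const (1 : ℝ) (μ := sphereMeasure d)))
    simpa using h
  refine hdom.mono' hGc.aestronglyMeasurable (Filter.Eventually.of_forall fun p => ?_)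
  rw [Real.norm_eq_abs]
  refine (hGb p).trans ?_
  set s := ‖p.1‖ with hs
  have hs0 : 0 ≤ s := norm_nonneg _
  have hA0 : 0 ≤ ‖v₁‖ := norm_nonneg _
  have e1 : Real.exp (-(β / 2) * s ^ 2) ≤ 1 := Real.exp_le_one_iff.2 (by nlinarith)
  have e2 : 0 < Real.exp (-(β / 2) * s ^ 2) := Real.exp_pos _
  have esplit : Real.exp (-β * s ^ 2) =
      Real.exp (-(β / 2) * s ^ 2) * Real.exp (-(β / 2) * s ^ 2) := by
    rw [← Real.exp_add]; ring_nf
  have hye : β / 2 * s ^ 2 ≤ Real.exp (β / 2 * s ^ 2) := by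
    have := Real.add_one_le_exp (β / 2 * s ^ 2); linarith
  have h3 : s ^ 2 * Real.exp (-(β / 2) * s ^ 2) ≤ 2 / β := by
    have hinv : Real.exp (β / 2 * s ^ 2) * Real.exp (-(β / 2) * s ^ 2) = 1 := by
      rw [← Real.exp_add]; ring_nf; exact Real.exp_zero
    have h4 : (β / 2 * s ^ 2) * Real.exp (-(β / 2) * s ^ 2) ≤ 1 := by
      calc (β / 2 * s ^ 2) * Real.exp (-(β / 2) * s ^ 2)
          ≤ Real.exp (β / 2 * s ^ 2) * Real.exp (-(β / 2) * s ^ 2) :=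
            mul_le_mul_of_nonneg_right hye e2.le
        _ = 1 := hinv
    have hrw : s ^ 2 * Real.exp (-(β / 2) * s ^ 2) =
        (2 / β) * ((β / 2 * s ^ 2) * Real.exp (-(β / 2) * s ^ 2)) := by
      field_simp
    rw [hrw]
    calc (2 / β) * ((β / 2 * s ^ 2) * Real.exp (-(β / 2) * s ^ 2))
        ≤ (2 / β) * 1 := mul_le_mul_of_nonneg_left h4 (by positivity)
      _ = 2 / β := mul_one _
  rw [esplit]
  have hsle : s ≤ s ^ 2 + 1 := by nlinarith
  set E := Real.exp (-(β / 2) * s ^ 2) with hE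
  have f1 : E * E ≤ 1 * E := mul_le_mul_of_nonneg_right e1 e2.le
  have f2 : s ^ 2 * E * E ≤ (2 / β) * E := mul_le_mul_of_nonneg_right h3 e2.le
  have f3 : ‖v₁‖ * (E * E) ≤ ‖v₁‖ * (1 * E) := mul_le_mul_of_nonneg_left f1 hA0
  have f4 : s * (E * E) ≤ (s ^ 2 + 1) * (E * E) :=
    mul_le_mul_of_nonneg_right hsle (mul_nonneg e2.le e2.le)
  have step : (‖v₁‖ + s) * (E * E) ≤ (‖v₁‖ + 1 + 2 / β) * E := by nlinarith [f1, f2, f3, f4]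
  calc Cc * ((‖v₁‖ + s) * (E * E)) ≤ Cc * ((‖v₁‖ + 1 + 2 / β) * E) :=
        mul_le_mul_of_nonneg_left step hCc
    _ = Cc * (‖v₁‖ + 1 + 2 / β) * E := by ring


end Aux

theorem covariance_operator_identity (d : ℕ) (hd : 2 ≤ d) (C₀ β₀ : ℝ)
    (hC₀ : 0 < C₀) (hβ₀ : 0 < β₀) (f : ℝ → Vel d → Vel d → ℝ)
    (hfper : ∀ t : ℝ, IsZdPeriodic (f t))
    (hfC1 : ContDiff ℝ 1 (fun q : ℝ × Vel d × Vel d => f q.1 q.2.1 q.2.2))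
    (hfbd : ∀ (t : ℝ) (x v : Vel d), |f t x v| ≤ C₀ * Real.exp (-(β₀ / 2) * ‖v‖ ^ 2))
    (hftbd : ∀ (t : ℝ) (x v : Vel d),
      |deriv (fun τ => f τ x v) t| ≤ C₀ * Real.exp (-(β₀ / 2) * ‖v‖ ^ 2))
    (hfxbd : ∀ (t : ℝ) (x v : Vel d),
      ‖fderiv ℝ (fun y => f t y v) x‖ ≤ C₀ * Real.exp (-(β₀ / 2) * ‖v‖ ^ 2))
    (hBoltz : ∀ (t : ℝ) (x v₁ : Vel d),
      deriv (fun τ => f τ x v₁) t + fderiv ℝ (fun y => f t y v₁) x v₁ =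
        boltzColl (f t) x v₁)
    (φ : Vel d → Vel d → ℝ) (hφper : IsZdPeriodic φ)
    (hφC1 : ContDiff ℝ 1 (fun q : Vel d × Vel d => φ q.1 q.2))
    (hφbd : ∃ M : ℝ, ∀ x v : Vel d,
      |φ x v| ≤ M ∧ ‖fderiv ℝ (fun q : Vel d × Vel d => φ q.1 q.2) (x, v)‖ ≤ M) :
    ∀ (t : ℝ) (x v₁ : Vel d),
      sigmaOp (f t) φ x v₁ =
        -(f t x v₁ * lStarOp (f t) φ x v₁) -
          lOp (f t) (fun y v => f t y v * φ y v) x v₁ +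
          deriv (fun τ => f τ x v₁) t * φ x v₁ +
          recollTerm (f t) φ x v₁ := by
  obtain ⟨M, hM⟩ := hφbd
  intro t x v₁
  have hM0 : 0 ≤ M := (abs_nonneg _).trans (hM x v₁).1
  -- continuity facts
  have hFc : Continuous (fun q : ℝ × Vel d × Vel d => f q.1 q.2.1 q.2.2) := hfC1.continuous
  have hgx : Continuous (fun v : Vel d => f t x v) := by
    have hc : Continuous (fun v : Vel d => ((t, x, v) : ℝ × Vel d × Vel d)) := by fun_prop
    exact hFc.comp hc
  have hφx : Continuous (fun v : Vel d => φ x v) := by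
    have hc : Continuous (fun v : Vel d => ((x, v) : Vel d × Vel d)) := by fun_prop
    exact hφC1.continuous.comp hc
  have hω : Continuous (fun p : Vel d × sphere (0 : Vel d) 1 => (p.2 : Vel d)) :=
    continuous_subtype_val.comp continuous_snd
  have hinner : Continuous (fun p : Vel d × sphere (0 : Vel d) 1 =>
      (⟪v₁ - p.1, (p.2 : Vel d)⟫ : ℝ)) :=
    Continuous.inner (continuous_const.sub continuous_fst) hω
  have hs1 : Continuous (fun p : Vel d × sphere (0 : Vel d) 1 =>
      vScat₁ v₁ p.1 (p.2 : Vel d)) := by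
    unfold vScat₁; exact continuous_const.sub (hinner.smul hω)
  have hs2 : Continuous (fun p : Vel d × sphere (0 : Vel d) 1 =>
      vScat₂ v₁ p.1 (p.2 : Vel d)) := by
    unfold vScat₂; exact continuous_fst.add (hinner.smul hω)
  have hKc : Continuous (fun p : Vel d × sphere (0 : Vel d) 1 =>
      max ⟪v₁ - p.1, (p.2 : Vel d)⟫ 0) := hinner.max continuous_const
  have hg1' : Continuous (fun p : Vel d × sphere (0 : Vel d) 1 =>
      f t x (vScat₁ v₁ p.1 (p.2 : Vel d))) := hgx.comp hs1
  have hg2' : Continuous (fun p : Vel d × sphere (0 : Vel d) 1 =>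
      f t x (vScat₂ v₁ p.1 (p.2 : Vel d))) := hgx.comp hs2
  have hφ1' : Continuous (fun p : Vel d × sphere (0 : Vel d) 1 =>
      φ x (vScat₁ v₁ p.1 (p.2 : Vel d))) := hφx.comp hs1
  have hφ2' : Continuous (fun p : Vel d × sphere (0 : Vel d) 1 =>
      φ x (vScat₂ v₁ p.1 (p.2 : Vel d))) := hφx.comp hs2
  have hg2 : Continuous (fun p : Vel d × sphere (0 : Vel d) 1 => f t x p.1) :=
    hgx.comp continuous_fst
  have hφ2 : Continuous (fun p : Vel d × sphere (0 : Vel d) 1 => φ x p.1) :=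
    hφx.comp continuous_fst
  have hΔc : Continuous (fun p : Vel d × sphere (0 : Vel d) 1 =>
      deltaFn φ x v₁ p.1 (p.2 : Vel d)) := by
    unfold deltaFn
    exact ((hφ1'.add hφ2').sub continuous_const).sub hφ2
  -- bound facts
  have hEpos : ∀ v : Vel d, 0 < Real.exp (-(β₀ / 2) * ‖v‖ ^ 2) := fun v => Real.exp_pos _
  have hE1 : ∀ v : Vel d, Real.exp (-(β₀ / 2) * ‖v‖ ^ 2) ≤ 1 := fun v =>
    Real.exp_le_one_iff.2 (by nlinarith [sq_nonneg ‖v‖])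
  have hgC : ∀ v : Vel d, |f t x v| ≤ C₀ := fun v =>
    (hfbd t x v).trans (by nlinarith [hE1 v, hEpos v])
  have hφM : ∀ v : Vel d, |φ x v| ≤ M := fun v => (hM x v).1
  have hprod : ∀ (v₂ : Vel d) (ω : sphere (0 : Vel d) 1),
      |f t x (vScat₁ v₁ v₂ (ω : Vel d)) * f t x (vScat₂ v₁ v₂ (ω : Vel d))| ≤
        C₀ ^ 2 * Real.exp (-(β₀ / 2) * ‖v₂‖ ^ 2) := by
    intro v₂ ω
    have h1 := hfbd t x (vScat₁ v₁ v₂ (ω : Vel d))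
    have h2 := hfbd t x (vScat₂ v₁ v₂ (ω : Vel d))
    have hen := energy_conservation v₁ v₂ (ω : Vel d) (norm_eq_of_mem_sphere ω)
    rw [abs_mul]
    calc |f t x (vScat₁ v₁ v₂ (ω : Vel d))| * |f t x (vScat₂ v₁ v₂ (ω : Vel d))| ≤
        (C₀ * Real.exp (-(β₀ / 2) * ‖vScat₁ v₁ v₂ (ω : Vel d)‖ ^ 2)) *
          (C₀ * Real.exp (-(β₀ / 2) * ‖vScat₂ v₁ v₂ (ω : Vel d)‖ ^ 2)) :=
          mul_le_mul h1 h2 (abs_nonneg _) (by positivity)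
      _ = C₀ ^ 2 * Real.exp (-(β₀ / 2) * ‖vScat₁ v₁ v₂ (ω : Vel d)‖ ^ 2 +
            -(β₀ / 2) * ‖vScat₂ v₁ v₂ (ω : Vel d)‖ ^ 2) := by rw [Real.exp_add]; ring
      _ ≤ C₀ ^ 2 * Real.exp (-(β₀ / 2) * ‖v₂‖ ^ 2) := by
          refine mul_le_mul_of_nonneg_left (Real.exp_le_exp.2 ?_) (by positivity)
          nlinarith [sq_nonneg ‖v₁‖]
  have hprod2 : ∀ v₂ : Vel d, |f t x v₁ * f t x v₂| ≤
      C₀ ^ 2 * Real.exp (-(β₀ / 2) * ‖v₂‖ ^ 2) := by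
    intro v₂
    rw [abs_mul]
    calc |f t x v₁| * |f t x v₂| ≤ C₀ * (C₀ * Real.exp (-(β₀ / 2) * ‖v₂‖ ^ 2)) :=
        mul_le_mul (hgC v₁) (hfbd t x v₂) (abs_nonneg _) (by positivity)
      _ = C₀ ^ 2 * Real.exp (-(β₀ / 2) * ‖v₂‖ ^ 2) := by ring
  have hKb : ∀ p : Vel d × sphere (0 : Vel d) 1,
      |max ⟪v₁ - p.1, (p.2 : Vel d)⟫ 0| ≤ ‖v₁‖ + ‖p.1‖ := by
    intro p
    rw [abs_of_nonneg (le_max_right _ _)]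
    refine max_le ?_ (by positivity)
    calc ⟪v₁ - p.1, (p.2 : Vel d)⟫ ≤ ‖v₁ - p.1‖ * ‖(p.2 : Vel d)‖ := real_inner_le_norm _ _
      _ = ‖v₁ - p.1‖ := by rw [norm_eq_of_mem_sphere]; ring
      _ ≤ ‖v₁‖ + ‖p.1‖ := norm_sub_le _ _
  have hΔb : ∀ (v₂ ω : Vel d), |deltaFn φ x v₁ v₂ ω| ≤ 4 * M := by
    intro v₂ ω
    have l1 := abs_le.1 (hφM (vScat₁ v₁ v₂ ω))
    have l2 := abs_le.1 (hφM (vScat₂ v₁ v₂ ω))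
    have l3 := abs_le.1 (hφM v₁)
    have l4 := abs_le.1 (hφM v₂)
    unfold deltaFn
    exact abs_le.2 ⟨by linarith [l1.1, l2.1, l3.2, l4.2], by linarith [l1.2, l2.2, l3.1, l4.1]⟩
  set Cc : ℝ := 4 * (M + 1) * (C₀ + 1) ^ 2 with hCcdef
  have hCc0 : 0 ≤ Cc := by positivity
  have hcst : ∀ c : ℝ, c ≤ 4 * M * C₀ ^ 2 → c ≤ Cc := by
    intro c hc; rw [hCcdef]; nlinarith [sq_nonneg C₀, hC₀.le]
  have hβ2 : (0 : ℝ) < β₀ / 2 := by linarith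
  -- integrability of the four integrands
  have hint1 : Integrable (fun p : Vel d × sphere (0 : Vel d) 1 =>
      max ⟪v₁ - p.1, (p.2 : Vel d)⟫ 0 *
        (f t x (vScat₁ v₁ p.1 (p.2 : Vel d)) * f t x (vScat₂ v₁ p.1 (p.2 : Vel d)) -
          f t x v₁ * f t x p.1) * φ x v₁) (collMeasure d) := by
    refine aux_integrable v₁ hβ2 hCc0 _ (((hKc.mul ((hg1'.mul hg2').sub
      (continuous_const.mul hg2))).mul continuous_const)) fun p => ?_
    rw [abs_mul, abs_mul]
    have hS : |f t x (vScat₁ v₁ p.1 (p.2 : Vel d)) * f t x (vScat₂ v₁ p.1 (p.2 : Vel d)) -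
        f t x v₁ * f t x p.1| ≤ 2 * C₀ ^ 2 * Real.exp (-(β₀ / 2) * ‖p.1‖ ^ 2) := by
      have a1 := hprod p.1 p.2
      have a2 := hprod2 p.1
      calc _ ≤ |f t x (vScat₁ v₁ p.1 (p.2 : Vel d)) * f t x (vScat₂ v₁ p.1 (p.2 : Vel d))| +
            |f t x v₁ * f t x p.1| := abs_sub _ _
        _ ≤ 2 * C₀ ^ 2 * Real.exp (-(β₀ / 2) * ‖p.1‖ ^ 2) := by linarith
    refine le_trans (mul_le_mul (mul_le_mul (hKb p) hS (abs_nonneg _) (by positivity))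
      (hφM v₁) (abs_nonneg _) (by positivity)) ?_
    have hrw : (‖v₁‖ + ‖p.1‖) * (2 * C₀ ^ 2 * Real.exp (-(β₀ / 2) * ‖p.1‖ ^ 2)) * M =
        ((‖v₁‖ + ‖p.1‖) * Real.exp (-(β₀ / 2) * ‖p.1‖ ^ 2)) * (2 * C₀ ^ 2 * M) := by ring
    rw [hrw]
    refine le_trans (mul_le_mul_of_nonneg_left (hcst _ (by nlinarith [sq_nonneg C₀]))
      (by positivity)) (le_of_eq (by ring))
  have hint2 : Integrable (fun p : Vel d × sphere (0 : Vel d) 1 =>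
      f t x v₁ * (max ⟪v₁ - p.1, (p.2 : Vel d)⟫ 0 * f t x p.1 *
        deltaFn φ x v₁ p.1 (p.2 : Vel d))) (collMeasure d) := by
    refine aux_integrable v₁ hβ2 hCc0 _
      (continuous_const.mul ((hKc.mul hg2).mul hΔc)) fun p => ?_
    rw [abs_mul, abs_mul, abs_mul]
    have step : |f t x v₁| * (|max ⟪v₁ - p.1, (p.2 : Vel d)⟫ 0| * |f t x p.1| *
          |deltaFn φ x v₁ p.1 (p.2 : Vel d)|) ≤
        C₀ * ((‖v₁‖ + ‖p.1‖) * (C₀ * Real.exp (-(β₀ / 2) * ‖p.1‖ ^ 2)) * (4 * M)) := by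
      refine mul_le_mul (hgC v₁) ?_ (by positivity) hC₀.le
      exact mul_le_mul (mul_le_mul (hKb p) (hfbd t x p.1) (abs_nonneg _) (by positivity))
        (hΔb p.1 (p.2 : Vel d)) (abs_nonneg _) (by positivity)
    refine step.trans ?_
    have hrw : C₀ * ((‖v₁‖ + ‖p.1‖) * (C₀ * Real.exp (-(β₀ / 2) * ‖p.1‖ ^ 2)) * (4 * M)) =
        ((‖v₁‖ + ‖p.1‖) * Real.exp (-(β₀ / 2) * ‖p.1‖ ^ 2)) * (4 * M * C₀ ^ 2) := by ring
    rw [hrw]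
    refine le_trans (mul_le_mul_of_nonneg_left (hcst _ le_rfl) (by positivity))
      (le_of_eq (by ring))
  have hint3 : Integrable (fun p : Vel d × sphere (0 : Vel d) 1 =>
      max ⟪v₁ - p.1, (p.2 : Vel d)⟫ 0 *
        (f t x (vScat₂ v₁ p.1 (p.2 : Vel d)) *
            (f t x (vScat₁ v₁ p.1 (p.2 : Vel d)) * φ x (vScat₁ v₁ p.1 (p.2 : Vel d))) +
          f t x (vScat₁ v₁ p.1 (p.2 : Vel d)) *
            (f t x (vScat₂ v₁ p.1 (p.2 : Vel d)) * φ x (vScat₂ v₁ p.1 (p.2 : Vel d))) -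
          f t x v₁ * (f t x p.1 * φ x p.1) -
          f t x p.1 * (f t x v₁ * φ x v₁))) (collMeasure d) := by
    refine aux_integrable v₁ hβ2 hCc0 _ (hKc.mul ((((hg2'.mul (hg1'.mul hφ1')).add
      (hg1'.mul (hg2'.mul hφ2'))).sub (continuous_const.mul (hg2.mul hφ2))).sub
      (hg2.mul (continuous_const.mul continuous_const)))) fun p => ?_
    rw [abs_mul]
    have e := Real.exp_pos (-(β₀ / 2) * ‖p.1‖ ^ 2)
    have t1 : |f t x (vScat₂ v₁ p.1 (p.2 : Vel d)) *
        (f t x (vScat₁ v₁ p.1 (p.2 : Vel d)) * φ x (vScat₁ v₁ p.1 (p.2 : Vel d)))| ≤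
        C₀ ^ 2 * Real.exp (-(β₀ / 2) * ‖p.1‖ ^ 2) * M := by
      have : f t x (vScat₂ v₁ p.1 (p.2 : Vel d)) *
          (f t x (vScat₁ v₁ p.1 (p.2 : Vel d)) * φ x (vScat₁ v₁ p.1 (p.2 : Vel d))) =
          (f t x (vScat₁ v₁ p.1 (p.2 : Vel d)) * f t x (vScat₂ v₁ p.1 (p.2 : Vel d))) *
            φ x (vScat₁ v₁ p.1 (p.2 : Vel d)) := by ring
      rw [this, abs_mul]
      exact mul_le_mul (hprod p.1 p.2) (hφM _) (abs_nonneg _) (by positivity)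
    have t2 : |f t x (vScat₁ v₁ p.1 (p.2 : Vel d)) *
        (f t x (vScat₂ v₁ p.1 (p.2 : Vel d)) * φ x (vScat₂ v₁ p.1 (p.2 : Vel d)))| ≤
        C₀ ^ 2 * Real.exp (-(β₀ / 2) * ‖p.1‖ ^ 2) * M := by
      have : f t x (vScat₁ v₁ p.1 (p.2 : Vel d)) *
          (f t x (vScat₂ v₁ p.1 (p.2 : Vel d)) * φ x (vScat₂ v₁ p.1 (p.2 : Vel d))) =
          (f t x (vScat₁ v₁ p.1 (p.2 : Vel d)) * f t x (vScat₂ v₁ p.1 (p.2 : Vel d))) *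
            φ x (vScat₂ v₁ p.1 (p.2 : Vel d)) := by ring
      rw [this, abs_mul]
      exact mul_le_mul (hprod p.1 p.2) (hφM _) (abs_nonneg _) (by positivity)
    have t3 : |f t x v₁ * (f t x p.1 * φ x p.1)| ≤
        C₀ ^ 2 * Real.exp (-(β₀ / 2) * ‖p.1‖ ^ 2) * M := by
      have : f t x v₁ * (f t x p.1 * φ x p.1) = (f t x v₁ * f t x p.1) * φ x p.1 := by ring
      rw [this, abs_mul]
      exact mul_le_mul (hprod2 p.1) (hφM _) (abs_nonneg _) (by positivity)
    have t4 : |f t x p.1 * (f t x v₁ * φ x v₁)| ≤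
        C₀ ^ 2 * Real.exp (-(β₀ / 2) * ‖p.1‖ ^ 2) * M := by
      have : f t x p.1 * (f t x v₁ * φ x v₁) = (f t x v₁ * f t x p.1) * φ x v₁ := by ring
      rw [this, abs_mul]
      exact mul_le_mul (hprod2 p.1) (hφM _) (abs_nonneg _) (by positivity)
    have hS : |f t x (vScat₂ v₁ p.1 (p.2 : Vel d)) *
          (f t x (vScat₁ v₁ p.1 (p.2 : Vel d)) * φ x (vScat₁ v₁ p.1 (p.2 : Vel d))) +
        f t x (vScat₁ v₁ p.1 (p.2 : Vel d)) *
          (f t x (vScat₂ v₁ p.1 (p.2 : Vel d)) * φ x (vScat₂ v₁ p.1 (p.2 : Vel d))) -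
        f t x v₁ * (f t x p.1 * φ x p.1) -
        f t x p.1 * (f t x v₁ * φ x v₁)| ≤
        4 * M * C₀ ^ 2 * Real.exp (-(β₀ / 2) * ‖p.1‖ ^ 2) := by
      have a1 := abs_le.1 t1
      have a2 := abs_le.1 t2
      have a3 := abs_le.1 t3
      have a4 := abs_le.1 t4
      have b1 := le_abs_self (f t x (vScat₂ v₁ p.1 (p.2 : Vel d)) *
        (f t x (vScat₁ v₁ p.1 (p.2 : Vel d)) * φ x (vScat₁ v₁ p.1 (p.2 : Vel d))))
      have b1' := neg_abs_le (f t x (vScat₂ v₁ p.1 (p.2 : Vel d)) *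
        (f t x (vScat₁ v₁ p.1 (p.2 : Vel d)) * φ x (vScat₁ v₁ p.1 (p.2 : Vel d))))
      have b2 := le_abs_self (f t x (vScat₁ v₁ p.1 (p.2 : Vel d)) *
        (f t x (vScat₂ v₁ p.1 (p.2 : Vel d)) * φ x (vScat₂ v₁ p.1 (p.2 : Vel d))))
      have b2' := neg_abs_le (f t x (vScat₁ v₁ p.1 (p.2 : Vel d)) *
        (f t x (vScat₂ v₁ p.1 (p.2 : Vel d)) * φ x (vScat₂ v₁ p.1 (p.2 : Vel d))))
      have b3 := le_abs_self (f t x v₁ * (f t x p.1 * φ x p.1))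
      have b3' := neg_abs_le (f t x v₁ * (f t x p.1 * φ x p.1))
      have b4 := le_abs_self (f t x p.1 * (f t x v₁ * φ x v₁))
      have b4' := neg_abs_le (f t x p.1 * (f t x v₁ * φ x v₁))
      exact abs_le.2 ⟨by linarith, by linarith⟩
    refine le_trans (mul_le_mul (hKb p) hS (abs_nonneg _) (by positivity)) ?_
    have hrw : (‖v₁‖ + ‖p.1‖) * (4 * M * C₀ ^ 2 * Real.exp (-(β₀ / 2) * ‖p.1‖ ^ 2)) =
        ((‖v₁‖ + ‖p.1‖) * Real.exp (-(β₀ / 2) * ‖p.1‖ ^ 2)) * (4 * M * C₀ ^ 2) := by ring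
    rw [hrw]
    refine le_trans (mul_le_mul_of_nonneg_left (hcst _ le_rfl) (by positivity))
      (le_of_eq (by ring))
  have hint4 : Integrable (fun p : Vel d × sphere (0 : Vel d) 1 =>
      max ⟪v₁ - p.1, (p.2 : Vel d)⟫ 0 *
        (f t x (vScat₁ v₁ p.1 (p.2 : Vel d)) * f t x (vScat₂ v₁ p.1 (p.2 : Vel d)) -
          f t x v₁ * f t x p.1) * φ x p.1) (collMeasure d) := by
    refine aux_integrable v₁ hβ2 hCc0 _ (((hKc.mul ((hg1'.mul hg2').sub
      (continuous_const.mul hg2))).mul hφ2)) fun p => ?_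
    rw [abs_mul, abs_mul]
    have hS : |f t x (vScat₁ v₁ p.1 (p.2 : Vel d)) * f t x (vScat₂ v₁ p.1 (p.2 : Vel d)) -
        f t x v₁ * f t x p.1| ≤ 2 * C₀ ^ 2 * Real.exp (-(β₀ / 2) * ‖p.1‖ ^ 2) := by
      have a1 := hprod p.1 p.2
      have a2 := hprod2 p.1
      calc _ ≤ |f t x (vScat₁ v₁ p.1 (p.2 : Vel d)) * f t x (vScat₂ v₁ p.1 (p.2 : Vel d))| +
            |f t x v₁ * f t x p.1| := abs_sub _ _
        _ ≤ 2 * C₀ ^ 2 * Real.exp (-(β₀ / 2) * ‖p.1‖ ^ 2) := by linarith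
    refine le_trans (mul_le_mul (mul_le_mul (hKb p) hS (abs_nonneg _) (by positivity))
      (hφM p.1) (abs_nonneg _) (by positivity)) ?_
    have hrw : (‖v₁‖ + ‖p.1‖) * (2 * C₀ ^ 2 * Real.exp (-(β₀ / 2) * ‖p.1‖ ^ 2)) * M =
        ((‖v₁‖ + ‖p.1‖) * Real.exp (-(β₀ / 2) * ‖p.1‖ ^ 2)) * (2 * C₀ ^ 2 * M) := by ring
    rw [hrw]
    refine le_trans (mul_le_mul_of_nonneg_left (hcst _ (by nlinarith [sq_nonneg C₀]))
      (by positivity)) (le_of_eq (by ring))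
  -- differentiability and product rule
  have hdf : DifferentiableAt ℝ (fun y : Vel d => f t y v₁) x := by
    have h1 : DifferentiableAt ℝ (fun q : ℝ × Vel d × Vel d => f q.1 q.2.1 q.2.2)
        ((t, x, v₁) : ℝ × Vel d × Vel d) := (hfC1.differentiable one_ne_zero).differentiableAt
    have h2 : DifferentiableAt ℝ (fun y : Vel d => ((t, y, v₁) : ℝ × Vel d × Vel d)) x := by
      fun_prop
    exact h1.comp x h2
  have hdφ : DifferentiableAt ℝ (fun y : Vel d => φ y v₁) x := by
    have h1 : DifferentiableAt ℝ (fun q : Vel d × Vel d => φ q.1 q.2)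
        ((x, v₁) : Vel d × Vel d) := (hφC1.differentiable one_ne_zero).differentiableAt
    have h2 : DifferentiableAt ℝ (fun y : Vel d => ((y, v₁) : Vel d × Vel d)) x := by fun_prop
    exact h1.comp x h2
  have hmul : fderiv ℝ (fun y : Vel d => f t y v₁ * φ y v₁) x =
      f t x v₁ • fderiv ℝ (fun y : Vel d => φ y v₁) x +
        φ x v₁ • fderiv ℝ (fun y : Vel d => f t y v₁) x := fderiv_mul hdf hdφ
  have hB2 : deriv (fun τ => f τ x v₁) t =
      boltzColl (f t) x v₁ - fderiv ℝ (fun y : Vel d => f t y v₁) x v₁ := by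
    have := hBoltz t x v₁; linarith
  -- the main integral identity
  have main : boltzColl (f t) x v₁ * φ x v₁ -
      f t x v₁ * (∫ p, max ⟪v₁ - p.1, (p.2 : Vel d)⟫ 0 * f t x p.1 *
        deltaFn φ x v₁ p.1 (p.2 : Vel d) ∂(collMeasure d)) -
      (∫ p, max ⟪v₁ - p.1, (p.2 : Vel d)⟫ 0 *
        (f t x (vScat₂ v₁ p.1 (p.2 : Vel d)) *
            (f t x (vScat₁ v₁ p.1 (p.2 : Vel d)) * φ x (vScat₁ v₁ p.1 (p.2 : Vel d))) +
          f t x (vScat₁ v₁ p.1 (p.2 : Vel d)) *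
            (f t x (vScat₂ v₁ p.1 (p.2 : Vel d)) * φ x (vScat₂ v₁ p.1 (p.2 : Vel d))) -
          f t x v₁ * (f t x p.1 * φ x p.1) -
          f t x p.1 * (f t x v₁ * φ x v₁)) ∂(collMeasure d)) +
      (∫ p, max ⟪v₁ - p.1, (p.2 : Vel d)⟫ 0 *
        (f t x (vScat₁ v₁ p.1 (p.2 : Vel d)) * f t x (vScat₂ v₁ p.1 (p.2 : Vel d)) -
          f t x v₁ * f t x p.1) * φ x p.1 ∂(collMeasure d)) =
      -∫ p, max ⟪v₁ - p.1, (p.2 : Vel d)⟫ 0 *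
        (f t x v₁ * f t x p.1 +
          f t x (vScat₁ v₁ p.1 (p.2 : Vel d)) * f t x (vScat₂ v₁ p.1 (p.2 : Vel d))) *
        deltaFn φ x v₁ p.1 (p.2 : Vel d) ∂(collMeasure d) := by
    unfold boltzColl
    have hint12 : Integrable (fun p : Vel d × sphere (0 : Vel d) 1 =>
        (max ⟪v₁ - p.1, (p.2 : Vel d)⟫ 0 *
        (f t x (vScat₁ v₁ p.1 (p.2 : Vel d)) * f t x (vScat₂ v₁ p.1 (p.2 : Vel d)) -
          f t x v₁ * f t x p.1) * φ x v₁) -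
        (f t x v₁ * (max ⟪v₁ - p.1, (p.2 : Vel d)⟫ 0 * f t x p.1 *
        deltaFn φ x v₁ p.1 (p.2 : Vel d)))) (collMeasure d) := hint1.sub hint2
    have hint123 : Integrable (fun p : Vel d × sphere (0 : Vel d) 1 =>
        (max ⟪v₁ - p.1, (p.2 : Vel d)⟫ 0 *
        (f t x (vScat₁ v₁ p.1 (p.2 : Vel d)) * f t x (vScat₂ v₁ p.1 (p.2 : Vel d)) -
          f t x v₁ * f t x p.1) * φ x v₁) -
        (f t x v₁ * (max ⟪v₁ - p.1, (p.2 : Vel d)⟫ 0 * f t x p.1 *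
        deltaFn φ x v₁ p.1 (p.2 : Vel d))) -
        (max ⟪v₁ - p.1, (p.2 : Vel d)⟫ 0 *
        (f t x (vScat₂ v₁ p.1 (p.2 : Vel d)) *
            (f t x (vScat₁ v₁ p.1 (p.2 : Vel d)) * φ x (vScat₁ v₁ p.1 (p.2 : Vel d))) +
          f t x (vScat₁ v₁ p.1 (p.2 : Vel d)) *
            (f t x (vScat₂ v₁ p.1 (p.2 : Vel d)) * φ x (vScat₂ v₁ p.1 (p.2 : Vel d))) -
          f t x v₁ * (f t x p.1 * φ x p.1) -
          f t x p.1 * (f t x v₁ * φ x v₁)))) (collMeasure d) := hint12.sub hint3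
    rw [← integral_mul_const, ← integral_const_mul, ← integral_sub hint1 hint2,
      ← integral_sub hint12 hint3,
      ← integral_add hint123 hint4, ← integral_neg]
    refine integral_congr_ae (Filter.Eventually.of_forall fun p => ?_)
    simp only [deltaFn]
    ring
  -- unfold and conclude
  simp only [sigmaOp, lStarOp, lOp, recollTerm]
  rw [hB2, hmul]
  simp only [ContinuousLinearMap.add_apply, ContinuousLinearMap.coe_smul', Pi.smul_apply,
    smul_eq_mul]
  linear_combination -main
end
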